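/- arXiv:2509.24971 — 10 statements merged into one kernel-verified Lean document; each statement's English description precedes it below -/
import Mathlib

section
/- For every real number λ with 1 < λ < 2, there exists a strictly increasing λ-lacunary sequence n_1 < n_2 < n_3 < ⋯ of positive integers such that the sequence of ratios n_{i+1}/n_i converges to 2 as i → ∞, and such that every rational number q with 0 < q ≤ 2 is equal to ∑_{i∈S} 1/n_i for infinitely many distinct finite sets S ⊂ ℕ. -/
open Filter Finset

namespace Stmt1

variable (f : ℕ → ℚ) (c0 : ℕ)

/-- The target rational handled at stage `k`. -/
def tgt (k : ℕ) : ℚ :=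
  if 0 < f (Nat.unpair k).1 ∧ f (Nat.unpair k).1 ≤ 2 then f (Nat.unpair k).1 else 1

/-- Denominator of the stage-`k` target. -/
def dn (k : ℕ) : ℕ := (tgt f k).den

/-- Length of block `k`. -/
def bL (k : ℕ) : ℕ := c0 + 1 + ∑ j ∈ range (k + 1), (1 + dn f j)

/-- The multiplier from block `k` to block `k+1`. -/
def bw (k : ℕ) : ℕ := dn f k * ((2 ^ bL f c0 k - 1) / dn f k)

/-- The leading coefficient of block `k`. -/
def bc : ℕ → ℕ
  | 0 => 1
  | k + 1 => bc k * bw f c0 k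

/-- Start index of block `k`. -/
def ba : ℕ → ℕ
  | 0 => 0
  | k + 1 => ba k + bL f c0 k

/-- The block containing index `i`. -/
def bb (i : ℕ) : ℕ := Nat.findGreatest (fun k => ba f c0 k ≤ i) i

/-- The sequence itself. -/
def bn (i : ℕ) : ℕ := bc f c0 (bb f c0 i) * 2 ^ (i - ba f c0 (bb f c0 i))

/-- The last element of block `k`. -/
def bN (k : ℕ) : ℕ := bc f c0 k * 2 ^ (bL f c0 k - 1)

lemma tgt_pos (k : ℕ) : 0 < tgt f k := by
  unfold tgt; split <;> simp_all

lemma tgt_le (k : ℕ) : tgt f k ≤ 2 := by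
  unfold tgt; split
  · tauto
  · norm_num

lemma dn_pos (k : ℕ) : 0 < dn f k := (tgt f k).den_pos

lemma bL_ge (k : ℕ) : c0 + 1 + (k + 1 + dn f k) ≤ bL f c0 k := by
  have h1 : ∑ j ∈ range (k + 1), (1 + dn f j)
      = (k + 1) + ∑ j ∈ range (k + 1), dn f j := by
    rw [Finset.sum_add_distrib, Finset.sum_const, card_range, smul_eq_mul, mul_one]
  have h2 : dn f k ≤ ∑ j ∈ range (k + 1), dn f j :=
    Finset.single_le_sum (fun i _ => Nat.zero_le _) (self_mem_range_succ k)
  unfold bL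
  omega

lemma bL_pos (k : ℕ) : 1 ≤ bL f c0 k := by
  have := bL_ge f c0 k; omega

lemma bL_mono {k k' : ℕ} (h : k ≤ k') : bL f c0 k ≤ bL f c0 k' := by
  unfold bL
  have : ∑ j ∈ range (k + 1), (1 + dn f j) ≤ ∑ j ∈ range (k' + 1), (1 + dn f j) :=
    Finset.sum_le_sum_of_subset (range_subset_range.2 (by omega))
  omega

lemma two_pow_bL (k : ℕ) : 2 ^ bL f c0 k = 2 * 2 ^ (bL f c0 k - 1) := by
  have h := bL_pos f c0 k
  conv_lhs => rw [show bL f c0 k = (bL f c0 k - 1) + 1 by omega]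
  ring

lemma dsize (k : ℕ) : dn f k * 2 ^ (c0 + 1) * 2 ^ k ≤ 2 ^ (bL f c0 k - 1) := by
  have h1 : dn f k + (c0 + 1) + k ≤ bL f c0 k - 1 := by
    have := bL_ge f c0 k; omega
  calc dn f k * 2 ^ (c0 + 1) * 2 ^ k ≤ 2 ^ dn f k * 2 ^ (c0 + 1) * 2 ^ k := by
        have := Nat.lt_two_pow_self (n := dn f k)
        exact Nat.mul_le_mul_right _ (Nat.mul_le_mul_right _ (le_of_lt this))
    _ = 2 ^ (dn f k + (c0 + 1) + k) := by rw [← pow_add, ← pow_add]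
    _ ≤ 2 ^ (bL f c0 k - 1) := Nat.pow_le_pow_right (by norm_num) h1

lemma bw_le (k : ℕ) : bw f c0 k ≤ 2 ^ bL f c0 k - 1 := by
  unfold bw
  rw [mul_comm]
  exact Nat.div_mul_le_self _ _

lemma bw_ge (k : ℕ) : 2 ^ bL f c0 k - dn f k ≤ bw f c0 k := by
  have hd := dn_pos f k
  have h := Nat.div_add_mod (2 ^ bL f c0 k - 1) (dn f k)
  have h2 := Nat.mod_lt (2 ^ bL f c0 k - 1) hd
  unfold bw
  omega

lemma dn_lt (k : ℕ) : dn f k < 2 ^ (bL f c0 k - 1) := by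
  have h := dsize f c0 k
  have hd := dn_pos f k
  have : dn f k * 1 * 1 < dn f k * 2 ^ (c0 + 1) * 2 ^ k := by
    have h1 : (2:ℕ) ≤ 2 ^ (c0 + 1) := by
      calc (2:ℕ) = 2 ^ 1 := rfl
      _ ≤ 2 ^ (c0 + 1) := Nat.pow_le_pow_right (by norm_num) (by omega)
    have h2 : (1:ℕ) ≤ 2 ^ k := Nat.one_le_two_pow
    calc dn f k * 1 * 1 < dn f k * 2 * 1 := by omega
    _ ≤ dn f k * 2 ^ (c0 + 1) * 2 ^ k :=
      Nat.mul_le_mul (Nat.mul_le_mul_left _ h1) h2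
  omega

lemma bw_gt_half (k : ℕ) : 2 ^ (bL f c0 k - 1) < bw f c0 k := by
  have h1 := bw_ge f c0 k
  have h2 := dn_lt f c0 k
  have h3 := two_pow_bL f c0 k
  omega

lemma bw_pos (k : ℕ) : 0 < bw f c0 k :=
  lt_trans (Nat.pow_pos (by norm_num)) (bw_gt_half f c0 k)

lemma bc_pos (k : ℕ) : 0 < bc f c0 k := by
  induction k with
  | zero => exact one_pos
  | succ k ih => exact Nat.mul_pos ih (bw_pos f c0 k)

lemma bN_pos (k : ℕ) : 0 < bN f c0 k :=
  Nat.mul_pos (bc_pos f c0 k) (Nat.pow_pos (by norm_num))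

lemma ba_ge (k : ℕ) : k ≤ ba f c0 k := by
  induction k with
  | zero => exact le_refl 0
  | succ k ih =>
    have := bL_pos f c0 k
    show k + 1 ≤ ba f c0 k + bL f c0 k
    omega

lemma ba_strictMono : StrictMono (ba f c0) := by
  apply strictMono_nat_of_lt_succ
  intro k
  have := bL_pos f c0 k
  show ba f c0 k < ba f c0 k + bL f c0 k
  omega

lemma bb_le (i : ℕ) : bb f c0 i ≤ i := Nat.findGreatest_le i

lemma bb_spec1 (i : ℕ) : ba f c0 (bb f c0 i) ≤ i :=
  Nat.findGreatest_spec (P := fun k => ba f c0 k ≤ i) (Nat.zero_le i) (Nat.zero_le i)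

lemma bb_spec2 (i : ℕ) : i < ba f c0 (bb f c0 i + 1) := by
  by_contra h
  push_neg at h
  have h1 : bb f c0 i + 1 ≤ i := le_trans (ba_ge f c0 _) h
  have h2 : bb f c0 i + 1 ≤ bb f c0 i := Nat.le_findGreatest h1 h
  omega

lemma bb_eq {k i : ℕ} (h1 : ba f c0 k ≤ i) (h2 : i < ba f c0 (k + 1)) : bb f c0 i = k := by
  have hk : k ≤ i := le_trans (ba_ge f c0 k) h1
  have hle : k ≤ bb f c0 i := Nat.le_findGreatest hk h1
  have : bb f c0 i < k + 1 := by
    by_contra hc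
    push_neg at hc
    have := (ba_strictMono f c0).monotone hc
    have := bb_spec1 f c0 i
    omega
  omega

lemma bn_block {k j : ℕ} (h : j < bL f c0 k) : bn f c0 (ba f c0 k + j) = bc f c0 k * 2 ^ j := by
  have h1 : ba f c0 k ≤ ba f c0 k + j := Nat.le_add_right _ _
  have h2 : ba f c0 k + j < ba f c0 (k + 1) := by
    show ba f c0 k + j < ba f c0 k + bL f c0 k
    omega
  unfold bn
  rw [bb_eq f c0 h1 h2]
  have h3 : ba f c0 k + j - ba f c0 k = j := by omega
  rw [h3]

lemma bn_pos (i : ℕ) : 0 < bn f c0 i :=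
  Nat.mul_pos (bc_pos f c0 _) (Nat.pow_pos (by norm_num))

lemma bn_succ (i : ℕ) :
    bn f c0 (i + 1) = 2 * bn f c0 i ∨
    (∃ k, i + 1 = ba f c0 (k + 1) ∧ bn f c0 i = bN f c0 k ∧
      bn f c0 (i + 1) = bc f c0 (k + 1)) := by
  set k := bb f c0 i with hk
  have h1 : ba f c0 k ≤ i := bb_spec1 f c0 i
  have h2 : i < ba f c0 (k + 1) := bb_spec2 f c0 i
  have hab : ba f c0 (k + 1) = ba f c0 k + bL f c0 k := rfl
  rcases lt_or_eq_of_le (Nat.succ_le_of_lt h2) with hlt | heq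
  · left
    have e1 : bn f c0 i = bc f c0 k * 2 ^ (i - ba f c0 k) := by
      have : i = ba f c0 k + (i - ba f c0 k) := by omega
      rw [this, bn_block f c0 (by omega)]
      congr 2
      omega
    have e2 : bn f c0 (i + 1) = bc f c0 k * 2 ^ (i + 1 - ba f c0 k) := by
      have : i + 1 = ba f c0 k + (i + 1 - ba f c0 k) := by omega
      rw [this, bn_block f c0 (by omega)]
      congr 2
      omega
    rw [e1, e2, show i + 1 - ba f c0 k = (i - ba f c0 k) + 1 by omega, pow_succ]
    ring
  · right
    refine ⟨k, heq, ?_, ?_⟩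
    · have : i = ba f c0 k + (bL f c0 k - 1) := by
        have := bL_pos f c0 k
        omega
      rw [this, bn_block f c0 (by have := bL_pos f c0 k; omega)]
      rfl
    · have : i + 1 = ba f c0 (k + 1) + 0 := by omega
      rw [this, bn_block f c0 (bL_pos f c0 (k + 1))]
      simp

lemma bN_dvd_succ (k : ℕ) : bN f c0 k ∣ bN f c0 (k + 1) := by
  have hL : bL f c0 k ≤ bL f c0 (k + 1) := bL_mono f c0 (by omega)
  have : bN f c0 (k + 1) = (bc f c0 k * 2 ^ (bL f c0 k - 1)) *
      (bw f c0 k * 2 ^ (bL f c0 (k + 1) - bL f c0 k)) := by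
    show bc f c0 k * bw f c0 k * 2 ^ (bL f c0 (k + 1) - 1) = _
    rw [show bL f c0 (k + 1) - 1 = (bL f c0 k - 1) + (bL f c0 (k + 1) - bL f c0 k) by
      have := bL_pos f c0 k; omega, pow_add]
    ring
  rw [this]
  exact Dvd.intro _ rfl

lemma bN_dvd {k K : ℕ} (h : k ≤ K) : bN f c0 k ∣ bN f c0 K := by
  induction K with
  | zero => simpa [Nat.le_zero.mp h]
  | succ K ih =>
    rcases Nat.lt_or_ge k (K + 1) with h' | h'
    · exact dvd_trans (ih (by omega)) (bN_dvd_succ f c0 K)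
    · have : k = K + 1 := by omega
      rw [this]

lemma bn_dvd {i k : ℕ} (h : i < ba f c0 (k + 1)) : bn f c0 i ∣ bN f c0 k := by
  set j := bb f c0 i with hj
  have h1 : ba f c0 j ≤ i := bb_spec1 f c0 i
  have h2 : i < ba f c0 (j + 1) := bb_spec2 f c0 i
  have hjk : j ≤ k := by
    by_contra hc
    push_neg at hc
    have := (ba_strictMono f c0).monotone (show k + 1 ≤ j by omega)
    omega
  have hd1 : bn f c0 i ∣ bN f c0 j := by
    unfold bn bN
    rw [← hj]
    apply Nat.mul_dvd_mul_left
    apply pow_dvd_pow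
    have : i < ba f c0 j + bL f c0 j := h2
    omega
  exact dvd_trans hd1 (bN_dvd f c0 hjk)

lemma capacity (k : ℕ) : bN f c0 (k + 1) ≤ (2 ^ bL f c0 (k + 1) - 1) * bN f c0 k := by
  have hL : bL f c0 k ≤ bL f c0 (k + 1) := bL_mono f c0 (by omega)
  have hc := bc_pos f c0 k
  have h1 : bN f c0 (k + 1) = bc f c0 k * (bw f c0 k * 2 ^ (bL f c0 (k + 1) - 1)) := by
    show bc f c0 k * bw f c0 k * 2 ^ (bL f c0 (k + 1) - 1) = _
    ring
  have h2 : (2 ^ bL f c0 (k + 1) - 1) * bN f c0 k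
      = bc f c0 k * ((2 ^ bL f c0 (k + 1) - 1) * 2 ^ (bL f c0 k - 1)) := by
    unfold bN
    ring
  rw [h1, h2]
  apply Nat.mul_le_mul_left
  -- bw k * 2^(L(k+1)-1) ≤ (2^L(k+1) - 1) * 2^(L k - 1)
  have hb := bw_le f c0 k
  have hZ1 : (1:ℕ) ≤ 2 ^ (bL f c0 (k + 1) - bL f c0 k) := Nat.one_le_two_pow
  have hXZ : (2:ℕ) ^ bL f c0 (k + 1) = 2 ^ bL f c0 k * 2 ^ (bL f c0 (k + 1) - bL f c0 k) := by
    rw [← pow_add]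
    congr 1
    omega
  have hsplit : (2:ℕ) ^ (bL f c0 (k + 1) - 1)
      = 2 ^ (bL f c0 (k + 1) - bL f c0 k) * 2 ^ (bL f c0 k - 1) := by
    rw [← pow_add]
    congr 1
    have := bL_pos f c0 k
    omega
  calc bw f c0 k * 2 ^ (bL f c0 (k + 1) - 1)
      ≤ (2 ^ bL f c0 k - 1) * 2 ^ (bL f c0 (k + 1) - 1) := Nat.mul_le_mul_right _ hb
    _ = ((2 ^ bL f c0 k - 1) * 2 ^ (bL f c0 (k + 1) - bL f c0 k)) * 2 ^ (bL f c0 k - 1) := by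
        rw [hsplit]
        ring
    _ ≤ (2 ^ bL f c0 (k + 1) - 1) * 2 ^ (bL f c0 k - 1) := by
        apply Nat.mul_le_mul_right
        rw [hXZ, Nat.sub_mul, one_mul]
        omega

/-- Binary digits: every `m < 2^L` is a sum of distinct powers `2^t`, `t < L`. -/
lemma exists_digits : ∀ (L m : ℕ), m < 2 ^ L → ∃ F ⊆ range L, m = ∑ t ∈ F, 2 ^ t := by
  intro L
  induction L with
  | zero =>
    intro m hm
    interval_cases m
    exact ⟨∅, by simp⟩
  | succ L ih =>
    intro m hm
    rcases Nat.lt_or_ge m (2 ^ L) with h | h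
    · obtain ⟨F, hF, hs⟩ := ih m h
      exact ⟨F, le_trans hF (by simp [range_subset_range]), hs⟩
    · obtain ⟨F, hF, hs⟩ := ih (m - 2 ^ L) (by rw [pow_succ] at hm; omega)
      have hLF : L ∉ F := fun h' => by simpa using hF h'
      refine ⟨insert L F, ?_, ?_⟩
      · intro x hx
        rcases Finset.mem_insert.mp hx with rfl | hx
        · exact self_mem_range_succ _
        · exact mem_range.mpr (by have := mem_range.mp (hF hx); omega)
      · rw [Finset.sum_insert hLF, ← hs]
        omega

/-- Any `m < 2^(bL k)` times the basic grid unit `1/(bN k)` is a subset sum of block `k`. -/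
lemma block_sum (k m : ℕ) (hm : m < 2 ^ bL f c0 k) :
    ∃ S : Finset ℕ,
      (∀ i ∈ S, ba f c0 k ≤ i ∧ i < ba f c0 (k + 1)) ∧
      (∑ i ∈ S, (1 : ℚ) / (bn f c0 i)) = (m : ℚ) / (bN f c0 k) ∧
      (0 < m → S.Nonempty) := by
  obtain ⟨F, hF, hs⟩ := exists_digits (bL f c0 k) m hm
  set g : ℕ → ℕ := fun t => ba f c0 k + (bL f c0 k - 1 - t) with hg
  have hinj : ∀ t ∈ F, ∀ t' ∈ F, g t = g t' → t = t' := by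
    intro t ht t' ht' h
    have h1 := mem_range.mp (hF ht)
    have h2 := mem_range.mp (hF ht')
    simp only [hg] at h
    omega
  refine ⟨F.image g, ?_, ?_, ?_⟩
  · intro i hi
    obtain ⟨t, ht, rfl⟩ := Finset.mem_image.mp hi
    have := mem_range.mp (hF ht)
    have hlt : g t < ba f c0 k + bL f c0 k := by
      simp only [hg]
      have := bL_pos f c0 k
      omega
    exact ⟨Nat.le_add_right _ _, hlt⟩
  · rw [Finset.sum_image hinj]
    have hterm : ∀ t ∈ F, (1 : ℚ) / (bn f c0 (g t)) = (2 ^ t : ℚ) / (bN f c0 k) := by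
      intro t ht
      have htL := mem_range.mp (hF ht)
      have hb : bn f c0 (g t) = bc f c0 k * 2 ^ (bL f c0 k - 1 - t) := by
        simp only [hg]
        exact bn_block f c0 (by have := bL_pos f c0 k; omega)
      have hkey : (2 : ℕ) ^ t * (bc f c0 k * 2 ^ (bL f c0 k - 1 - t)) = bN f c0 k := by
        unfold bN
        have he : t + (bL f c0 k - 1 - t) = bL f c0 k - 1 := by omega
        calc (2 : ℕ) ^ t * (bc f c0 k * 2 ^ (bL f c0 k - 1 - t))
            = bc f c0 k * 2 ^ (t + (bL f c0 k - 1 - t)) := by rw [pow_add]; ring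
          _ = bc f c0 k * 2 ^ (bL f c0 k - 1) := by rw [he]
      rw [hb, div_eq_div_iff]
      · rw [one_mul]
        exact_mod_cast hkey.symm
      · have h5 := bn_pos f c0 (g t)
        rw [hb] at h5
        exact_mod_cast h5.ne'
      · exact_mod_cast (bN_pos f c0 k).ne'
    rw [Finset.sum_congr rfl hterm, ← Finset.sum_div]
    congr 1
    rw [hs]
    push_cast
    ring
  · intro hm0
    rcases F.eq_empty_or_nonempty with rfl | hne
    · simp at hs
      omega
    · exact hne.image g

/-- The inductive splitting step. -/
lemma split (k : ℕ)
    (IH : ∀ T : ℕ, T < 2 * bN f c0 k → ∃ S : Finset ℕ,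
      (∀ i ∈ S, i < ba f c0 (k + 1)) ∧
      (∑ i ∈ S, (1 : ℚ) / (bn f c0 i)) = (T : ℚ) / (bN f c0 k))
    (T : ℕ) (h1 : 0 < T) (h2 : T ≤ 2 * bN f c0 (k + 1)) :
    ∃ S : Finset ℕ,
      (∀ i ∈ S, i < ba f c0 (k + 2)) ∧ (∃ i ∈ S, ba f c0 (k + 1) ≤ i) ∧
      (∑ i ∈ S, (1 : ℚ) / (bn f c0 i)) = (T : ℚ) / (bN f c0 (k + 1)) := by
  obtain ⟨B, hB⟩ := bN_dvd_succ f c0 k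
  have hNk := bN_pos f c0 k
  have hNk1 := bN_pos f c0 (k + 1)
  have hBpos : 0 < B := by
    rcases Nat.eq_zero_or_pos B with rfl | h
    · rw [hB] at hNk1; omega
    · exact h
  set R := if T % B = 0 then B else T % B with hRdef
  have hmod := Nat.div_add_mod T B
  have hmlt := Nat.mod_lt T hBpos
  have hR1 : 1 ≤ R := by
    rw [hRdef]; split <;> omega
  have hRB : R ≤ B := by
    rw [hRdef]; split <;> omega
  have hRT : R ≤ T := by
    rw [hRdef]
    split
    · rename_i h
      have hd : B ∣ T := Nat.dvd_of_mod_eq_zero h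
      exact Nat.le_of_dvd h1 hd
    · rename_i h
      omega
  have hdvd : B ∣ T - R := by
    rw [hRdef]
    split
    · rename_i h
      have hd : B ∣ T := Nat.dvd_of_mod_eq_zero h
      exact Nat.dvd_sub hd dvd_rfl
    · rename_i h
      have : T - T % B = B * (T / B) := by omega
      rw [this]
      exact Dvd.intro _ rfl
  set T' := (T - R) / B with hT'def
  have hT'B : T' * B = T - R := Nat.div_mul_cancel hdvd
  have hT'lt : T' < 2 * bN f c0 k := by
    have hTle : T ≤ 2 * (bN f c0 k * B) := by rw [← hB]; exact h2
    have h3 : T' * B < 2 * bN f c0 k * B := by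
      rw [hT'B]
      have : 2 * bN f c0 k * B = 2 * (bN f c0 k * B) := by ring
      omega
    exact lt_of_mul_lt_mul_right h3 (Nat.zero_le B)
  obtain ⟨S1, hS1a, hS1b⟩ := IH T' hT'lt
  have hRlt : R < 2 ^ bL f c0 (k + 1) := by
    have hcap := capacity f c0 k
    rw [hB] at hcap
    have hBle : B ≤ 2 ^ bL f c0 (k + 1) - 1 := by
      have h4 : bN f c0 k * B ≤ bN f c0 k * (2 ^ bL f c0 (k + 1) - 1) := by
        calc bN f c0 k * B ≤ (2 ^ bL f c0 (k + 1) - 1) * bN f c0 k := hcap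
        _ = bN f c0 k * (2 ^ bL f c0 (k + 1) - 1) := by ring
      exact Nat.le_of_mul_le_mul_left h4 hNk
    have : (1:ℕ) ≤ 2 ^ bL f c0 (k + 1) := Nat.one_le_two_pow
    omega
  obtain ⟨S2, hS2a, hS2b, hS2ne⟩ := block_sum f c0 (k + 1) R hRlt
  have hdisj : Disjoint S1 S2 := by
    rw [Finset.disjoint_left]
    intro i hi1 hi2
    exact absurd (hS1a i hi1) (not_lt.mpr (hS2a i hi2).1)
  refine ⟨S1 ∪ S2, ?_, ?_, ?_⟩
  · intro i hi
    rcases Finset.mem_union.mp hi with h | h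
    · exact lt_of_lt_of_le (hS1a i h)
        ((ba_strictMono f c0).monotone (show k + 1 ≤ k + 2 by omega))
    · exact (hS2a i h).2
  · obtain ⟨i, hi⟩ := hS2ne hR1
    exact ⟨i, Finset.mem_union_right _ hi, (hS2a i hi).1⟩
  · rw [Finset.sum_union hdisj, hS1b, hS2b]
    have hTeq : (T : ℚ) = (T' : ℚ) * (B : ℚ) + (R : ℚ) := by
      have hTeqN : T' * B + R = T := by omega
      exact_mod_cast hTeqN.symm
    have hBQ : (bN f c0 (k + 1) : ℚ) = (bN f c0 k : ℚ) * (B : ℚ) := by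
      exact_mod_cast congrArg (Nat.cast (R := ℚ)) hB
    have hNkQ : (bN f c0 k : ℚ) ≠ 0 := by
      exact_mod_cast Nat.pos_iff_ne_zero.mp hNk
    have hBQ0 : (B : ℚ) ≠ 0 := by
      exact_mod_cast Nat.pos_iff_ne_zero.mp hBpos
    rw [hTeq, hBQ]
    field_simp

/-- Main exact-representation lemma for targets strictly below `2 * bN k`. -/
lemma Pmain : ∀ k, ∀ T : ℕ, T < 2 * bN f c0 k → ∃ S : Finset ℕ,
    (∀ i ∈ S, i < ba f c0 (k + 1)) ∧
    (∑ i ∈ S, (1 : ℚ) / (bn f c0 i)) = (T : ℚ) / (bN f c0 k) := by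
  intro k
  induction k with
  | zero =>
    intro T hT
    have h2N : 2 * bN f c0 0 = 2 ^ bL f c0 0 := by
      show 2 * (bc f c0 0 * 2 ^ (bL f c0 0 - 1)) = 2 ^ bL f c0 0
      show 2 * (1 * 2 ^ (bL f c0 0 - 1)) = 2 ^ bL f c0 0
      rw [two_pow_bL]
      ring
    obtain ⟨S, hSa, hSb, _⟩ := block_sum f c0 0 T (by omega)
    exact ⟨S, fun i hi => (hSa i hi).2, hSb⟩
  | succ k ih =>
    intro T hT
    rcases Nat.eq_zero_or_pos T with rfl | hT0
    · exact ⟨∅, by simp, by simp⟩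
    · obtain ⟨S, hSa, _, hSb⟩ := split f c0 k ih T hT0 (le_of_lt hT)
      exact ⟨S, hSa, hSb⟩

/-- Every stage target has an exact representation with an element in block `k+1`. -/
lemma represent (k : ℕ) :
    ∃ S : Finset ℕ, (∃ i ∈ S, ba f c0 (k + 1) ≤ i) ∧
      tgt f k = ∑ i ∈ S, (1 : ℚ) / (bn f c0 i) := by
  have hq0 := tgt_pos f k
  have hq2 := tgt_le f k
  have hdvd : dn f k ∣ bN f c0 (k + 1) := by
    have h1 : dn f k ∣ bw f c0 k := Dvd.intro _ rfl
    have h2 : bw f c0 k ∣ bN f c0 (k + 1) := by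
      have : bN f c0 (k + 1) = bw f c0 k * (bc f c0 k * 2 ^ (bL f c0 (k + 1) - 1)) := by
        show bc f c0 k * bw f c0 k * 2 ^ (bL f c0 (k + 1) - 1) = _
        ring
      rw [this]
      exact Dvd.intro _ rfl
    exact h1.trans h2
  obtain ⟨u, hu⟩ := hdvd
  have hu0 : 0 < u := by
    have := bN_pos f c0 (k + 1)
    rcases Nat.eq_zero_or_pos u with rfl | h
    · omega
    · exact h
  set T := (tgt f k).num.toNat * u with hTdef
  have hnum0 : 0 < (tgt f k).num := Rat.num_pos.mpr hq0
  have hqQ : ((tgt f k).num.toNat : ℚ) = ((tgt f k).num : ℚ) := by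
    exact_mod_cast Int.toNat_of_nonneg hnum0.le
  have hT : (T : ℚ) = tgt f k * (bN f c0 (k + 1) : ℚ) := by
    have hden : ((dn f k : ℕ) : ℚ) = ((tgt f k).den : ℚ) := rfl
    have hNQ : ((bN f c0 (k + 1) : ℕ) : ℚ) = (dn f k : ℚ) * (u : ℚ) := by
      exact_mod_cast congrArg (Nat.cast (R := ℚ)) hu
    push_cast [hTdef]
    rw [hqQ, hNQ, hden]
    rw [show (tgt f k) * (((tgt f k).den : ℚ) * (u : ℚ))
        = ((tgt f k) * ((tgt f k).den : ℚ)) * (u : ℚ) by ring, Rat.mul_den_eq_num]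
  have hT0 : 0 < T := by
    apply Nat.mul_pos _ hu0
    omega
  have hT2 : T ≤ 2 * bN f c0 (k + 1) := by
    have h6 : (T : ℚ) ≤ 2 * (bN f c0 (k + 1) : ℚ) := by
      rw [hT]
      have hN0 : (0:ℚ) ≤ (bN f c0 (k + 1) : ℚ) := by positivity
      nlinarith
    exact_mod_cast h6
  obtain ⟨S, _, hSex, hSb⟩ := split f c0 k (Pmain f c0 k) T hT0 hT2
  refine ⟨S, hSex, ?_⟩
  rw [hSb, hT]
  have hN0 : (bN f c0 (k + 1) : ℚ) ≠ 0 := by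
    exact_mod_cast (bN_pos f c0 (k + 1)).ne'
  field_simp

lemma ratio_up (k : ℕ) : bc f c0 (k + 1) ≤ 2 * bN f c0 k := by
  have hb := bw_le f c0 k
  have h2 := two_pow_bL f c0 k
  calc bc f c0 (k + 1) = bc f c0 k * bw f c0 k := rfl
    _ ≤ bc f c0 k * (2 * 2 ^ (bL f c0 k - 1)) := Nat.mul_le_mul_left _ (by omega)
    _ = 2 * bN f c0 k := by unfold bN; ring

lemma ratio_low (k : ℕ) : 2 * bN f c0 k ≤ bc f c0 (k + 1) + bc f c0 k * dn f k := by
  have hb := bw_ge f c0 k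
  have h2 := two_pow_bL f c0 k
  calc 2 * bN f c0 k = bc f c0 k * (2 * 2 ^ (bL f c0 k - 1)) := by unfold bN; ring
    _ ≤ bc f c0 k * (bw f c0 k + dn f k) := Nat.mul_le_mul_left _ (by omega)
    _ = bc f c0 (k + 1) + bc f c0 k * dn f k := by
        show _ = bc f c0 k * bw f c0 k + bc f c0 k * dn f k
        ring

lemma dn_le_R (k : ℕ) : (dn f k : ℝ) * 2 ^ (c0 + 1) * 2 ^ k ≤ (2:ℝ) ^ (bL f c0 k - 1) := by
  have := dsize f c0 k
  exact_mod_cast this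

lemma bN_cast (k : ℕ) : (bN f c0 k : ℝ) = (bc f c0 k : ℝ) * 2 ^ (bL f c0 k - 1) := by
  unfold bN
  push_cast
  ring

/-- The boundary ratio is at least `lam`. -/
lemma lacun {lam : ℝ} (hlam2 : lam < 2) (hc0 : (2:ℝ)^(-(c0:ℤ)) ≤ 2 - lam) (k : ℕ) :
    lam * (bN f c0 k : ℝ) ≤ (bc f c0 (k + 1) : ℝ) := by
  have hlow : 2 * (bN f c0 k : ℝ) - (bc f c0 k : ℝ) * (dn f k : ℝ)
      ≤ (bc f c0 (k + 1) : ℝ) := by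
    have := ratio_low f c0 k
    have h := (Nat.cast_le (α := ℝ)).mpr this
    push_cast at h
    linarith
  have hdn : (dn f k : ℝ) ≤ (2 - lam) * 2 ^ (bL f c0 k - 1) := by
    have h1 := dn_le_R f c0 k
    have h2 : (1:ℝ) ≤ 2 ^ k := by
      have : (1:ℕ) ≤ 2 ^ k := Nat.one_le_two_pow
      exact_mod_cast this
    have h3 : (dn f k : ℝ) * 2 ^ (c0 + 1) ≤ 2 ^ (bL f c0 k - 1) := by
      calc (dn f k : ℝ) * 2 ^ (c0 + 1) = (dn f k : ℝ) * 2 ^ (c0 + 1) * 1 := by ring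
        _ ≤ (dn f k : ℝ) * 2 ^ (c0 + 1) * 2 ^ k := by
            apply mul_le_mul_of_nonneg_left h2
            positivity
        _ ≤ 2 ^ (bL f c0 k - 1) := h1
    have h4 : (2:ℝ) ^ (-(c0:ℤ)) * 2 ^ (c0 + 1) = 2 := by
      rw [show ((c0:ℕ) + 1 : ℕ) = ((c0 : ℤ) + 1).toNat by omega]
      rw [← zpow_natCast (2:ℝ) ((c0:ℤ) + 1).toNat, Int.toNat_of_nonneg (by omega), ← zpow_add₀ (by norm_num : (2:ℝ) ≠ 0)]
      norm_num
    have h5 : (2:ℝ) ≤ (2 - lam) * 2 ^ (c0 + 1) := by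
      calc (2:ℝ) = 2 ^ (-(c0:ℤ)) * 2 ^ (c0 + 1) := h4.symm
        _ ≤ (2 - lam) * 2 ^ (c0 + 1) := by
            apply mul_le_mul_of_nonneg_right hc0
            positivity
    have hpc : (0:ℝ) < 2 ^ (c0 + 1) := by positivity
    have hd0 : (0:ℝ) ≤ (dn f k : ℝ) := Nat.cast_nonneg _
    nlinarith
  have hbc : (0:ℝ) ≤ (bc f c0 k : ℝ) := Nat.cast_nonneg _
  have := bN_cast f c0 k
  nlinarith

/-- The boundary ratio is at least `2 - (1/2)^k`. -/
lemma low2 (k : ℕ) : (2 - (1/2:ℝ) ^ k) * (bN f c0 k : ℝ) ≤ (bc f c0 (k + 1) : ℝ) := by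
  have hlow : 2 * (bN f c0 k : ℝ) - (bc f c0 k : ℝ) * (dn f k : ℝ)
      ≤ (bc f c0 (k + 1) : ℝ) := by
    have := ratio_low f c0 k
    have h := (Nat.cast_le (α := ℝ)).mpr this
    push_cast at h
    linarith
  have hdn : (dn f k : ℝ) * 2 ^ k ≤ 2 ^ (bL f c0 k - 1) := by
    have h1 := dn_le_R f c0 k
    have h2 : (1:ℝ) ≤ 2 ^ (c0 + 1) := by
      have : (1:ℕ) ≤ 2 ^ (c0 + 1) := Nat.one_le_two_pow
      exact_mod_cast this
    calc (dn f k : ℝ) * 2 ^ k = (dn f k : ℝ) * 2 ^ k * 1 := by ring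
      _ ≤ (dn f k : ℝ) * 2 ^ k * 2 ^ (c0 + 1) := by
          apply mul_le_mul_of_nonneg_left h2
          positivity
      _ = (dn f k : ℝ) * 2 ^ (c0 + 1) * 2 ^ k := by ring
      _ ≤ 2 ^ (bL f c0 k - 1) := h1
  have hbc : (0:ℝ) ≤ (bc f c0 k : ℝ) := Nat.cast_nonneg _
  have hN := bN_cast f c0 k
  have hhalf : (1/2:ℝ) ^ k * 2 ^ k = 1 := by
    rw [← mul_pow]
    norm_num
  have hkey : (bc f c0 k : ℝ) * (dn f k : ℝ) ≤ (1/2:ℝ) ^ k * (bN f c0 k : ℝ) := by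
    rw [hN]
    have hp : (0:ℝ) < 2 ^ k := by positivity
    have : (dn f k : ℝ) ≤ (1/2:ℝ) ^ k * 2 ^ (bL f c0 k - 1) := by
      have hinv : (1/2:ℝ) ^ k = ((2:ℝ) ^ k)⁻¹ := by rw [one_div, inv_pow]
      rw [hinv, inv_mul_eq_div, le_div_iff₀ hp]
      exact hdn
    nlinarith
  linarith

end Stmt1

open Filter

/-- For every real `λ` with `1 < λ < 2` there exists a strictly
increasing `λ`-lacunary sequence of positive integers whose consecutive ratios
tend to `2`, and such that every rational `q` with `0 < q ≤ 2` equals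
`∑_{i ∈ S} 1 / n i` for infinitely many distinct finite sets `S ⊂ ℕ`. -/
theorem stmt1 (lam : ℝ) (hlam1 : 1 < lam) (hlam2 : lam < 2) :
    ∃ n : ℕ → ℕ, StrictMono n ∧ (∀ i, 0 < n i) ∧
      (∀ i, lam * (n i : ℝ) ≤ (n (i + 1) : ℝ)) ∧
      Tendsto (fun i => (n (i + 1) : ℝ) / (n i : ℝ)) atTop (nhds 2) ∧
      (∀ q : ℚ, 0 < q → q ≤ 2 →
        {S : Finset ℕ | q = ∑ i ∈ S, (1 : ℚ) / (n i)}.Infinite) := by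
  obtain ⟨f, hf⟩ := exists_surjective_nat ℚ
  obtain ⟨c0, hc0'⟩ := pow_unbounded_of_one_lt (R := ℝ) (2 - lam)⁻¹ (by norm_num : (1:ℝ) < 2)
  have hlam0 : (0:ℝ) < 2 - lam := by linarith
  have hc0 : (2:ℝ) ^ (-(c0:ℤ)) ≤ 2 - lam := by
    have h1 : (2 - lam)⁻¹ ≤ 2 ^ c0 := hc0'.le
    have h2 : ((2:ℝ) ^ c0)⁻¹ ≤ 2 - lam := by
      rw [inv_le_comm₀ (by positivity) hlam0] at *
      · exact h1
    calc (2:ℝ) ^ (-(c0:ℤ)) = ((2:ℝ) ^ c0)⁻¹ := by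
          rw [zpow_neg, zpow_natCast]
      _ ≤ 2 - lam := h2
  refine ⟨Stmt1.bn f c0, ?_, Stmt1.bn_pos f c0, ?_, ?_, ?_⟩
  · -- strict monotonicity
    apply strictMono_nat_of_lt_succ
    intro i
    rcases Stmt1.bn_succ f c0 i with h | ⟨k, _, h1, h2⟩
    · have := Stmt1.bn_pos f c0 i
      omega
    · rw [h1, h2]
      have e1 : Stmt1.bc f c0 (k+1) = Stmt1.bc f c0 k * Stmt1.bw f c0 k := rfl
      have e2 : Stmt1.bN f c0 k = Stmt1.bc f c0 k * 2 ^ (Stmt1.bL f c0 k - 1) := rfl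
      rw [e1, e2]
      have hp := Stmt1.bc_pos f c0 k
      have hw := Stmt1.bw_gt_half f c0 k
      exact (Nat.mul_lt_mul_left hp).mpr hw
  · -- lacunarity
    intro i
    rcases Stmt1.bn_succ f c0 i with h | ⟨k, _, h1, h2⟩
    · rw [h]
      push_cast
      have : (0:ℝ) ≤ (Stmt1.bn f c0 i : ℝ) := Nat.cast_nonneg _
      nlinarith
    · rw [h1, h2]
      exact Stmt1.lacun f c0 hlam2 hc0 k
  · -- ratio tends to 2
    have hbb : Tendsto (fun i => Stmt1.bb f c0 i) atTop atTop := by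
      rw [tendsto_atTop]
      intro K
      filter_upwards [eventually_ge_atTop (Stmt1.ba f c0 K)] with i hi
      have hKi : K ≤ i := le_trans (Stmt1.ba_ge f c0 K) hi
      exact Nat.le_findGreatest hKi hi
    have hpow : Tendsto (fun i => (1/2:ℝ) ^ (Stmt1.bb f c0 i)) atTop (nhds 0) :=
      (tendsto_pow_atTop_nhds_zero_of_lt_one (by norm_num) (by norm_num)).comp hbb
    have hlow : Tendsto (fun i => 2 - (1/2:ℝ) ^ (Stmt1.bb f c0 i)) atTop (nhds 2) := by
      have h := ((tendsto_const_nhds : Tendsto (fun _ : ℕ => (2:ℝ)) atTop (nhds 2)).sub hpow)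
      simpa using h
    apply tendsto_of_tendsto_of_tendsto_of_le_of_le hlow tendsto_const_nhds
    · -- lower bound
      intro i
      dsimp only
      have hpos : (0:ℝ) < (Stmt1.bn f c0 i : ℝ) := by
        exact_mod_cast Stmt1.bn_pos f c0 i
      rcases Stmt1.bn_succ f c0 i with h | ⟨k, hk, h1, h2⟩
      · rw [h]
        push_cast
        rw [mul_div_assoc, div_self hpos.ne', mul_one]
        have : (0:ℝ) ≤ (1/2:ℝ) ^ (Stmt1.bb f c0 i) := by positivity
        linarith
      · have hbbi : Stmt1.bb f c0 i = k := by
          apply Stmt1.bb_eq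
          · have hL := Stmt1.bL_pos f c0 k
            have : Stmt1.ba f c0 (k+1) = Stmt1.ba f c0 k + Stmt1.bL f c0 k := rfl
            omega
          · omega
        rw [h1, h2, hbbi, le_div_iff₀ (by rw [← h1]; exact hpos)]
        exact Stmt1.low2 f c0 k
    · -- upper bound
      intro i
      dsimp only
      have hpos : (0:ℝ) < (Stmt1.bn f c0 i : ℝ) := by
        exact_mod_cast Stmt1.bn_pos f c0 i
      rcases Stmt1.bn_succ f c0 i with h | ⟨k, hk, h1, h2⟩
      · rw [h]
        push_cast
        rw [mul_div_assoc, div_self hpos.ne', mul_one]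
      · rw [h1, h2, div_le_iff₀ (by rw [← h1]; exact hpos)]
        have := Stmt1.ratio_up f c0 k
        have hcast : (Stmt1.bc f c0 (k+1) : ℝ) ≤ 2 * (Stmt1.bN f c0 k : ℝ) := by
          exact_mod_cast this
        linarith
  · -- every rational in (0,2] has infinitely many representations
    intro q hq0 hq2
    have key : ∀ M : ℕ, ∃ S : Finset ℕ,
        q = (∑ i ∈ S, (1 : ℚ) / (Stmt1.bn f c0 i)) ∧ ∃ i ∈ S, M < i := by
      intro M
      obtain ⟨a0, ha0⟩ := hf q
      set k := Nat.pair a0 (M + 1) with hkdef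
      have htgt : Stmt1.tgt f k = q := by
        unfold Stmt1.tgt
        rw [hkdef, Nat.unpair_pair, ha0]
        simp [hq0, hq2]
      obtain ⟨S, ⟨i, hiS, hige⟩, hsum⟩ := Stmt1.represent f c0 k
      refine ⟨S, by rw [← htgt]; exact hsum, i, hiS, ?_⟩
      have h1 : k + 1 ≤ Stmt1.ba f c0 (k + 1) := Stmt1.ba_ge f c0 (k + 1)
      have h2 : M + 1 ≤ k := Nat.right_le_pair a0 (M + 1)
      omega
    by_contra hfin
    rw [Set.not_infinite] at hfin
    set M := hfin.toFinset.sup (fun S => S.sup id) with hM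
    obtain ⟨S, hS, i, hiS, hMi⟩ := key M
    have hmem : S ∈ hfin.toFinset := Set.Finite.mem_toFinset hfin |>.mpr hS
    have h3 : i ≤ S.sup id := Finset.le_sup (f := id) hiS
    have h4 : S.sup id ≤ M := Finset.le_sup (f := fun S => S.sup id) hmem
    omega
end

section
/- If n_1 < n_2 < n_3 < ⋯ is a sequence of positive integers satisfying n_{i+1} ≥ 2·n_i for every index i, then there is no non-empty open interval (α, β) of real numbers such that every rational number q ∈ (α, β) can be written as a finite sum ∑_{i∈S} 1/n_i for some finite set S ⊂ ℕ. -/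
namespace Stmt2Aux

lemma sum_Icc_le (n : ℕ → ℕ) (hpos : ∀ i, 0 < n i) (hlac : ∀ i, 2 * n i ≤ n (i + 1))
    (j k : ℕ) (h : j ≤ k) :
    ∑ i ∈ Finset.Icc (j+1) k, (1:ℚ)/n i ≤ 1/n j - 1/n k := by
  induction k, h using Nat.le_induction with
  | base => simp [Finset.Icc_eq_empty (by omega : ¬ (j+1 ≤ j))]
  | succ k hk ih =>
      rw [Finset.sum_Icc_succ_top (by omega : j+1 ≤ k+1)]
      have h1 : (0:ℚ) < n k := by exact_mod_cast hpos k
      have h2 : (0:ℚ) < n (k+1) := by exact_mod_cast hpos (k+1)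
      have h3 : (2:ℚ) * n k ≤ n (k+1) := by exact_mod_cast hlac k
      have key : (2:ℚ)/n (k+1) ≤ 1/n k := by
        rw [div_le_div_iff₀ h2 h1]; nlinarith
      have e1 : (1:ℚ)/n (k+1) ≤ 1/n k - 1/n (k+1) := by
        have h4 : (2:ℚ)/n (k+1) = 1/n (k+1) + 1/n (k+1) := by ring
        linarith [h4 ▸ key]
      linarith

/-- Tail bound: a finite sum of reciprocals with all indices `≥ m` is `≤ 2/n m`. -/
lemma tail_le (n : ℕ → ℕ) (hpos : ∀ i, 0 < n i) (hlac : ∀ i, 2 * n i ≤ n (i + 1))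
    (S : Finset ℕ) (m : ℕ) (hS : ∀ i ∈ S, m ≤ i) :
    ∑ i ∈ S, (1:ℚ)/n i ≤ 2/n m := by
  have hm : (0:ℚ) < n m := by exact_mod_cast hpos m
  rcases S.eq_empty_or_nonempty with rfl | hne
  · simp; positivity
  · set M := S.max' hne with hM
    have hmM : m ≤ M := hS _ (S.max'_mem hne)
    have hsub : S ⊆ Finset.Icc m M := by
      intro i hi
      exact Finset.mem_Icc.mpr ⟨hS i hi, S.le_max' i hi⟩
    have h1 : ∑ i ∈ S, (1:ℚ)/n i ≤ ∑ i ∈ Finset.Icc m M, (1:ℚ)/n i := by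
      apply Finset.sum_le_sum_of_subset_of_nonneg hsub
      intro i _ _; positivity
    have hins : Finset.Icc m M = insert m (Finset.Icc (m+1) M) := by
      ext x; simp only [Finset.mem_Icc, Finset.mem_insert]; omega
    have hnotin : m ∉ Finset.Icc (m+1) M := by simp
    have h2 : ∑ i ∈ Finset.Icc m M, (1:ℚ)/n i
        = 1/n m + ∑ i ∈ Finset.Icc (m+1) M, (1:ℚ)/n i := by
      rw [hins, Finset.sum_insert hnotin]
    have h3 := sum_Icc_le n hpos hlac m M hmM
    have hMpos : (0:ℚ) < n M := by exact_mod_cast hpos M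
    have : (2:ℚ)/n m = 1/n m + 1/n m := by ring
    linarith [one_div_pos.mpr hMpos]

/-- Separation of "head" sums: two sums over index sets contained in `[0,k]`
that differ, differ by at least `1/n k`. -/
lemma sep (n : ℕ → ℕ) (hpos : ∀ i, 0 < n i) (hlac : ∀ i, 2 * n i ≤ n (i + 1))
    (k : ℕ) (S S' : Finset ℕ) (hS : ∀ i ∈ S, i ≤ k) (hS' : ∀ i ∈ S', i ≤ k)
    (h : ∑ i ∈ S', (1:ℚ)/n i < ∑ i ∈ S, (1:ℚ)/n i) :
    ∑ i ∈ S', (1:ℚ)/n i + 1/n k ≤ ∑ i ∈ S, (1:ℚ)/n i := by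
  have hkpos : (0:ℚ) < n k := by exact_mod_cast hpos k
  set A := S \ S' with hA
  set B := S' \ S with hB
  have hdecS : ∑ i ∈ A, (1:ℚ)/n i + ∑ i ∈ S ∩ S', (1:ℚ)/n i = ∑ i ∈ S, (1:ℚ)/n i := by
    rw [hA, ← Finset.sdiff_inter_self_left S S']
    exact Finset.sum_sdiff Finset.inter_subset_left
  have hdecS' : ∑ i ∈ B, (1:ℚ)/n i + ∑ i ∈ S ∩ S', (1:ℚ)/n i = ∑ i ∈ S', (1:ℚ)/n i := by
    rw [hB, ← Finset.sdiff_inter_self_left S' S, Finset.inter_comm S S']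
    exact Finset.sum_sdiff Finset.inter_subset_left
  have hAB : ∑ i ∈ B, (1:ℚ)/n i < ∑ i ∈ A, (1:ℚ)/n i := by linarith
  suffices hfin : ∑ i ∈ B, (1:ℚ)/n i + 1/n k ≤ ∑ i ∈ A, (1:ℚ)/n i by linarith
  have hAne : A.Nonempty := by
    by_contra hc
    rw [Finset.not_nonempty_iff_eq_empty] at hc
    rw [hc, Finset.sum_empty] at hAB
    have : (0:ℚ) ≤ ∑ i ∈ B, (1:ℚ)/n i := Finset.sum_nonneg (by intro i _; positivity)
    linarith
  have hUne : (A ∪ B).Nonempty := hAne.mono Finset.subset_union_left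
  set j := (A ∪ B).min' hUne with hj
  have hjmem := (A ∪ B).min'_mem hUne
  have hjmin : ∀ x ∈ A ∪ B, j ≤ x := fun x hx => (A ∪ B).min'_le x hx
  have hdisj : Disjoint A B := Finset.sdiff_disjoint.mono_right Finset.sdiff_subset |>.mono_left le_rfl
  rcases Finset.mem_union.mp hjmem with hjA | hjB
  · -- j ∈ A : A side wins by at least 1/n k
    have hjk : j ≤ k := hS j (Finset.sdiff_subset hjA)
    have hBsub : B ⊆ Finset.Icc (j+1) k := by
      intro x hx
      have hx1 : j ≤ x := hjmin x (Finset.mem_union_right _ hx)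
      have hx2 : x ≤ k := hS' x (Finset.sdiff_subset hx)
      have hxj : x ≠ j := by
        rintro rfl
        exact (Finset.mem_sdiff.mp hx).2 (Finset.mem_sdiff.mp hjA).1
      exact Finset.mem_Icc.mpr ⟨by omega, hx2⟩
    have hBle : ∑ i ∈ B, (1:ℚ)/n i ≤ 1/n j - 1/n k := by
      calc ∑ i ∈ B, (1:ℚ)/n i ≤ ∑ i ∈ Finset.Icc (j+1) k, (1:ℚ)/n i :=
            Finset.sum_le_sum_of_subset_of_nonneg hBsub (by intro i _ _; positivity)
        _ ≤ 1/n j - 1/n k := sum_Icc_le n hpos hlac j k hjk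
    have hAge : (1:ℚ)/n j ≤ ∑ i ∈ A, (1:ℚ)/n i :=
      Finset.single_le_sum (f := fun i => (1:ℚ)/n i) (by intro i _; positivity) hjA
    linarith
  · -- j ∈ B : contradiction with hAB
    have hjk : j ≤ k := hS' j (Finset.sdiff_subset hjB)
    have hAsub : A ⊆ Finset.Icc (j+1) k := by
      intro x hx
      have hx1 : j ≤ x := hjmin x (Finset.mem_union_left _ hx)
      have hx2 : x ≤ k := hS x (Finset.sdiff_subset hx)
      have hxj : x ≠ j := by
        rintro rfl
        exact (Finset.mem_sdiff.mp hjB).2 (Finset.mem_sdiff.mp hx).1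
      exact Finset.mem_Icc.mpr ⟨by omega, hx2⟩
    have hAle : ∑ i ∈ A, (1:ℚ)/n i ≤ 1/n j - 1/n k := by
      calc ∑ i ∈ A, (1:ℚ)/n i ≤ ∑ i ∈ Finset.Icc (j+1) k, (1:ℚ)/n i :=
            Finset.sum_le_sum_of_subset_of_nonneg hAsub (by intro i _ _; positivity)
        _ ≤ 1/n j - 1/n k := sum_Icc_le n hpos hlac j k hjk
    have hBge : (1:ℚ)/n j ≤ ∑ i ∈ B, (1:ℚ)/n i :=
      Finset.single_le_sum (f := fun i => (1:ℚ)/n i) (by intro i _; positivity) hjB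
    linarith

end Stmt2Aux

/-- If `n₁ < n₂ < ⋯` is a sequence of positive integers with
`n (i+1) ≥ 2 * n i` for every `i`, then there is no non-empty open interval
`(α, β)` such that every rational in `(α, β)` is a finite sum of reciprocals
`∑_{i ∈ S} 1 / n i`. -/
theorem stmt2 (n : ℕ → ℕ) (hmono : StrictMono n) (hpos : ∀ i, 0 < n i)
    (hlac : ∀ i, 2 * n i ≤ n (i + 1)) :
    ¬ ∃ α β : ℝ, α < β ∧
      ∀ q : ℚ, α < (q : ℝ) → (q : ℝ) < β →
        ∃ S : Finset ℕ, q = ∑ i ∈ S, (1 : ℚ) / (n i) := by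
  rintro ⟨α, β, hαβ, hrep⟩
  obtain ⟨q₀, hq₀α, hq₀β⟩ := exists_rat_btwn hαβ
  have hβq : (0:ℝ) < β - (q₀:ℝ) := by linarith
  obtain ⟨N, hN⟩ := exists_nat_one_div_lt hβq
  set k₁ := N + 1 with hk₁def
  have hnk : ∀ i, k₁ ≤ i → (1:ℝ)/n i < β - (q₀:ℝ) := by
    intro i hi
    have h1 : (N+1 : ℕ) ≤ n i := le_trans hi (hmono.le_apply)
    have h1' : ((N:ℝ)+1) ≤ (n i : ℝ) := by exact_mod_cast h1
    have h2 : (1:ℝ)/n i ≤ 1/((N:ℝ)+1) :=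
      one_div_le_one_div_of_le (by positivity) h1'
    exact lt_of_le_of_lt h2 hN
  -- Stage 1: eventually n (i+1) = 2 * n i
  have key : ∀ i, k₁ ≤ i → n (i+1) = 2 * n i := by
    intro i hik
    by_contra hne
    have h2 : 2 * n i + 1 ≤ n (i+1) := by have := hlac i; omega
    have hi0 : (0:ℚ) < n i := by exact_mod_cast hpos i
    have hi10 : (0:ℚ) < n (i+1) := by exact_mod_cast hpos (i+1)
    have hBlt : (2:ℚ)/n (i+1) < 1/n i := by
      rw [div_lt_div_iff₀ hi10 hi0]
      have : (2 * n i + 1 : ℚ) ≤ n (i+1) := by exact_mod_cast h2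
      nlinarith
    have hBltR : 2/(n (i+1):ℝ) < 1/(n i:ℝ) := by
      have h' : ((2/n (i+1) : ℚ):ℝ) < ((1/n i : ℚ):ℝ) := Rat.cast_lt.mpr hBlt
      push_cast at h'; exact h'
    obtain ⟨S₀, hS₀⟩ := hrep q₀ hq₀α hq₀β
    set σ : ℚ := ∑ j ∈ S₀.filter (fun j => j ≤ i), (1:ℚ)/n j with hσ
    have hsplit₀ : σ + ∑ j ∈ S₀.filter (fun j => ¬ j ≤ i), (1:ℚ)/n j = q₀ := by
      rw [hσ, Finset.sum_filter_add_sum_filter_not, ← hS₀]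
    have htail₀le : ∑ j ∈ S₀.filter (fun j => ¬ j ≤ i), (1:ℚ)/n j ≤ 2/n (i+1) :=
      Stmt2Aux.tail_le n hpos hlac _ (i+1)
        (by intro x hx; have := (Finset.mem_filter.mp hx).2; omega)
    have htail₀0 : (0:ℚ) ≤ ∑ j ∈ S₀.filter (fun j => ¬ j ≤ i), (1:ℚ)/n j :=
      Finset.sum_nonneg (by intro x _; positivity)
    have hσq : (σ:ℝ) ≤ (q₀:ℝ) := by
      have : σ ≤ q₀ := by linarith
      exact_mod_cast this
    have hq₀σ : (q₀:ℝ) ≤ (σ:ℝ) + 2/(n (i+1):ℝ) := by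
      have h' : q₀ ≤ σ + 2/(n (i+1):ℚ) := by linarith
      have h'' : ((q₀:ℚ):ℝ) ≤ ((σ + 2/(n (i+1):ℚ) : ℚ):ℝ) := Rat.cast_le.mpr h'
      push_cast at h''; exact h''
    have hgap : max α ((σ:ℝ) + 2/(n (i+1):ℝ)) < min β ((σ:ℝ) + 1/(n i:ℝ)) := by
      rw [lt_min_iff, max_lt_iff, max_lt_iff]
      have hnki := hnk i hik
      refine ⟨⟨hαβ, ?_⟩, ⟨?_, ?_⟩⟩ <;> linarith
    obtain ⟨q, hq1, hq2⟩ := exists_rat_btwn hgap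
    have hqα : α < (q:ℝ) := lt_of_le_of_lt (le_max_left _ _) hq1
    have hqβ : (q:ℝ) < β := lt_of_lt_of_le hq2 (min_le_left _ _)
    have h5 : (σ:ℝ) + 2/(n (i+1):ℝ) < (q:ℝ) := lt_of_le_of_lt (le_max_right _ _) hq1
    have h6 : (q:ℝ) < (σ:ℝ) + 1/(n i:ℝ) := lt_of_lt_of_le hq2 (min_le_right _ _)
    obtain ⟨S, hS⟩ := hrep q hqα hqβ
    set σ' : ℚ := ∑ j ∈ S.filter (fun j => j ≤ i), (1:ℚ)/n j with hσ'
    have hsplit : σ' + ∑ j ∈ S.filter (fun j => ¬ j ≤ i), (1:ℚ)/n j = q := by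
      rw [hσ', Finset.sum_filter_add_sum_filter_not, ← hS]
    have htaile : ∑ j ∈ S.filter (fun j => ¬ j ≤ i), (1:ℚ)/n j ≤ 2/n (i+1) :=
      Stmt2Aux.tail_le n hpos hlac _ (i+1)
        (by intro x hx; have := (Finset.mem_filter.mp hx).2; omega)
    have htail0 : (0:ℚ) ≤ ∑ j ∈ S.filter (fun j => ¬ j ≤ i), (1:ℚ)/n j :=
      Finset.sum_nonneg (by intro x _; positivity)
    have hσ'q : (σ':ℝ) ≤ (q:ℝ) := by
      have : σ' ≤ q := by linarith
      exact_mod_cast this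
    have hqσ' : (q:ℝ) ≤ (σ':ℝ) + 2/(n (i+1):ℝ) := by
      have h' : q ≤ σ' + 2/(n (i+1):ℚ) := by linarith
      have h'' : ((q:ℚ):ℝ) ≤ ((σ' + 2/(n (i+1):ℚ) : ℚ):ℝ) := Rat.cast_le.mpr h'
      push_cast at h''; exact h''
    -- σ < σ' over ℚ
    have hσσ' : σ < σ' := by
      have : (σ:ℝ) < (σ':ℝ) := by linarith
      exact_mod_cast this
    have hsep := Stmt2Aux.sep n hpos hlac i (S.filter (fun j => j ≤ i))
      (S₀.filter (fun j => j ≤ i))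
      (by intro x hx; exact (Finset.mem_filter.mp hx).2)
      (by intro x hx; exact (Finset.mem_filter.mp hx).2)
      hσσ'
    -- hsep : σ + 1/n i ≤ σ'
    have hsepR : (σ:ℝ) + 1/(n i:ℝ) ≤ (σ':ℝ) := by
      have h'' : ((σ + 1/(n i:ℚ) : ℚ):ℝ) ≤ ((σ':ℚ):ℝ) := Rat.cast_le.mpr hsep
      push_cast at h''; exact h''
    linarith
  -- Stage 2: geometric tail
  have hgeom : ∀ i, k₁ ≤ i → n i = 2^(i - k₁) * n k₁ := by
    intro i hi
    induction i, hi using Nat.le_induction with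
    | base => simp
    | succ i hi ih =>
        rw [key i hi, ih, show i + 1 - k₁ = (i - k₁) + 1 by omega, pow_succ]
        ring
  set C : ℕ := (∏ j ∈ Finset.range k₁, n j) * n k₁ with hC
  have hCpos : 0 < C := Nat.mul_pos (Finset.prod_pos (fun j _ => hpos j)) (hpos k₁)
  -- Stage 3: every rational in (α,β) has denominator dividing C * 2^M
  have hden : ∀ q : ℚ, α < (q:ℝ) → (q:ℝ) < β →
      ∃ z M : ℕ, q * ((C:ℚ) * 2^M) = (z:ℚ) := by
    intro q h1 h2
    obtain ⟨S, hS⟩ := hrep q h1 h2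
    refine ⟨∑ i ∈ S, (C * 2^(S.sup id)) / n i, S.sup id, ?_⟩
    set M := S.sup id with hM
    have hdvd : ∀ i ∈ S, n i ∣ C * 2^M := by
      intro i hi
      have hiM : i ≤ M := Finset.le_sup (f := id) hi
      rcases lt_or_ge i k₁ with h | h
      · have h1 : n i ∣ ∏ j ∈ Finset.range k₁, n j :=
          Finset.dvd_prod_of_mem n (Finset.mem_range.mpr h)
        exact Dvd.dvd.mul_right (h1.mul_right (n k₁)) _
      · have hnkC : n k₁ ∣ C := ⟨∏ j ∈ Finset.range k₁, n j, mul_comm _ _⟩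
        have : n i ∣ 2^M * C := by
          rw [hgeom i h]
          exact mul_dvd_mul (pow_dvd_pow 2 (by omega)) hnkC
        rwa [mul_comm] at this
    rw [hS, Nat.cast_sum, Finset.sum_mul]
    apply Finset.sum_congr rfl
    intro i hi
    rw [Nat.cast_div (hdvd i hi) (by exact_mod_cast (hpos i).ne')]
    push_cast
    rw [one_div_mul_eq_div]
  -- Stage 4: find a rational with a bad prime denominator
  have h2αβ : (0:ℝ) < (β - α)/2 := by linarith
  obtain ⟨N₂, hN₂⟩ := exists_nat_one_div_lt h2αβ
  obtain ⟨p, hpge, hp⟩ := Nat.exists_infinite_primes (max (C+1) (max 3 (N₂+1)))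
  have hpC : C < p := lt_of_lt_of_le (Nat.lt_succ_self C) (le_trans (le_max_left _ _) hpge)
  have hp3 : 3 ≤ p := le_trans (le_trans (le_max_left _ _) (le_max_right _ _)) hpge
  have hpN : N₂ + 1 ≤ p := le_trans (le_trans (le_max_right _ _) (le_max_right _ _)) hpge
  have hppos : (0:ℝ) < (p:ℝ) := by
    have : 0 < p := by omega
    exact_mod_cast this
  have hplt : 2/(p:ℝ) < β - α := by
    have h1 : ((N₂:ℝ)+1) ≤ (p:ℝ) := by exact_mod_cast hpN
    have h2 : (1:ℝ)/p ≤ 1/((N₂:ℝ)+1) := one_div_le_one_div_of_le (by positivity) h1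
    have h3 : 2/(p:ℝ) = 2*(1/p) := by ring
    linarith
  -- find b with p ∤ b and α < b/p < β
  set a : ℤ := ⌊α * p⌋ + 1 with ha
  have ha1 : α * p < (a:ℝ) := by
    have := Int.lt_floor_add_one (α * p)
    rw [ha]; push_cast; linarith
  have ha2 : (a:ℝ) ≤ α * p + 1 := by
    have := Int.floor_le (α * p)
    rw [ha]; push_cast; linarith
  have h2βα : 2 < (β - α) * p := by
    rw [div_lt_iff₀ hppos] at hplt; linarith
  have hb : ∃ b : ℤ, ¬ (p:ℤ) ∣ b ∧ α < (b:ℝ)/p ∧ (b:ℝ)/p < β := by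
    by_cases hd : (p:ℤ) ∣ a
    · refine ⟨a+1, ?_, ?_, ?_⟩
      · intro hdd
        have h1 : (p:ℤ) ∣ 1 := by simpa using dvd_sub hdd hd
        have := Int.le_of_dvd one_pos h1
        omega
      · rw [lt_div_iff₀ hppos]; push_cast; linarith
      · rw [div_lt_iff₀ hppos]; push_cast; nlinarith
    · refine ⟨a, hd, ?_, ?_⟩
      · rw [lt_div_iff₀ hppos]; linarith
      · rw [div_lt_iff₀ hppos]; nlinarith
  obtain ⟨b, hbd, hbα, hbβ⟩ := hb
  have hcast : (((b:ℚ)/(p:ℚ) : ℚ) : ℝ) = (b:ℝ)/(p:ℝ) := by push_cast; ring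
  obtain ⟨z, M, hz⟩ := hden ((b:ℚ)/(p:ℚ)) (by rw [hcast]; exact hbα) (by rw [hcast]; exact hbβ)
  have hp0 : ((p:ℚ)) ≠ 0 := by
    have : 0 < p := by omega
    positivity
  have hintQ : (b:ℚ) * ((C:ℚ) * 2^M) = (z:ℚ) * (p:ℚ) := by
    field_simp at hz
    linarith [hz]
  have hint : b * ((C:ℤ) * 2^M) = (z:ℤ) * p := by exact_mod_cast hintQ
  have hpd : (p:ℤ) ∣ b * ((C:ℤ) * 2^M) := ⟨z, by linarith⟩
  have hpprime : Prime (p:ℤ) := Nat.prime_iff_prime_int.mp hp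
  rcases hpprime.dvd_mul.mp hpd with h | h
  · exact hbd h
  · have h' : ((C * 2^M : ℕ):ℤ) = (C:ℤ) * 2^M := by push_cast; ring
    have hnat : p ∣ C * 2^M := by
      have := h'.symm ▸ h
      exact_mod_cast this
    rcases (Nat.Prime.dvd_mul hp).mp hnat with h'' | h''
    · exact absurd (Nat.le_of_dvd hCpos h'') (by omega)
    · have := Nat.Prime.dvd_of_dvd_pow hp h''
      have := Nat.le_of_dvd (by norm_num) this
      omega
end

section
/- Let λ be a real number with 1 < λ < 2, and define the integer sequence (a_i)_{i=1}^∞ by a_1 = 1 and a_{i+1} = ⌈λ·a_i⌉ for i ≥ 1. If (n_i)_{i=1}^∞ is any λ-lacunary strictly increasing sequence of positive integers and (α, β) is a non-empty open interval such that every rational number in (α, β) is a finite sum ∑_{i∈S} 1/n_i over some finite S ⊂ ℕ, then β − α ≤ ∑_{i=1}^∞ 1/a_i. -/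
/-- Let `1 < λ < 2` and let `a₁ = 1`, `a_{i+1} = ⌈λ a_i⌉`
(indexed here from `0`, so `a 0 = 1`). If `(n_i)` is a `λ`-lacunary strictly
increasing sequence of positive integers and `(α, β)` is a non-empty open
interval all of whose rationals are finite sums `∑_{i ∈ S} 1 / n i`, then
`β - α ≤ ∑_{i} 1 / a_i`. -/
theorem stmt3 (lam : ℝ) (hlam1 : 1 < lam) (hlam2 : lam < 2)
    (a : ℕ → ℕ) (ha0 : a 0 = 1) (ha : ∀ i, a (i + 1) = ⌈lam * (a i : ℝ)⌉₊)
    (n : ℕ → ℕ) (hmono : StrictMono n) (hpos : ∀ i, 0 < n i)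
    (hlac : ∀ i, lam * (n i : ℝ) ≤ (n (i + 1) : ℝ))
    (α β : ℝ) (hαβ : α < β)
    (hrep : ∀ q : ℚ, α < (q : ℝ) → (q : ℝ) < β →
      ∃ S : Finset ℕ, q = ∑ i ∈ S, (1 : ℚ) / (n i)) :
    β - α ≤ ∑' i, (1 : ℝ) / (a i) := by
  have hlam0 : (0 : ℝ) < lam := lt_trans one_pos hlam1
  -- a i is positive and a i ≥ λ^i
  have hage : ∀ i, lam ^ i ≤ (a i : ℝ) := by
    intro i
    induction i with
    | zero => simp [ha0]
    | succ i ih =>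
      rw [ha i, pow_succ, mul_comm (lam ^ i) lam]
      calc lam * lam ^ i ≤ lam * (a i : ℝ) := by
            exact mul_le_mul_of_nonneg_left ih (le_of_lt hlam0)
        _ ≤ (⌈lam * (a i : ℝ)⌉₊ : ℝ) := Nat.le_ceil _
  have hapos : ∀ i, (0 : ℝ) < (a i : ℝ) := fun i =>
    lt_of_lt_of_le (pow_pos hlam0 i) (hage i)
  -- a i ≤ n i
  have han : ∀ i, a i ≤ n i := by
    intro i
    induction i with
    | zero => rw [ha0]; exact hpos 0
    | succ i ih =>
      rw [ha i, Nat.ceil_le]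
      calc lam * (a i : ℝ) ≤ lam * (n i : ℝ) := by
            exact mul_le_mul_of_nonneg_left (Nat.cast_le.mpr ih) (le_of_lt hlam0)
        _ ≤ (n (i + 1) : ℝ) := hlac i
  -- summability
  have hsum : Summable (fun i => (1 : ℝ) / (a i)) := by
    have hg : Summable (fun i : ℕ => (1 / lam) ^ i) :=
      summable_geometric_of_lt_one (by positivity)
        (by rw [div_lt_one hlam0]; exact hlam1)
    refine hg.of_nonneg_of_le (fun i => by positivity) (fun i => ?_)
    rw [div_pow, one_pow]
    exact div_le_div_of_nonneg_left one_pos.le (pow_pos hlam0 i) (hage i)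
  set T : ℝ := ∑' i, (1 : ℝ) / (a i) with hT
  -- every representable rational is ≤ T
  have hqle : ∀ q : ℚ, α < (q : ℝ) → (q : ℝ) < β → (q : ℝ) ≤ T := by
    intro q h1 h2
    obtain ⟨S, hS⟩ := hrep q h1 h2
    have : (q : ℝ) = ∑ i ∈ S, (1 : ℝ) / (n i) := by
      rw [hS]; push_cast; ring
    rw [this]
    calc ∑ i ∈ S, (1 : ℝ) / (n i) ≤ ∑ i ∈ S, (1 : ℝ) / (a i) := by
          apply Finset.sum_le_sum
          intro i _
          exact div_le_div_of_nonneg_left one_pos.le (hapos i) (Nat.cast_le.mpr (han i))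
      _ ≤ T := Summable.sum_le_tsum S (fun i _ => by positivity) hsum
  -- every representable rational is ≥ 0
  have hqnn : ∀ q : ℚ, α < (q : ℝ) → (q : ℝ) < β → (0 : ℝ) ≤ (q : ℝ) := by
    intro q h1 h2
    obtain ⟨S, hS⟩ := hrep q h1 h2
    have : (q : ℝ) = ∑ i ∈ S, (1 : ℝ) / (n i) := by
      rw [hS]; push_cast; ring
    rw [this]
    exact Finset.sum_nonneg fun i _ => by positivity
  -- α ≥ 0
  have hα : 0 ≤ α := by
    by_contra h
    push_neg at h
    obtain ⟨q, hq1, hq2⟩ := exists_rat_btwn (lt_min hαβ h : α < min β 0)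
    exact absurd (hqnn q hq1 (lt_of_lt_of_le hq2 (min_le_left _ _)))
      (not_le.mpr (lt_of_lt_of_le hq2 (min_le_right _ _)))
  -- β ≤ T
  have hβ : β ≤ T := by
    by_contra h
    push_neg at h
    obtain ⟨q, hq1, hq2⟩ := exists_rat_btwn (max_lt hαβ h : max α T < β)
    exact absurd (hqle q (lt_of_le_of_lt (le_max_left _ _) hq1) hq2)
      (not_le.mpr (lt_of_le_of_lt (le_max_right _ _) hq1))
  linarith
end

section
/- For every real Λ ≥ 2 and every real λ with 1 < λ < Λ/(Λ−1), there exists a λ-lacunary strictly increasing sequence of positive integers (n_i)_{i=1}^∞ such that n_{i+1} > Λ·n_i holds for infinitely many indices i, and every rational number q with 0 ≤ q < ∑_{i=1}^∞ 1/n_i can be written as a finite sum ∑_{i∈S} 1/n_i over some finite S ⊂ ℕ. -/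
open Finset

namespace Stmt7Aux

/-! ### The greedy algorithm, generic over the sequence -/

section Greedy
variable (nn : ℕ → ℕ) (q : ℚ)

noncomputable def gr : ℕ → ℚ
  | 0 => q
  | (i+1) => if 1 / (nn i : ℚ) ≤ gr i then gr i - 1 / (nn i : ℚ) else gr i

lemma gr_succ (i : ℕ) : gr nn q (i+1) =
    if 1 / (nn i : ℚ) ≤ gr nn q i then gr nn q i - 1 / (nn i : ℚ) else gr nn q i := rfl

variable {nn q}

lemma gr_nonneg (hq : 0 ≤ q) : ∀ i, 0 ≤ gr nn q i
  | 0 => hq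
  | (i+1) => by
      rw [gr_succ]; split_ifs with h
      · linarith [gr_nonneg hq i]
      · exact gr_nonneg hq i

lemma gr_sum : ∀ j, gr nn q j
    + ∑ i ∈ (range j).filter (fun i => 1 / (nn i : ℚ) ≤ gr nn q i), 1 / (nn i : ℚ) = q
  | 0 => by simp [gr]
  | (j+1) => by
      have IH := gr_sum j
      rw [range_add_one, filter_insert]
      split_ifs with h
      · rw [sum_insert (by simp)]
        rw [gr_succ, if_pos h]
        ring_nf
        ring_nf at IH
        linarith [IH]
      · rw [gr_succ, if_neg h]
        exact IH

lemma gr_eat (x : ℕ) : ∀ m, (∀ r, r < m → 1 / (nn (x+r) : ℚ) ≤ gr nn q (x+r)) →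
    gr nn q (x + m) = gr nn q x - ∑ r ∈ range m, 1 / (nn (x+r) : ℚ)
  | 0, _ => by simp
  | (m+1), h => by
      have IH := gr_eat x m (fun r hr => h r (by omega))
      have hx : x + (m+1) = (x + m) + 1 := by omega
      have hm := h m (by omega)
      rw [hx, gr_succ, if_pos hm, IH, sum_range_succ]
      ring

/-- The local invariant: after considering index `i`, the remainder is `< 1 / n i`. -/
def Pinv (i : ℕ) : Prop := gr nn q (i+1) < 1 / (nn i : ℚ)

lemma P_of_skip {i : ℕ} (h : ¬ (1 / (nn i : ℚ) ≤ gr nn q i)) : Pinv (nn := nn) (q := q) i := by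
  unfold Pinv
  rw [gr_succ, if_neg h]
  exact lt_of_not_ge h

lemma P_step {i : ℕ} (hpos : 0 < nn i) (hpos' : 0 < nn (i+1)) (h2 : nn (i+1) ≤ 2 * nn i)
    (h : Pinv (nn := nn) (q := q) i) : Pinv (nn := nn) (q := q) (i+1) := by
  unfold Pinv at *
  have hc : (1 : ℚ) / (nn i) ≤ 2 / (nn (i+1)) := by
    rw [div_le_div_iff₀ (by exact_mod_cast hpos) (by exact_mod_cast hpos')]
    rw [one_mul]
    exact_mod_cast h2
  have hr : (2:ℚ) / (nn (i+1)) - 1 / (nn (i+1)) = 1 / (nn (i+1)) := by ring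
  rw [gr_succ (i := i+1)]
  split_ifs with hu
  · linarith
  · exact lt_of_not_ge hu

lemma P_prop (x : ℕ) (hpos : ∀ i, 0 < nn i) :
    ∀ m, Pinv (nn := nn) (q := q) x → (∀ j, j < m → nn (x+j+1) ≤ 2 * nn (x+j)) →
      Pinv (nn := nn) (q := q) (x + m)
  | 0, h, _ => h
  | (m+1), h, hr => by
      have IH := P_prop x hpos m h (fun j hj => hr j (by omega))
      have : x + (m+1) = (x+m) + 1 := by omega
      rw [this]
      exact P_step (hpos _) (hpos _) (by simpa using hr m (by omega)) IH

end Greedy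

/-! ### The construction -/

structure Pa where
  p : ℕ
  a : ℕ
  S : ℕ
  c0 : ℕ
  Lam : ℝ

namespace Pa
variable (Γ : Pa)

/-- the jump multiplier at stage `k` : a multiple of `k+1` slightly above `Lam * 2^(k+c0)`. -/
noncomputable def w (k : ℕ) : ℕ := (k+1) * (⌊Γ.Lam * (2:ℝ)^(k+Γ.c0)⌋₊ / (k+1) + 1)

/-- absorption values -/
noncomputable def t : ℕ → ℕ
  | 0 => 1
  | (k+1) => Γ.w k * Γ.p ^ Γ.S * t k

/-- length of the binary run at stage `k` -/
def T (k : ℕ) : ℕ := k + Γ.c0 + Γ.a * Γ.S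

/-- length of stage `k` -/
def L (k : ℕ) : ℕ := Γ.T k + Γ.S + 1

/-- index where stage `k` begins -/
noncomputable def B : ℕ → ℕ
  | 0 => 0
  | (k+1) => B k + Γ.L k

/-- the term at stage `k`, position `s` -/
noncomputable def φ (k s : ℕ) : ℕ :=
  if s ≤ Γ.T k then 2^s * Γ.t k
  else Γ.w k * Γ.p ^ (s - (Γ.T k + 1)) * 2 ^ (Γ.a * (Γ.S - (s - (Γ.T k + 1)))) * Γ.t k

/-- stage and position of index `i` -/
noncomputable def pos : ℕ → ℕ × ℕ
  | 0 => (0, 0)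
  | (i+1) => if (pos i).2 + 1 < Γ.L (pos i).1 then ((pos i).1, (pos i).2 + 1)
             else ((pos i).1 + 1, 0)

/-- the sequence -/
noncomputable def n (i : ℕ) : ℕ := Γ.φ (Γ.pos i).1 (Γ.pos i).2

lemma t_succ (k : ℕ) : Γ.t (k+1) = Γ.w k * Γ.p ^ Γ.S * Γ.t k := by rw [t]

lemma t_zero : Γ.t 0 = 1 := by rw [t]

lemma B_succ (k : ℕ) : Γ.B (k+1) = Γ.B k + Γ.L k := by rw [B]

lemma B_zero : Γ.B 0 = 0 := by rw [B]

lemma pos_zero : Γ.pos 0 = (0, 0) := by rw [pos]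

lemma pos_succ (i : ℕ) : Γ.pos (i+1) =
    if (Γ.pos i).2 + 1 < Γ.L (Γ.pos i).1 then ((Γ.pos i).1, (Γ.pos i).2 + 1)
    else ((Γ.pos i).1 + 1, 0) := by rw [pos]

lemma w_pos (k : ℕ) : 0 < Γ.w k := Nat.mul_pos (Nat.succ_pos k) (Nat.succ_pos _)

lemma succ_dvd_w (k : ℕ) : (k+1) ∣ Γ.w k := dvd_mul_right _ _

lemma w_lower (k : ℕ) : Γ.Lam * (2:ℝ)^(k+Γ.c0) < Γ.w k := by
  set u := ⌊Γ.Lam * (2:ℝ)^(k+Γ.c0)⌋₊ with hu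
  have h1 : u < Γ.w k := by
    have hdm := Nat.div_add_mod u (k+1)
    have hmod : u % (k+1) < k + 1 := Nat.mod_lt _ (by omega)
    have hexp : Γ.w k = (k+1) * (u / (k+1)) + (k+1) := by unfold w; ring
    omega
  calc Γ.Lam * (2:ℝ)^(k+Γ.c0) < ((u + 1 : ℕ) : ℝ) := by
        push_cast
        have := Nat.lt_succ_floor (Γ.Lam * (2:ℝ)^(k+Γ.c0))
        push_cast at this
        linarith
    _ ≤ Γ.w k := by exact_mod_cast h1

lemma w_upper (k : ℕ) (hL : 0 ≤ Γ.Lam) : (Γ.w k : ℝ) ≤ Γ.Lam * (2:ℝ)^(k+Γ.c0) + (k+1) := by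
  set u := ⌊Γ.Lam * (2:ℝ)^(k+Γ.c0)⌋₊ with hu
  have h1 : Γ.w k ≤ u + (k+1) := by
    have h2 : (k+1) * (u / (k+1)) ≤ u := Nat.mul_div_le u (k+1)
    have hexp : Γ.w k = (k+1) * (u / (k+1)) + (k+1) := by unfold w; ring
    omega
  calc (Γ.w k : ℝ) ≤ ((u + (k+1) : ℕ) : ℝ) := by exact_mod_cast h1
    _ ≤ Γ.Lam * (2:ℝ)^(k+Γ.c0) + (k+1) := by
        push_cast
        have := Nat.floor_le (by positivity : (0:ℝ) ≤ Γ.Lam * (2:ℝ)^(k+Γ.c0))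
        rw [hu]
        push_cast at this ⊢
        linarith

lemma t_pos (hp : 0 < Γ.p) : ∀ k, 0 < Γ.t k
  | 0 => by rw [t_zero]; omega
  | (k+1) => by
      have h1 := t_pos hp k
      have h2 := Γ.w_pos k
      have h3 : 0 < Γ.p ^ Γ.S := Nat.pow_pos hp
      rw [t_succ]
      exact Nat.mul_pos (Nat.mul_pos h2 h3) h1

lemma t_dvd_succ (k : ℕ) : Γ.t k ∣ Γ.t (k+1) := by
  rw [t_succ]; exact dvd_mul_left _ _

lemma t_dvd_mono : ∀ {k k'}, k ≤ k' → Γ.t k ∣ Γ.t k' := by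
  intro k k' h
  induction k' with
  | zero => simp_all
  | succ m IH =>
      rcases Nat.eq_or_lt_of_le h with rfl | h'
      · rfl
      · exact (IH (by omega)).trans (Γ.t_dvd_succ m)

lemma factorial_dvd_t : ∀ k, Nat.factorial k ∣ Γ.t k
  | 0 => by rw [t_zero]; simp
  | (k+1) => by
      have IH := factorial_dvd_t k
      rw [t_succ, Nat.factorial_succ]
      calc (k+1) * Nat.factorial k ∣ Γ.w k * (Γ.p ^ Γ.S * Γ.t k) :=
            mul_dvd_mul (Γ.succ_dvd_w k) (Dvd.dvd.mul_left IH _)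
        _ = Γ.w k * Γ.p ^ Γ.S * Γ.t k := by ring

lemma L_pos (k : ℕ) : 0 < Γ.L k := by unfold L; omega

lemma T_lt_L (k : ℕ) : Γ.T k < Γ.L k := by unfold L; omega

lemma B_lt_succ (k : ℕ) : Γ.B k < Γ.B (k+1) := by
  have := Γ.L_pos k
  rw [B_succ]; omega

lemma B_mono : ∀ {k k'}, k ≤ k' → Γ.B k ≤ Γ.B k' := by
  intro k k' h
  induction k' with
  | zero => simp_all
  | succ m IH =>
      rcases Nat.eq_or_lt_of_le h with rfl | h'
      · rfl
      · exact (IH (by omega)).trans (Γ.B_lt_succ m).le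

lemma le_B (k : ℕ) : k ≤ Γ.B k := by
  induction k with
  | zero => omega
  | succ m IH => have := Γ.B_lt_succ m; omega

lemma pos_valid : ∀ i, (Γ.pos i).2 < Γ.L (Γ.pos i).1 ∧ Γ.B (Γ.pos i).1 + (Γ.pos i).2 = i
  | 0 => by
      rw [pos_zero]
      exact ⟨Γ.L_pos 0, by simp [B_zero]⟩
  | (i+1) => by
      obtain ⟨h1, h2⟩ := pos_valid i
      rw [pos_succ]
      split_ifs with h
      · exact ⟨h, by simp; omega⟩
      · refine ⟨Γ.L_pos _, ?_⟩
        have h3 : (Γ.pos i).2 + 1 = Γ.L (Γ.pos i).1 := by omega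
        simp only [B_succ]
        omega

lemma pos_B_add : ∀ k, (∀ s, s < Γ.L k → Γ.pos (Γ.B k + s) = (k, s)) := by
  intro k
  induction k with
  | zero =>
      intro s hs
      induction s with
      | zero => simpa [B_zero] using Γ.pos_zero
      | succ m IH =>
          have hm := IH (by omega)
          have : Γ.B 0 + (m+1) = (Γ.B 0 + m) + 1 := by omega
          rw [this, pos_succ, hm]
          simp only [Prod.snd, Prod.fst]
          rw [if_pos hs]
  | succ k IH =>
      have hLk := Γ.L_pos k
      have hend : Γ.pos (Γ.B k + (Γ.L k - 1)) = (k, Γ.L k - 1) := IH _ (by omega)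
      have hB' : Γ.pos (Γ.B (k+1)) = (k+1, 0) := by
        have hb : Γ.B (k+1) = (Γ.B k + (Γ.L k - 1)) + 1 := by rw [B_succ]; omega
        rw [hb, pos_succ, hend]
        simp only [Prod.snd, Prod.fst]
        rw [if_neg (by omega)]
      intro s hs
      induction s with
      | zero => simpa using hB'
      | succ m IHs =>
          have hm := IHs (by omega)
          have : Γ.B (k+1) + (m+1) = (Γ.B (k+1) + m) + 1 := by omega
          rw [this, pos_succ, hm]
          simp only [Prod.snd, Prod.fst]
          rw [if_pos hs]

lemma n_at (k s : ℕ) (hs : s < Γ.L k) : Γ.n (Γ.B k + s) = Γ.φ k s := by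
  unfold n
  rw [Γ.pos_B_add k s hs]

lemma n_run (k s : ℕ) (hs : s ≤ Γ.T k) : Γ.n (Γ.B k + s) = 2^s * Γ.t k := by
  rw [Γ.n_at k s (by have := Γ.T_lt_L k; omega)]
  unfold φ
  rw [if_pos hs]

lemma n_B (k : ℕ) : Γ.n (Γ.B k) = Γ.t k := by
  have := Γ.n_run k 0 (by omega)
  simpa using this

lemma n_rec (k r : ℕ) (hr : r ≤ Γ.S) :
    Γ.n (Γ.B k + Γ.T k + 1 + r) = Γ.w k * Γ.p ^ r * 2 ^ (Γ.a * (Γ.S - r)) * Γ.t k := by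
  rcases Nat.lt_or_ge r Γ.S with h | h
  · have hs : Γ.T k + 1 + r < Γ.L k := by unfold L; omega
    have hh := Γ.n_at k (Γ.T k + 1 + r) hs
    rw [show Γ.B k + Γ.T k + 1 + r = Γ.B k + (Γ.T k + 1 + r) by omega, hh]
    unfold φ
    rw [if_neg (by omega)]
    have he : Γ.T k + 1 + r - (Γ.T k + 1) = r := by omega
    rw [he]
  · have hrS : r = Γ.S := by omega
    subst hrS
    have hidx : Γ.B k + Γ.T k + 1 + Γ.S = Γ.B (k+1) := by
      rw [B_succ]; unfold L; omega
    rw [hidx, Γ.n_B (k+1), t_succ]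
    rw [Nat.sub_self, Nat.mul_zero, pow_zero]
    ring


lemma φ_pos (hp : 0 < Γ.p) (k s : ℕ) : 0 < Γ.φ k s := by
  have ht := Γ.t_pos hp k
  have hw := Γ.w_pos k
  have hps : 0 < Γ.p ^ (s - (Γ.T k + 1)) := Nat.pow_pos hp
  unfold φ
  split_ifs
  · positivity
  · positivity

lemma n_pos (hp : 0 < Γ.p) (i : ℕ) : 0 < Γ.n i := Γ.φ_pos hp _ _

lemma T_mono {k k' : ℕ} (h : k ≤ k') : Γ.T k ≤ Γ.T k' := by unfold T; omega

lemma ratio_cases (i : ℕ) :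
    (Γ.n (i+1) = 2 * Γ.n i) ∨ (2^Γ.a * Γ.n (i+1) = Γ.p * Γ.n i) ∨
    (∃ k, i = Γ.B k + Γ.T k ∧ 2^(k + Γ.c0) * Γ.n (i+1) = Γ.w k * Γ.n i) := by
  obtain ⟨hlt, heq⟩ := Γ.pos_valid i
  set k := (Γ.pos i).1 with hk
  set s := (Γ.pos i).2 with hs
  rcases Nat.lt_or_ge s (Γ.T k) with h1 | h1
  · left
    have e1 : Γ.n i = 2^s * Γ.t k := by rw [← heq]; exact Γ.n_run k s h1.le
    have e2 : Γ.n (i+1) = 2^(s+1) * Γ.t k := by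
      rw [show i + 1 = Γ.B k + (s+1) by omega]
      exact Γ.n_run k (s+1) (by omega)
    rw [e1, e2, pow_succ]
    ring
  rcases Nat.eq_or_lt_of_le h1 with h2 | h2
  · right; right
    refine ⟨k, by omega, ?_⟩
    have e1 : Γ.n i = 2^(Γ.T k) * Γ.t k := by
      rw [← heq, h2]; exact Γ.n_run k s h2.ge
    have e2 : Γ.n (i+1) = Γ.w k * Γ.p ^ 0 * 2^(Γ.a * (Γ.S - 0)) * Γ.t k := by
      rw [show i + 1 = Γ.B k + Γ.T k + 1 + 0 by omega]
      exact Γ.n_rec k 0 (by omega)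
    rw [e1, e2]
    simp only [pow_zero, Nat.sub_zero]
    have hT : (2:ℕ)^(Γ.T k) = 2^(k+Γ.c0) * 2^(Γ.a * Γ.S) := by
      rw [show Γ.T k = k + Γ.c0 + Γ.a * Γ.S from rfl, pow_add]
    rw [hT]
    ring
  · right; left
    have hsL : s < Γ.L k := hlt
    have hrS : s - (Γ.T k + 1) < Γ.S := by unfold L at hsL; omega
    set r := s - (Γ.T k + 1) with hrr
    have e1 : Γ.n i = Γ.w k * Γ.p ^ r * 2 ^ (Γ.a * (Γ.S - r)) * Γ.t k := by
      rw [show i = Γ.B k + Γ.T k + 1 + r by omega]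
      exact Γ.n_rec k r (by omega)
    have e2 : Γ.n (i+1) = Γ.w k * Γ.p ^ (r+1) * 2 ^ (Γ.a * (Γ.S - (r+1))) * Γ.t k := by
      rw [show i + 1 = Γ.B k + Γ.T k + 1 + (r+1) by omega]
      exact Γ.n_rec k (r+1) (by omega)
    rw [e1, e2]
    have hexp : Γ.a * (Γ.S - r) = Γ.a + Γ.a * (Γ.S - (r+1)) := by
      have h3 : Γ.S - r = (Γ.S - (r+1)) + 1 := by omega
      rw [h3]; ring
    rw [hexp, pow_add, pow_succ]
    ring

lemma ratio_le2 (hp2 : Γ.p ≤ 2^(Γ.a+1)) (i : ℕ) (h : ∀ k, i ≠ Γ.B k + Γ.T k) :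
    Γ.n (i+1) ≤ 2 * Γ.n i := by
  rcases Γ.ratio_cases i with h1 | h1 | ⟨k, hk, _⟩
  · omega
  · have : 2^Γ.a * Γ.n (i+1) ≤ 2^Γ.a * (2 * Γ.n i) := by
      calc 2^Γ.a * Γ.n (i+1) = Γ.p * Γ.n i := h1
        _ ≤ 2^(Γ.a+1) * Γ.n i := Nat.mul_le_mul_right _ hp2
        _ = 2^Γ.a * (2 * Γ.n i) := by rw [pow_succ]; ring
    exact Nat.le_of_mul_le_mul_left this (Nat.pow_pos (by omega))
  · exact absurd hk (h k)

lemma lacunary (lam : ℝ) (hlam2 : lam ≤ 2) (hρ1 : lam * (2:ℝ)^Γ.a ≤ (Γ.p:ℝ))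
    (hΛ : 2 ≤ Γ.Lam) (hp : 0 < Γ.p) (i : ℕ) :
    lam * (Γ.n i : ℝ) ≤ (Γ.n (i+1) : ℝ) := by
  have hnpos : (0:ℝ) < Γ.n i := by exact_mod_cast Γ.n_pos hp i
  rcases Γ.ratio_cases i with h1 | h1 | ⟨k, hk, h1⟩
  · have : (Γ.n (i+1) : ℝ) = 2 * Γ.n i := by exact_mod_cast h1
    nlinarith
  · have h2 : (2:ℝ)^Γ.a * Γ.n (i+1) = Γ.p * Γ.n i := by exact_mod_cast h1
    have h3 : (0:ℝ) < 2^Γ.a := by positivity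
    nlinarith
  · have h2 : (2:ℝ)^(k+Γ.c0) * Γ.n (i+1) = Γ.w k * Γ.n i := by exact_mod_cast h1
    have h3 := Γ.w_lower k
    have h4 : (0:ℝ) < 2^(k+Γ.c0) := by positivity
    have h5 : Γ.Lam * 2 ^ (k + Γ.c0) * (Γ.n i:ℝ) ≤ (Γ.w k : ℝ) * Γ.n i :=
      mul_le_mul_of_nonneg_right h3.le hnpos.le
    rw [← h2] at h5
    have h7 : lam * 2^(k+Γ.c0) ≤ Γ.Lam * 2^(k+Γ.c0) :=
      mul_le_mul_of_nonneg_right (hlam2.trans hΛ) (by positivity)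
    have h8 : (2:ℝ)^(k+Γ.c0) * (lam * Γ.n i) ≤ 2^(k+Γ.c0) * (Γ.n (i+1)) := by
      have h9 : lam * 2^(k+Γ.c0) * (Γ.n i:ℝ) ≤ Γ.Lam * 2^(k+Γ.c0) * Γ.n i :=
        mul_le_mul_of_nonneg_right h7 hnpos.le
      nlinarith
    exact (mul_le_mul_iff_right₀ h4).mp h8

lemma jump_big (hp : 0 < Γ.p) (k : ℕ) :
    Γ.Lam * (Γ.n (Γ.B k + Γ.T k) : ℝ) < (Γ.n (Γ.B k + Γ.T k + 1) : ℝ) := by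
  have e1 : Γ.n (Γ.B k + Γ.T k) = 2^(Γ.T k) * Γ.t k := Γ.n_run k _ le_rfl
  have e2 : Γ.n (Γ.B k + Γ.T k + 1) = Γ.w k * Γ.p ^ 0 * 2^(Γ.a * (Γ.S - 0)) * Γ.t k := by
    rw [show Γ.B k + Γ.T k + 1 = Γ.B k + Γ.T k + 1 + 0 by omega]
    exact Γ.n_rec k 0 (by omega)
  have ht : (0:ℝ) < Γ.t k := by exact_mod_cast Γ.t_pos hp k
  have h3 := Γ.w_lower k
  rw [e1, e2]
  simp only [pow_zero, Nat.sub_zero]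
  push_cast
  have hT : (2:ℝ)^(Γ.T k) = 2^(k+Γ.c0) * 2^(Γ.a * Γ.S) := by
    rw [show Γ.T k = k + Γ.c0 + Γ.a * Γ.S from rfl, pow_add]
  rw [hT]
  have h6 : Γ.Lam * 2^(k+Γ.c0) * ((2:ℝ)^(Γ.a*Γ.S) * (Γ.t k:ℝ)) < Γ.w k * (2^(Γ.a*Γ.S) * Γ.t k) := by
    apply mul_lt_mul_of_pos_right h3
    positivity
  nlinarith [h6]

lemma φ_dvd (k s : ℕ) (hs : s < Γ.L k) : Γ.φ k s ∣ 2^(Γ.T k) * Γ.t (k+1) := by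
  unfold φ
  split_ifs with h
  · exact mul_dvd_mul (pow_dvd_pow 2 h) (Γ.t_dvd_succ k)
  · have hsL : s < Γ.L k := hs
    unfold L at hsL
    set r := s - (Γ.T k + 1) with hrr
    have hr : r ≤ Γ.S := by omega
    have key : Γ.w k * Γ.p ^ r * 2 ^ (Γ.a * (Γ.S - r)) * Γ.t k ∣
        2^(Γ.T k) * (Γ.w k * Γ.p ^ Γ.S * Γ.t k) := by
      have h1 : Γ.p ^ r ∣ Γ.p ^ Γ.S := pow_dvd_pow _ hr
      have h2 : (2:ℕ) ^ (Γ.a * (Γ.S - r)) ∣ 2^(Γ.T k) := by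
        apply pow_dvd_pow
        have : Γ.a * (Γ.S - r) ≤ Γ.a * Γ.S := Nat.mul_le_mul_left _ (by omega)
        unfold T
        omega
      calc Γ.w k * Γ.p ^ r * 2 ^ (Γ.a * (Γ.S - r)) * Γ.t k
          ∣ Γ.w k * Γ.p ^ Γ.S * 2 ^ (Γ.T k) * Γ.t k := by
            exact mul_dvd_mul (mul_dvd_mul (mul_dvd_mul dvd_rfl h1) h2) dvd_rfl
        _ = 2^(Γ.T k) * (Γ.w k * Γ.p ^ Γ.S * Γ.t k) := by ring
    rw [t_succ]
    exact key

lemma n_dvd (k' i : ℕ) (hi : i < Γ.B k') : Γ.n i ∣ 2^(Γ.T k') * Γ.t k' := by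
  obtain ⟨hlt, heq⟩ := Γ.pos_valid i
  set k := (Γ.pos i).1 with hk
  set s := (Γ.pos i).2 with hs
  have hkk : k < k' := by
    by_contra hcon
    push_neg at hcon
    have := Γ.B_mono hcon
    omega
  have h1 : Γ.n i ∣ 2^(Γ.T k) * Γ.t (k+1) := Γ.φ_dvd k s hlt
  have h2 : 2^(Γ.T k) * Γ.t (k+1) ∣ 2^(Γ.T k') * Γ.t k' :=
    mul_dvd_mul (pow_dvd_pow 2 (Γ.T_mono hkk.le)) (Γ.t_dvd_mono hkk)
  exact h1.trans h2


variable {q : ℚ}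

/-- the geometric sum used in the recovery estimate -/
noncomputable def GSq : ℚ := ∑ r ∈ range (Γ.S+1), ((2:ℚ)^Γ.a / Γ.p)^r

lemma GSq_pos (hp : 0 < Γ.p) : 0 < Γ.GSq := by
  unfold GSq
  apply sum_pos
  · intro r hr
    have : (0:ℚ) < (2:ℚ)^Γ.a / Γ.p := by
      apply div_pos (by positivity)
      exact_mod_cast hp
    positivity
  · exact nonempty_range_add_one

lemma J_strictMono : StrictMono (fun k => Γ.B k + Γ.T k) := by
  apply strictMono_nat_of_lt_succ
  intro k
  have h1 := Γ.B_succ k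
  have h2 : Γ.L k = Γ.T k + Γ.S + 1 := rfl
  have h3 : Γ.T k ≤ Γ.T (k+1) := Γ.T_mono (by omega)
  omega

lemma recovery (hp : 0 < Γ.p) (hq : 0 ≤ q) (k : ℕ)
    (hwUq : (Γ.w k : ℚ) < Γ.GSq * 2^(k+Γ.c0))
    (hP : gr Γ.n q (Γ.B k + Γ.T k + 1) < 1 / (Γ.n (Γ.B k + Γ.T k) : ℚ)) :
    ∃ i, Γ.B k + Γ.T k < i ∧ i ≤ Γ.B (k+1) ∧ ¬ (1/(Γ.n i:ℚ) ≤ gr Γ.n q i) := by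
  by_contra hcon
  push_neg at hcon
  set x := Γ.B k + Γ.T k + 1 with hx
  have hall : ∀ r, r < Γ.S + 1 → 1/(Γ.n (x+r):ℚ) ≤ gr Γ.n q (x+r) := by
    intro r hr
    apply hcon (x+r) (by omega)
    rw [B_succ]
    show Γ.B k + Γ.T k + 1 + r ≤ Γ.B k + Γ.L k
    have : Γ.L k = Γ.T k + Γ.S + 1 := rfl
    omega
  have heat := gr_eat (nn := Γ.n) (q := q) x (Γ.S+1) hall
  have htpos : (0:ℚ) < Γ.t k := by exact_mod_cast Γ.t_pos hp k
  have hwpos : (0:ℚ) < Γ.w k := by exact_mod_cast Γ.w_pos k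
  have hppos : (0:ℚ) < Γ.p := by exact_mod_cast hp
  have hterm : ∀ r ∈ range (Γ.S+1), (1:ℚ)/(Γ.n (x+r)) =
      ((2:ℚ)^Γ.a/Γ.p)^r * (1/(Γ.w k * 2^(Γ.a*Γ.S) * Γ.t k)) := by
    intro r hr
    have hrS : r ≤ Γ.S := by have := mem_range.mp hr; omega
    have hn : (Γ.n (x+r) : ℚ) = Γ.w k * Γ.p^r * 2^(Γ.a*(Γ.S-r)) * Γ.t k := by
      rw [show x + r = Γ.B k + Γ.T k + 1 + r by omega, Γ.n_rec k r hrS]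
      push_cast
      ring
    have hpow : (2:ℚ)^(Γ.a*(Γ.S - r)) * 2^(Γ.a*r) = 2^(Γ.a*Γ.S) := by
      rw [← pow_add, ← Nat.mul_add, Nat.sub_add_cancel hrS]
    rw [hn, div_pow, eq_comm]
    have h1 : ((2:ℚ)^Γ.a)^r = 2^(Γ.a*r) := by rw [← pow_mul]
    rw [h1, div_mul_div_comm]
    rw [div_eq_div_iff (by positivity) (by positivity)]
    ring_nf
    linear_combination (↑(Γ.w k) * (↑Γ.p:ℚ)^r * ↑(Γ.t k)) * hpow
  have hsum : ∑ r ∈ range (Γ.S+1), (1:ℚ)/(Γ.n (x+r)) =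
      Γ.GSq * (1/(Γ.w k * 2^(Γ.a*Γ.S) * Γ.t k)) := by
    rw [sum_congr rfl hterm, ← sum_mul]
    rfl
  have hnJ : (Γ.n (Γ.B k + Γ.T k) : ℚ) = 2^(Γ.T k) * Γ.t k := by
    rw [Γ.n_run k _ le_rfl]; push_cast; ring
  have hGpos := Γ.GSq_pos hp
  have hge : 1/(Γ.n (Γ.B k + Γ.T k):ℚ) ≤ ∑ r ∈ range (Γ.S+1), (1:ℚ)/(Γ.n (x+r)) := by
    rw [hsum, hnJ]
    rw [mul_one_div, div_le_div_iff₀ (by positivity) (by positivity)]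
    have hTk : (2:ℚ)^(Γ.T k) = 2^(k+Γ.c0) * 2^(Γ.a*Γ.S) := by
      rw [show Γ.T k = k + Γ.c0 + Γ.a * Γ.S from rfl, pow_add]
    rw [hTk]
    have hmul : (Γ.w k : ℚ) * (2^(Γ.a*Γ.S) * Γ.t k) <
        Γ.GSq * 2^(k+Γ.c0) * (2^(Γ.a*Γ.S) * Γ.t k) :=
      mul_lt_mul_of_pos_right hwUq (by positivity)
    nlinarith [hmul]
  have hfin : gr Γ.n q (x + (Γ.S+1)) < 0 := by
    rw [heat]
    linarith
  exact absurd (gr_nonneg hq (x + (Γ.S+1))) (by linarith)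

lemma key2 (hp : 0 < Γ.p) (hp2 : Γ.p ≤ 2^(Γ.a+1)) (hq : 0 ≤ q)
    (hwUq : ∀ k, (Γ.w k : ℚ) < Γ.GSq * 2^(k+Γ.c0)) :
    ∀ k, (∃ i, i ≤ Γ.B k + Γ.T k ∧ ¬(1/(Γ.n i:ℚ) ≤ gr Γ.n q i)) →
    ∃ i, Γ.B k + Γ.T k < i ∧ i ≤ Γ.B (k+1) ∧ ¬(1/(Γ.n i:ℚ) ≤ gr Γ.n q i) := by
  intro k
  induction k using Nat.strong_induction_on with
  | _ k IH =>
    rintro ⟨i0, hi0, hskip0⟩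
    set sk : ℕ → Prop := fun i => ¬ (1/(Γ.n i:ℚ) ≤ gr Γ.n q i) with hsk
    have hdec : DecidablePred sk := fun i => instDecidableNot
    set istar := Nat.findGreatest sk (Γ.B k + Γ.T k) with his
    have hstar : sk istar := Nat.findGreatest_spec hi0 hskip0
    have hstarle : istar ≤ Γ.B k + Γ.T k := Nat.findGreatest_le _
    by_cases hex : ∃ j, j < k ∧ istar ≤ Γ.B j + Γ.T j
    · obtain ⟨j, hj, hij⟩ := hex
      obtain ⟨i', h1', h2', h3'⟩ := IH j hj ⟨istar, hij, hstar⟩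
      exfalso
      have hi'le : i' ≤ Γ.B k + Γ.T k := by
        have := Γ.B_mono (show j + 1 ≤ k by omega)
        omega
      exact Nat.findGreatest_is_greatest (by omega : istar < i') hi'le h3'
    · push_neg at hex
      have hP : Pinv (nn := Γ.n) (q := q) (Γ.B k + Γ.T k) := by
        have hPstar : Pinv (nn := Γ.n) (q := q) istar := P_of_skip hstar
        have hprop := P_prop (nn := Γ.n) (q := q) istar (Γ.n_pos hp)
          ((Γ.B k + Γ.T k) - istar) hPstar ?_
        · rwa [Nat.add_sub_cancel' hstarle] at hprop
        · intro jj hjj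
          apply Γ.ratio_le2 hp2
          intro k'' hk''
          have hlt : Γ.B k'' + Γ.T k'' < Γ.B k + Γ.T k := by omega
          have hk''k : k'' < k := by
            by_contra hc
            push_neg at hc
            have := Γ.J_strictMono.le_iff_le.mpr hc
            omega
          have := hex k'' hk''k
          omega
      exact Γ.recovery hp hq k (hwUq k) hP


lemma exists_binary : ∀ (W b : ℕ), b < 2^W → ∃ E : Finset ℕ, E ⊆ range W ∧ ∑ s ∈ E, 2^s = b
  | 0, b, hb => ⟨∅, by simp, by simp; omega⟩
  | (W+1), b, hb => by
      rcases Nat.lt_or_ge b (2^W) with h | h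
      · obtain ⟨E, hE, hsum⟩ := exists_binary W b h
        exact ⟨E, hE.trans (range_subset_range.mpr (by omega)), hsum⟩
      · have hb2 : b - 2^W < 2^W := by
          rw [pow_succ] at hb; omega
        obtain ⟨E, hE, hsum⟩ := exists_binary W (b - 2^W) hb2
        have hWE : W ∉ E := fun hW => absurd (mem_range.mp (hE hW)) (lt_irrefl W)
        refine ⟨insert W E, ?_, ?_⟩
        · rw [insert_subset_iff]
          exact ⟨mem_range.mpr (by omega), hE.trans (range_subset_range.mpr (by omega))⟩
        · rw [sum_insert hWE, hsum]
          omega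

lemma gr_mul_int {nn : ℕ → ℕ} {q : ℚ} (hpos : ∀ i, 0 < nn i) (N : ℕ)
    (hden : (q.den : ℕ) ∣ N) :
    ∀ j, (∀ i, i < j → nn i ∣ N) → ∃ z : ℤ, gr nn q j * N = z
  | 0, _ => by
      obtain ⟨m, hm⟩ := hden
      refine ⟨q.num * m, ?_⟩
      show q * N = _
      have hden0 : (q.den : ℚ) ≠ 0 := by
        exact_mod_cast q.den_nz
      rw [hm]
      push_cast
      rw [show ((q.den:ℚ)) * m = (q.den:ℚ) * m from rfl, ← mul_assoc, Rat.mul_den_eq_num]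
  | (j+1), h => by
      obtain ⟨z, hz⟩ := gr_mul_int hpos N hden j (fun i hi => h i (by omega))
      obtain ⟨m, hm⟩ := h j (by omega)
      have hnj : ((nn j : ℚ)) ≠ 0 := by
        have := hpos j
        positivity
      have h2 : ((N:ℚ)) = (nn j : ℚ) * m := by exact_mod_cast hm
      rw [gr_succ]
      split_ifs with hu
      · refine ⟨z - m, ?_⟩
        have h3 : (1:ℚ)/(nn j) * N = m := by
          rw [h2]; field_simp
        push_cast
        rw [sub_mul]
        linear_combination hz - h3
      · exact ⟨z, hz⟩

lemma represent (hp : 0 < Γ.p) (hp2 : Γ.p ≤ 2^(Γ.a+1)) (hS : 1 ≤ Γ.S) (hq : 0 ≤ q)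
    (hwUq : ∀ k, (Γ.w k : ℚ) < Γ.GSq * 2^(k+Γ.c0))
    (k0 : ℕ) (hden : q.den ≤ k0 + 1)
    (hsk : ∃ i, i ≤ Γ.B k0 + Γ.T k0 ∧ ¬(1/(Γ.n i:ℚ) ≤ gr Γ.n q i)) :
    ∃ Sf : Finset ℕ, q = ∑ i ∈ Sf, 1/(Γ.n i:ℚ) := by
  obtain ⟨i', h1', h2', h3'⟩ := Γ.key2 hp hp2 hq hwUq k0 hsk
  set k1 := k0 + 1 with hk1
  set j := Γ.B k1 with hj
  have hjeq : j = Γ.B k1 := hj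
  set N := 2^(Γ.T k1) * Γ.t k1 with hN
  have htpos : (0:ℚ) < Γ.t k1 := by exact_mod_cast Γ.t_pos hp k1
  have hBsucc : Γ.B k1 = Γ.B k0 + Γ.L k0 := by rw [hk1]; exact Γ.B_succ k0
  have hLk0 : Γ.L k0 = Γ.T k0 + Γ.S + 1 := rfl
  -- step 1 : gr j < 2 / t k1
  have hgr2 : gr Γ.n q j < 2 / (Γ.t k1 : ℚ) := by
    rcases Nat.eq_or_lt_of_le h2' with heq | hlt
    · have hlt1 : gr Γ.n q j < 1/(Γ.n j:ℚ) := by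
        rw [heq] at h3'
        exact lt_of_not_ge h3'
      rw [Γ.n_B k1] at hlt1
      have h12 : (1:ℚ)/(Γ.t k1) ≤ 2/(Γ.t k1) := by gcongr <;> norm_num
      linarith
    · have hPi : Pinv (nn := Γ.n) (q := q) i' := P_of_skip h3'
      have hedges : ∀ jj, jj < (j-1) - i' → Γ.n (i' + jj + 1) ≤ 2 * Γ.n (i' + jj) := by
        intro jj hjj
        apply Γ.ratio_le2 hp2
        intro k'' hk''
        have hge : Γ.B k'' + Γ.T k'' > Γ.B k0 + Γ.T k0 := by omega
        have hk''k : k0 < k'' := by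
          by_contra hc
          push_neg at hc
          have := Γ.J_strictMono.le_iff_le.mpr hc
          omega
        have : Γ.B k1 ≤ Γ.B k'' := Γ.B_mono (by omega)
        omega
      have hprop := P_prop (nn := Γ.n) (q := q) i' (Γ.n_pos hp) ((j-1) - i') hPi hedges
      have hend : i' + ((j-1) - i') = j - 1 := by omega
      rw [hend] at hprop
      have hgr : gr Γ.n q j < 1/(Γ.n (j-1) : ℚ) := by
        have := hprop
        unfold Pinv at this
        rwa [show (j-1)+1 = j by omega] at this
      have hidx : j - 1 = Γ.B k0 + Γ.T k0 + 1 + (Γ.S - 1) := by omega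
      have hn1 : Γ.n (j-1) = Γ.w k0 * Γ.p^(Γ.S-1) * 2^(Γ.a*(Γ.S-(Γ.S-1))) * Γ.t k0 := by
        rw [hidx]
        exact Γ.n_rec k0 (Γ.S-1) (by omega)
      have hkey : Γ.t k1 ≤ 2 * Γ.n (j-1) := by
        rw [hn1, t_succ]
        have hSm : Γ.S - (Γ.S - 1) = 1 := by omega
        rw [hSm]
        have hps : Γ.p^Γ.S = Γ.p^(Γ.S-1) * Γ.p := by
          rw [← pow_succ]
          congr 1
          omega
        rw [hps]
        calc Γ.w k0 * (Γ.p^(Γ.S-1)*Γ.p) * Γ.t k0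
            ≤ Γ.w k0 * (Γ.p^(Γ.S-1)*(2^(Γ.a+1))) * Γ.t k0 := by gcongr
          _ = 2 * (Γ.w k0 * Γ.p^(Γ.S-1) * 2^(Γ.a*1) * Γ.t k0) := by
              rw [Nat.mul_one, pow_succ]
              ring
      have hnn : (0:ℚ) < Γ.n (j-1) := by exact_mod_cast Γ.n_pos hp (j-1)
      have h2t : (1:ℚ)/(Γ.n (j-1)) ≤ 2/(Γ.t k1) := by
        rw [div_le_div_iff₀ hnn htpos]
        have : (Γ.t k1:ℚ) ≤ 2 * Γ.n (j-1) := by exact_mod_cast hkey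
        linarith
      linarith
  -- step 2 : integrality
  have hdvdall : ∀ i, i < j → Γ.n i ∣ N := fun i hi => Γ.n_dvd k1 i hi
  have hdenN : (q.den:ℕ) ∣ N := by
    have hd1 : q.den ∣ Nat.factorial k1 := Nat.dvd_factorial q.den_pos (by omega)
    exact hd1.trans ((Γ.factorial_dvd_t k1).trans (dvd_mul_left _ _))
  obtain ⟨z, hz⟩ := gr_mul_int (nn := Γ.n) (q := q) (Γ.n_pos hp) N hdenN j hdvdall
  have hNpos : (0:ℚ) < N := by
    have := Γ.t_pos hp k1
    have hN2 : 0 < N := by positivity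
    exact_mod_cast hN2
  have hNne : (N:ℚ) ≠ 0 := hNpos.ne'
  have hzpos : 0 ≤ z := by
    have hzq : (0:ℚ) ≤ z := by
      rw [← hz]
      exact mul_nonneg (gr_nonneg hq j) hNpos.le
    exact_mod_cast hzq
  set b := z.toNat with hb
  have hbz : (b:ℤ) = z := Int.toNat_of_nonneg hzpos
  have hbq : (b:ℚ) = gr Γ.n q j * N := by
    rw [hz]
    exact_mod_cast congrArg (fun x : ℤ => (x:ℚ)) hbz
  have hblt : b < 2^(Γ.T k1 + 1) := by
    have hq2 : (b:ℚ) < 2^(Γ.T k1 + 1) := by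
      rw [hbq]
      have hm1 : gr Γ.n q j * N < (2/(Γ.t k1:ℚ)) * N := mul_lt_mul_of_pos_right hgr2 hNpos
      have hNt : (2/(Γ.t k1:ℚ)) * N = 2^(Γ.T k1 + 1) := by
        rw [hN]
        push_cast
        field_simp
        ring
      linarith
    exact_mod_cast hq2
  obtain ⟨E, hE, hEsum⟩ := exists_binary (Γ.T k1 + 1) b hblt
  set F1 := (range j).filter (fun i => 1/(Γ.n i:ℚ) ≤ gr Γ.n q i) with hF1
  set F2 := E.image (fun s => j + (Γ.T k1 - s)) with hF2
  have hdisj : Disjoint F1 F2 := by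
    rw [disjoint_left]
    intro x hx1 hx2
    have hxj : x < j := mem_range.mp (mem_filter.mp hx1).1
    obtain ⟨s, _, hsx⟩ := mem_image.mp hx2
    omega
  refine ⟨F1 ∪ F2, ?_⟩
  rw [sum_union hdisj]
  have hsum1 : ∑ i ∈ F1, 1/(Γ.n i:ℚ) = q - gr Γ.n q j := by
    have := gr_sum (nn := Γ.n) (q := q) j
    rw [hF1]
    linarith
  have hsum2 : ∑ i ∈ F2, 1/(Γ.n i:ℚ) = gr Γ.n q j := by
    rw [hF2, sum_image (by
      intro x hx y hy hxy
      have hx' := mem_range.mp (hE hx)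
      have hy' := mem_range.mp (hE hy)
      simp only at hxy
      omega)]
    have hterm : ∀ s ∈ E, (1:ℚ)/(Γ.n (j + (Γ.T k1 - s))) = 2^s / N := by
      intro s hs
      have hsT : s ≤ Γ.T k1 := by have := mem_range.mp (hE hs); omega
      have hns : Γ.n (j + (Γ.T k1 - s)) = 2^(Γ.T k1 - s) * Γ.t k1 := Γ.n_run k1 _ (by omega)
      rw [hns, hN]
      push_cast
      rw [div_eq_div_iff (by positivity) (by positivity)]
      have hpw : (2:ℚ)^s * 2^(Γ.T k1 - s) = 2^(Γ.T k1) := by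
        rw [← pow_add]
        congr 1
        omega
      linear_combination (-(Γ.t k1:ℚ)) * hpw
    rw [sum_congr rfl hterm, ← sum_div]
    have hcast : (∑ s ∈ E, (2:ℚ)^s) = b := by
      rw [← hEsum]
      push_cast
      rfl
    rw [hcast, div_eq_iff hNne]
    linarith [hbq]
  rw [hsum1, hsum2]
  ring_nf


end Pa

lemma exists_dyadic_btwn {x y : ℝ} (hx : 0 ≤ x) (hxy : x < y) :
    ∃ p a : ℕ, x < (p:ℝ)/2^a ∧ (p:ℝ)/2^a < y := by
  obtain ⟨a, ha⟩ := exists_pow_lt_of_lt_one (show (0:ℝ) < y - x by linarith)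
    (show (1/2:ℝ) < 1 by norm_num)
  have h2a : (0:ℝ) < 2^a := by positivity
  have hha : 1/(2:ℝ)^a < y - x := by
    have : ((1:ℝ)/2)^a = 1/2^a := by rw [div_pow, one_pow]
    linarith [this ▸ ha]
  refine ⟨⌊x*2^a⌋₊ + 1, a, ?_, ?_⟩
  · rw [lt_div_iff₀ h2a]
    have := Nat.lt_succ_floor (x*2^a)
    push_cast at this ⊢
    linarith
  · rw [div_lt_iff₀ h2a]
    have h1 : (⌊x*2^a⌋₊ : ℝ) ≤ x*2^a := Nat.floor_le (by positivity)
    have h2 : 1 < (y-x)*2^a := by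
      rw [div_lt_iff₀ h2a] at hha
      linarith [hha]
    push_cast
    nlinarith

end Stmt7Aux

open Stmt7Aux Stmt7Aux.Pa Finset in
/-- For every real `Λ ≥ 2` and every real `λ` with
`1 < λ < Λ / (Λ - 1)` there exists a `λ`-lacunary strictly increasing sequence
of positive integers `(n_i)` such that `n (i+1) > Λ * n i` for infinitely many
indices `i`, and every rational `q` with `0 ≤ q < ∑_i 1 / n_i` is a finite sum
`∑_{i ∈ S} 1 / n i`. -/
theorem stmt7 (Lam lam : ℝ) (hLam : 2 ≤ Lam) (hlam1 : 1 < lam)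
    (hlam2 : lam < Lam / (Lam - 1)) :
    ∃ n : ℕ → ℕ, StrictMono n ∧ (∀ i, 0 < n i) ∧
      (∀ i, lam * (n i : ℝ) ≤ (n (i + 1) : ℝ)) ∧
      {i : ℕ | Lam * (n i : ℝ) < (n (i + 1) : ℝ)}.Infinite ∧
      (∀ q : ℚ, 0 ≤ q → (q : ℝ) < ∑' i, (1 : ℝ) / (n i) →
        ∃ S : Finset ℕ, q = ∑ i ∈ S, (1 : ℚ) / (n i)) := by
  have hLam1 : (0:ℝ) < Lam - 1 := by linarith
  have hlam2' : Lam/(Lam-1) ≤ 2 := by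
    rw [div_le_iff₀ hLam1]; linarith
  have hlamlt2 : lam < 2 := lt_of_lt_of_le hlam2 hlam2'
  obtain ⟨p, a, hpa1, hpa2⟩ := exists_dyadic_btwn (x := lam) (y := Lam/(Lam-1))
    (by linarith) hlam2
  have h2apos : (0:ℝ) < 2^a := by positivity
  have hppos : (0:ℝ) < p := by
    have h := lt_trans (by linarith : (0:ℝ) < lam) hpa1
    have h2 : (p:ℝ)/2^a * 2^a = p := div_mul_cancel₀ _ h2apos.ne'
    nlinarith
  have hp1 : 2^a < p := by
    have h1 : (2:ℝ)^a < p := by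
      have h2 : 1 < (p:ℝ)/2^a := lt_trans hlam1 hpa1
      rw [lt_div_iff₀ h2apos] at h2
      linarith
    exact_mod_cast (by push_cast; exact h1 : ((2^a : ℕ):ℝ) < (p:ℝ))
  have hp2 : p ≤ 2^(a+1) := by
    have hr : (p:ℝ) < 2^(a+1) := by
      have h3 : (p:ℝ)/2^a < 2 := lt_of_lt_of_le hpa2 hlam2'
      rw [div_lt_iff₀ h2apos] at h3
      rw [pow_succ]
      linarith
    have : p < 2^(a+1) := by exact_mod_cast (by push_cast; exact hr : (p:ℝ) < ((2^(a+1):ℕ):ℝ))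
    omega
  set x : ℝ := (2:ℝ)^a/(p:ℝ) with hxdef
  have hx0 : 0 < x := by positivity
  have hx1 : x < 1 := by
    rw [hxdef, div_lt_one hppos]
    exact_mod_cast (by push_cast; exact_mod_cast hp1 : ((2^a:ℕ):ℝ) < (p:ℝ))
  have hLx : Lam * (1 - x) < 1 := by
    rw [div_lt_div_iff₀ h2apos hLam1] at hpa2
    have hxx : x * p = 2^a := by rw [hxdef]; field_simp
    nlinarith
  obtain ⟨m, hm⟩ := exists_pow_lt_of_lt_one (show (0:ℝ) < 1 - Lam*(1-x) by linarith) hx1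
  set S := max m 1 with hSdef
  have hS1 : 1 ≤ S := le_max_right _ _
  have hxS : x^(S+1) < 1 - Lam*(1-x) := by
    have h1 : x^(S+1) ≤ x^m := pow_le_pow_of_le_one hx0.le hx1.le (by omega)
    linarith
  set GSr : ℝ := ∑ r ∈ range (S+1), x^r with hGSr
  have hGS : Lam < GSr := by
    rw [hGSr, geom_sum_eq hx1.ne]
    rw [show x^(S+1)-1 = -(1-x^(S+1)) by ring, show x-1 = -(1-x) by ring, neg_div_neg_eq]
    rw [lt_div_iff₀ (by linarith : (0:ℝ) < 1 - x)]
    linarith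
  obtain ⟨c0, hc0⟩ := exists_pow_lt_of_lt_one (show (0:ℝ) < GSr - Lam by linarith)
    (show (1/2:ℝ) < 1 by norm_num)
  have hc0' : 1/(2:ℝ)^c0 < GSr - Lam := by
    have : ((1:ℝ)/2)^c0 = 1/2^c0 := by rw [div_pow, one_pow]
    linarith [this ▸ hc0]
  set Γ : Pa := ⟨p, a, S, c0, Lam⟩ with hΓ
  have hpΓ : 0 < Γ.p := by show 0 < p; have := Nat.pow_pos (n := a) (show 0 < 2 by omega); omega
  have hGSq : ((Γ.GSq : ℚ) : ℝ) = GSr := by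
    show (((∑ r ∈ range (S+1), ((2:ℚ)^a / p)^r : ℚ)) : ℝ) = ∑ r ∈ range (S+1), x^r
    push_cast
    rfl
  have hwU : ∀ k, (Γ.w k : ℝ) < GSr * 2^(k+c0) := by
    intro k
    have h1 := Γ.w_upper k (by linarith : 0 ≤ Γ.Lam)
    have h2 : ((k:ℝ)+1) ≤ 2^k := by
      have := Nat.lt_two_pow_self (n := k)
      exact_mod_cast (by push_cast; exact_mod_cast this : ((k+1:ℕ):ℝ) ≤ ((2^k:ℕ):ℝ))
    have h3 : (2:ℝ)^(k+c0) = 2^k * 2^c0 := pow_add 2 k c0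
    have h4 : (0:ℝ) < 2^k := by positivity
    have h5 : (0:ℝ) < 2^c0 := by positivity
    have h6 : (GSr - Lam) * 2^c0 > 1 := by
      rw [div_lt_iff₀ h5] at hc0'
      linarith
    have h7 : Γ.Lam = Lam := rfl
    rw [h7] at h1
    nlinarith
  have hwUq : ∀ k, (Γ.w k : ℚ) < Γ.GSq * 2^(k+Γ.c0) := by
    intro k
    have h1 : ((Γ.w k : ℚ) : ℝ) < ((Γ.GSq * 2^(k+Γ.c0) : ℚ) : ℝ) := by
      push_cast
      rw [hGSq]
      exact hwU k
    exact_mod_cast h1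
  have hρ1 : lam * (2:ℝ)^Γ.a ≤ (Γ.p:ℝ) := by
    show lam * (2:ℝ)^a ≤ (p:ℝ)
    rw [lt_div_iff₀ h2apos] at hpa1
    linarith
  have lacΓ : ∀ i, lam * (Γ.n i : ℝ) ≤ (Γ.n (i+1) : ℝ) :=
    Γ.lacunary lam hlamlt2.le hρ1 hLam hpΓ
  refine ⟨Γ.n, ?_, Γ.n_pos hpΓ, lacΓ, ?_, ?_⟩
  · apply strictMono_nat_of_lt_succ
    intro i
    have h1 : (Γ.n i : ℝ) < lam * Γ.n i := by
      have := Γ.n_pos hpΓ i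
      nlinarith [(by exact_mod_cast this : (0:ℝ) < (Γ.n i:ℝ))]
    have : (Γ.n i : ℝ) < Γ.n (i+1) := lt_of_lt_of_le h1 (lacΓ i)
    exact_mod_cast this
  · exact Set.infinite_of_injective_forall_mem (f := fun k => Γ.B k + Γ.T k)
      Γ.J_strictMono.injective (fun k => Γ.jump_big hpΓ k)
  · intro q hq0 hqlt
    have hn0 : Γ.n 0 = 1 := by
      have h1 : Γ.n (Γ.B 0) = Γ.t 0 := Γ.n_B 0
      rw [Γ.B_zero] at h1
      rw [h1, Γ.t_zero]
    have hgrow : ∀ i, lam^i ≤ (Γ.n i : ℝ) := by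
      intro i
      induction i with
      | zero => simp [hn0]
      | succ i IH =>
          have h1 : lam^(i+1) = lam * lam^i := by ring
          have h2 : lam * lam^i ≤ lam * Γ.n i :=
            mul_le_mul_of_nonneg_left IH (by linarith)
          linarith [lacΓ i]
    have hsumm : Summable (fun i => (1:ℝ)/Γ.n i) := by
      apply Summable.of_nonneg_of_le (fun i => by positivity)
        (g := fun i => (1:ℝ)/Γ.n i) (f := fun i => (1/lam)^i)
      · intro i
        have h1 : (0:ℝ) < lam^i := by positivity
        have h2 : (0:ℝ) < Γ.n i := by exact_mod_cast Γ.n_pos hpΓ i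
        rw [div_pow, one_pow]
        exact div_le_div_of_nonneg_left (by norm_num) h1 (hgrow i) |>.trans_eq rfl
      · exact summable_geometric_of_lt_one (by positivity) (by
          rw [div_lt_one (by linarith)]; linarith)
    have hex : ∃ i0, ¬(1/(Γ.n i0:ℚ) ≤ gr Γ.n q i0) := by
      by_contra hall
      push_neg at hall
      have hpart : ∀ I, ∑ i ∈ range I, (1:ℝ)/Γ.n i ≤ q := by
        intro I
        have h1 := gr_sum (nn := Γ.n) (q := q) I
        have h2 : (range I).filter (fun i => 1/(Γ.n i:ℚ) ≤ gr Γ.n q i) = range I :=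
          filter_true_of_mem (fun i _ => hall i)
        rw [h2] at h1
        have h3 : ∑ i ∈ range I, (1:ℚ)/(Γ.n i) ≤ q := by
          linarith [gr_nonneg (nn := Γ.n) hq0 I]
        calc ∑ i ∈ range I, (1:ℝ)/Γ.n i
            = ((∑ i ∈ range I, (1:ℚ)/Γ.n i : ℚ) : ℝ) := by push_cast; rfl
          _ ≤ q := by exact_mod_cast h3
      have htt := (hsumm.hasSum).tendsto_sum_nat
      have hle : (∑' i, (1:ℝ)/Γ.n i) ≤ q :=
        le_of_tendsto htt (Filter.Eventually.of_forall hpart)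
      linarith
    obtain ⟨i0, hi0⟩ := hex
    set k0 := max i0 q.den with hk0
    apply Γ.represent hpΓ hp2 hS1 hq0 hwUq k0 (by omega)
    refine ⟨i0, ?_, hi0⟩
    have h1 : i0 ≤ k0 := le_max_left _ _
    have h2 := Γ.le_B k0
    omega
end

section
/- Let Λ > 1 and λ ≥ Λ/(Λ−1) be real numbers, and let (n_i)_{i=1}^∞ be a λ-lacunary sequence of positive integers. If there exists an index i with n_{i+1} > Λ·n_i, then ∑_{j>i} 1/n_j < 1/n_i; consequently, the set of finite sums ∑_{j∈S} 1/n_j (S ⊂ ℕ finite) does not contain all rational numbers from the interval [0, ∑_{j=1}^∞ 1/n_j). -/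
/-- Let `Λ > 1` and `λ ≥ Λ / (Λ - 1)` be reals and let
`(n_i)` be a `λ`-lacunary sequence of positive integers. If `n (i+1) > Λ * n i`
for some index `i`, then `∑_{j > i} 1 / n j < 1 / n i`; consequently the set of
finite sums `∑_{j ∈ S} 1 / n j` does not contain all rationals from
`[0, ∑_j 1 / n j)`. -/
theorem stmt8 (Lam lam : ℝ) (hLam : 1 < Lam) (hlam : Lam / (Lam - 1) ≤ lam)
    (n : ℕ → ℕ) (hpos : ∀ i, 0 < n i)
    (hlac : ∀ i, lam * (n i : ℝ) ≤ (n (i + 1) : ℝ))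
    (i : ℕ) (hjump : Lam * (n i : ℝ) < (n (i + 1) : ℝ)) :
    (∑' j : ℕ, (1 : ℝ) / (n (i + 1 + j))) < 1 / (n i) ∧
      ¬ (∀ q : ℚ, 0 ≤ q → (q : ℝ) < ∑' j, (1 : ℝ) / (n j) →
          ∃ S : Finset ℕ, q = ∑ j ∈ S, (1 : ℚ) / (n j)) := by
  have hn : ∀ j, (0 : ℝ) < n j := fun j => by exact_mod_cast hpos j
  have hLam1 : (0 : ℝ) < Lam - 1 := by linarith
  have hlam1 : 1 < lam := by
    have : (1 : ℝ) < Lam / (Lam - 1) := (one_lt_div hLam1).2 (by linarith)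
    linarith
  have hmonoR : ∀ j, (n j : ℝ) < n (j + 1) := fun j => by
    have := hlac j
    nlinarith [hn j]
  have hmono : ∀ j k, j ≤ k → (n j : ℝ) ≤ n k := by
    intro j k hjk
    have : Monotone fun j => (n j : ℝ) :=
      monotone_nat_of_le_succ fun j => (hmonoR j).le
    exact this hjk
  have hgeo : ∀ a j, (n a : ℝ) * lam ^ j ≤ n (a + j) := by
    intro a j
    induction j with
    | zero => simp
    | succ j ih =>
      have h1 : (n a : ℝ) * lam ^ (j + 1) = ((n a : ℝ) * lam ^ j) * lam := by ring
      have h2 : ((n a : ℝ) * lam ^ j) * lam ≤ (n (a + j) : ℝ) * lam :=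
        mul_le_mul_of_nonneg_right ih (by linarith)
      have h3 : (n (a + j) : ℝ) * lam ≤ n (a + j + 1) := by
        have := hlac (a + j); linarith
      calc (n a : ℝ) * lam ^ (j + 1) = ((n a : ℝ) * lam ^ j) * lam := h1
        _ ≤ (n (a + j) : ℝ) * lam := h2
        _ ≤ n (a + j + 1) := h3
  have hr0 : (0 : ℝ) ≤ lam⁻¹ := by positivity
  have hr1 : lam⁻¹ < 1 := inv_lt_one_of_one_lt₀ hlam1
  have hlampos : (0 : ℝ) < lam := by linarith
  -- bound on each term of a tail starting at a
  have hbound : ∀ a j, (1 : ℝ) / n (a + j) ≤ lam⁻¹ ^ j * (1 / n a) := by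
    intro a j
    have h1 : (0 : ℝ) < (n a : ℝ) * lam ^ j := mul_pos (hn a) (pow_pos hlampos j)
    have h2 := hgeo a j
    have h3 : (1 : ℝ) / n (a + j) ≤ 1 / ((n a : ℝ) * lam ^ j) :=
      one_div_le_one_div_of_le h1 h2
    have h4 : (1 : ℝ) / ((n a : ℝ) * lam ^ j) = lam⁻¹ ^ j * (1 / n a) := by
      rw [one_div, mul_inv, ← inv_pow, one_div]; ring
    rw [← h4]; exact h3
  have hsummable_tail : ∀ a, Summable (fun j => (1 : ℝ) / n (a + j)) := by
    intro a
    apply Summable.of_nonneg_of_le (fun j => by positivity) (hbound a)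
    exact (summable_geometric_of_lt_one hr0 hr1).mul_right _
  have htail_le : ∀ a, (∑' j : ℕ, (1 : ℝ) / n (a + j)) ≤ (1 - lam⁻¹)⁻¹ * (1 / n a) := by
    intro a
    calc (∑' j : ℕ, (1 : ℝ) / n (a + j))
        ≤ ∑' j : ℕ, lam⁻¹ ^ j * (1 / n a) :=
          Summable.tsum_le_tsum (hbound a) (hsummable_tail a)
            ((summable_geometric_of_lt_one hr0 hr1).mul_right _)
      _ = (1 - lam⁻¹)⁻¹ * (1 / n a) := by
          rw [tsum_mul_right, tsum_geometric_of_lt_one hr0 hr1]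
  have hfrac : (1 - lam⁻¹)⁻¹ ≤ Lam := by
    have h1 : (0 : ℝ) < lam - 1 := by linarith
    have h2 : Lam ≤ lam * (Lam - 1) := (div_le_iff₀ hLam1).mp hlam
    have h3 : (1 - lam⁻¹)⁻¹ = lam / (lam - 1) := by
      field_simp
    rw [h3, div_le_iff₀ h1]
    nlinarith
  have part1 : (∑' j : ℕ, (1 : ℝ) / (n (i + 1 + j))) < 1 / (n i) := by
    have h1 : (∑' j : ℕ, (1 : ℝ) / n (i + 1 + j)) ≤ Lam * (1 / n (i + 1)) := by
      calc (∑' j : ℕ, (1 : ℝ) / n (i + 1 + j)) ≤ (1 - lam⁻¹)⁻¹ * (1 / n (i + 1)) :=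
            htail_le (i + 1)
        _ ≤ Lam * (1 / n (i + 1)) := by
            apply mul_le_mul_of_nonneg_right hfrac (by positivity)
    have h2 : Lam * (1 / (n (i + 1) : ℝ)) < 1 / n i := by
      rw [mul_one_div, div_lt_div_iff₀ (hn (i + 1)) (hn i)]
      nlinarith [hn i]
    linarith
  refine ⟨part1, ?_⟩
  intro h
  -- full sum summable
  have hsum_full : Summable (fun j => (1 : ℝ) / n j) := by
    have := hsummable_tail 0
    simpa using this
  have htot : (1 : ℝ) / n i < ∑' j, (1 : ℝ) / n j := by
    have hij : i ≠ i + 1 := by omega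
    have hs : ∑ j ∈ ({i, i + 1} : Finset ℕ), (1 : ℝ) / n j
        ≤ ∑' j, (1 : ℝ) / n j :=
      Summable.sum_le_tsum _ (fun j _ => by positivity) hsum_full
    rw [Finset.sum_pair hij] at hs
    have : (0 : ℝ) < 1 / n (i + 1) := one_div_pos.2 (hn (i + 1))
    linarith
  have hT0 : (0 : ℝ) ≤ ∑' j : ℕ, (1 : ℝ) / n (i + 1 + j) :=
    tsum_nonneg fun j => by positivity
  obtain ⟨q, hq1, hq2⟩ := exists_rat_btwn part1
  have hq0 : (0 : ℚ) ≤ q := by exact_mod_cast hT0.trans_lt hq1 |>.le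
  have hqtot : (q : ℝ) < ∑' j, (1 : ℝ) / n j := hq2.trans htot
  obtain ⟨S, hS⟩ := h q hq0 hqtot
  have hSr : (q : ℝ) = ∑ j ∈ S, (1 : ℝ) / n j := by
    have := congrArg (fun x : ℚ => (x : ℝ)) hS
    push_cast at this
    exact this
  by_cases hcase : ∃ j ∈ S, j ≤ i
  · obtain ⟨j, hjS, hji⟩ := hcase
    have h1 : (1 : ℝ) / n i ≤ 1 / n j := by
      apply one_div_le_one_div_of_le (hn j) (hmono j i hji)
    have h2 : (1 : ℝ) / n j ≤ ∑ k ∈ S, (1 : ℝ) / n k :=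
      Finset.single_le_sum (f := fun k => (1 : ℝ) / n k) (fun k _ => by positivity) hjS
    rw [← hSr] at h2
    linarith
  · push_neg at hcase
    -- all elements of S are ≥ i + 1
    have hinj : Set.InjOn (fun j => j - (i + 1)) S := by
      intro a ha b hb hab
      have ha' := hcase a ha
      have hb' := hcase b hb
      simp only at hab
      omega
    have hsum : ∑ j ∈ S, (1 : ℝ) / n j
        = ∑ k ∈ S.image (fun j => j - (i + 1)), (1 : ℝ) / n (i + 1 + k) := by
      rw [Finset.sum_image hinj]
      apply Finset.sum_congr rfl
      intro j hj
      have hji := hcase j hj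
      have heq : i + 1 + (j - (i + 1)) = j := by omega
      rw [heq]
    have hle : ∑ k ∈ S.image (fun j => j - (i + 1)), (1 : ℝ) / n (i + 1 + k)
        ≤ ∑' j : ℕ, (1 : ℝ) / n (i + 1 + j) :=
      Summable.sum_le_tsum _ (fun k _ => by positivity) (hsummable_tail (i + 1))
    rw [hSr, hsum] at hq1
    linarith
end

section
/- Let T ⊆ ℕ be an infinite set of positive integers such that 2t ∈ T for every t ∈ T, and such that for every odd positive integer l there exists an element of T divisible by l. Let (n_i)_{i=1}^∞ be the strictly increasing enumeration of T. Then a rational number q is a finite sum ∑_{i∈S} 1/n_i over some finite S ⊂ ℕ if and only if 0 ≤ q < ∑_{i=1}^∞ 1/n_i (where the sum is interpreted as +∞ if the series diverges). -/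
open scoped ENNReal
open Finset

namespace Stmt9aux

/-- odd part of a natural number -/
def od (a : ℕ) : ℕ := a / 2 ^ a.factorization 2

lemma od_pos {a : ℕ} (ha : a ≠ 0) : 0 < od a := Nat.ordCompl_pos 2 ha

lemma two_pow_mul_od {a : ℕ} : 2 ^ (a.factorization 2) * od a = a :=
  Nat.ordProj_mul_ordCompl_eq_self a 2

lemma od_odd {a : ℕ} (ha : a ≠ 0) : ¬ 2 ∣ od a := Nat.not_dvd_ordCompl Nat.prime_two ha

lemma od_dvd (a : ℕ) : od a ∣ a := Nat.ordCompl_dvd a 2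

lemma od_of_odd {u : ℕ} (hu : ¬ 2 ∣ u) : od u = u := by
  unfold od
  rw [Nat.factorization_eq_zero_of_not_dvd hu]
  simp

lemma od_mul_two_pow {a : ℕ} (ha : a ≠ 0) (i : ℕ) : od (a * 2 ^ i) = od a := by
  unfold od
  rw [Nat.factorization_mul ha (by positivity), Nat.Prime.factorization_pow Nat.prime_two]
  simp only [Finsupp.add_apply, Finsupp.single_eq_same]
  rw [pow_add, Nat.mul_div_mul_right _ _ (by positivity)]

lemma od_odd_mul_pow {u k : ℕ} (hu : ¬ 2 ∣ u) : od (u * 2 ^ k) = u := by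
  rw [od_mul_two_pow (by rintro rfl; exact hu ⟨0, rfl⟩) k, od_of_odd hu]

lemma odd_dvd_od {w a : ℕ} (hw : ¬ 2 ∣ w) (hdvd : w ∣ a) (ha : a ≠ 0) : w ∣ od a := by
  have h2 : Nat.Coprime w (2 ^ (a.factorization 2)) :=
    Nat.Coprime.pow_right _ (Nat.coprime_comm.mp ((Nat.Prime.coprime_iff_not_dvd Nat.prime_two).mpr hw))
  exact h2.dvd_of_dvd_mul_left (by rw [two_pow_mul_od]; exact hdvd)

/-- `q` is a dyadic multiple of `1/o`. -/
def DyadOn (o : ℕ) (q : ℚ) : Prop := ∃ (z : ℤ) (E : ℕ), q * ((o : ℚ) * 2 ^ E) = z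

lemma DyadOn.sub {o : ℕ} {q₁ q₂ : ℚ} (h₁ : DyadOn o q₁) (h₂ : DyadOn o q₂) :
    DyadOn o (q₁ - q₂) := by
  obtain ⟨z₁, E₁, h₁⟩ := h₁
  obtain ⟨z₂, E₂, h₂⟩ := h₂
  refine ⟨z₁ * 2 ^ E₂ - z₂ * 2 ^ E₁, E₁ + E₂, ?_⟩
  push_cast
  linear_combination (2:ℚ) ^ E₂ * h₁ - (2:ℚ) ^ E₁ * h₂

lemma dyadOn_div {t a : ℕ} (ha : a ≠ 0) (hdvd : od a ∣ od t) (c e : ℕ) :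
    DyadOn (od t) ((c : ℚ) / (a * 2 ^ e)) := by
  obtain ⟨kk, hkk⟩ := hdvd
  refine ⟨(c : ℤ) * kk, e + a.factorization 2, ?_⟩
  have haq : ((2:ℚ) ^ (a.factorization 2) * od a) = a := by
    exact_mod_cast congrArg (Nat.cast : ℕ → ℚ) two_pow_mul_od
  have hkkq : ((od t : ℚ)) = (od a : ℚ) * kk := by
    exact_mod_cast congrArg (Nat.cast : ℕ → ℚ) hkk
  have haQ : (a : ℚ) ≠ 0 := Nat.cast_ne_zero.mpr ha
  rw [hkkq]
  push_cast
  field_simp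
  linear_combination (c : ℚ) * kk * 2 ^ e * haq

lemma dyadOn_init {t : ℕ} {q : ℚ} (hdvd : od q.den ∣ od t) : DyadOn (od t) q := by
  obtain ⟨k, hk⟩ := hdvd
  refine ⟨q.num * k, q.den.factorization 2, ?_⟩
  have hden : ((2:ℚ) ^ (q.den.factorization 2) * od q.den) = q.den := by
    exact_mod_cast congrArg (Nat.cast : ℕ → ℚ) (two_pow_mul_od (a := q.den))
  have hkq : ((od t : ℚ)) = (od q.den : ℚ) * k := by
    exact_mod_cast congrArg (Nat.cast : ℕ → ℚ) hk
  have hm := Rat.mul_den_eq_num q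
  rw [hkq]
  push_cast
  linear_combination q * (k:ℚ) * hden + (k:ℚ) * hm

lemma chain_repr (t : ℕ) (ht : 0 < t) :
    ∀ e c : ℕ, c < 2 ^ (e + 1) →
    ∃ B : Finset ℕ, (∀ b ∈ B, ∃ i, i ≤ e ∧ b = t * 2 ^ i) ∧
      (c : ℚ) / (t * 2 ^ e) = ∑ b ∈ B, (1 : ℚ) / b := by
  intro e
  induction e with
  | zero =>
    intro c hc
    interval_cases c
    · exact ⟨∅, by simp⟩
    · exact ⟨{t}, by simp, by simp⟩
  | succ e ih =>
    intro c hc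
    set k := c / 2 with hk
    obtain ⟨B', hB'mem, hB'sum⟩ := ih k (by omega)
    have htQ : (t : ℚ) ≠ 0 := by positivity
    rcases Nat.even_or_odd c with hpar | hpar
    · have hc2 : c = 2 * k := by obtain ⟨m, hm⟩ := hpar; omega
      refine ⟨B', fun b hb => ?_, ?_⟩
      · obtain ⟨i, hi, hieq⟩ := hB'mem _ hb
        exact ⟨i, by omega, hieq⟩
      · rw [hc2, ← hB'sum]
        push_cast
        field_simp
        ring
    · have hc2 : c = 2 * k + 1 := by obtain ⟨m, hm⟩ := hpar; omega
      have hnotmem : t * 2 ^ (e + 1) ∉ B' := by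
        intro h
        obtain ⟨i, hi, hieq⟩ := hB'mem _ h
        have h2 : 2 ^ i < 2 ^ (e + 1) := Nat.pow_lt_pow_right one_lt_two (by omega)
        nlinarith
      refine ⟨insert (t * 2 ^ (e + 1)) B', ?_, ?_⟩
      · intro b hb
        rcases Finset.mem_insert.mp hb with rfl | hb
        · exact ⟨e + 1, le_refl _, rfl⟩
        · obtain ⟨i, hi, hieq⟩ := hB'mem _ hb
          exact ⟨i, by omega, hieq⟩
      · rw [Finset.sum_insert hnotmem, hc2, ← hB'sum]
        push_cast
        field_simp
        ring

lemma chain_mem {T : Set ℕ} (hdouble : ∀ s ∈ T, 2 * s ∈ T) {t : ℕ} (htT : t ∈ T) (i : ℕ) :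
    t * 2 ^ i ∈ T := by
  induction i with
  | zero => simpa using htT
  | succ i ih =>
    have := hdouble _ ih
    have heq : 2 * (t * 2 ^ i) = t * 2 ^ (i + 1) := by ring
    rwa [heq] at this

/-- Any dyadic-on-`t` rational in `[0, 2/t)` is a finite sum of reciprocals of
distinct elements of the chain of `t`. -/
lemma repr_on_chain {T : Set ℕ} (hdouble : ∀ s ∈ T, 2 * s ∈ T) {t : ℕ} (htT : t ∈ T)
    (ht : 0 < t) {q : ℚ} (hq0 : 0 ≤ q) (hqlt : q < 2 / t) (hdy : DyadOn (od t) q) :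
    ∃ B : Finset ℕ, (∀ b ∈ B, b ∈ T ∧ od b = od t) ∧ q = ∑ b ∈ B, (1 : ℚ) / b := by
  obtain ⟨z, E, hz⟩ := hdy
  have htne : t ≠ 0 := ht.ne'
  have htQ : (t : ℚ) ≠ 0 := Nat.cast_ne_zero.mpr htne
  have hodQ : ((2:ℚ) ^ (t.factorization 2) * od t) = t := by
    exact_mod_cast congrArg (Nat.cast : ℕ → ℚ) (two_pow_mul_od (a := t))
  -- q * (t * 2^E) = z * 2^(t.factorization 2)
  have key : q * ((t : ℚ) * 2 ^ E) = (z : ℚ) * 2 ^ (t.factorization 2) := by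
    rw [← hodQ]; linear_combination (2:ℚ) ^ (t.factorization 2) * hz
  have hz0 : 0 ≤ (z : ℚ) * 2 ^ (t.factorization 2) := by
    rw [← key]; positivity
  have hcubd : (z : ℚ) * 2 ^ (t.factorization 2) < 2 ^ (E + 1) := by
    have h1 : q * ((t:ℚ) * 2 ^ E) < (2 / t) * (t * 2 ^ E) := by
      apply mul_lt_mul_of_pos_right hqlt
      positivity
    rw [key] at h1
    calc (z : ℚ) * 2 ^ (t.factorization 2) < (2 / t) * (t * 2 ^ E) := h1
      _ = 2 ^ (E + 1) := by field_simp; ring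
  set c : ℕ := z.toNat * 2 ^ (t.factorization 2) with hc
  have hzc : (c : ℚ) = (z : ℚ) * 2 ^ (t.factorization 2) := by
    have hz0' : 0 ≤ z := by
      by_contra h
      push_neg at h
      have : (z : ℚ) < 0 := by exact_mod_cast h
      nlinarith [pow_pos (by norm_num : (0:ℚ) < 2) (t.factorization 2)]
    rw [hc]
    push_cast
    congr 1
    exact_mod_cast Int.toNat_of_nonneg hz0'
  have hclt : c < 2 ^ (E + 1) := by
    have : (c : ℚ) < ((2 ^ (E + 1) : ℕ) : ℚ) := by rw [hzc]; push_cast; exact_mod_cast hcubd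
    exact_mod_cast this
  obtain ⟨B, hBmem, hBsum⟩ := chain_repr t ht E c hclt
  refine ⟨B, fun b hb => ?_, ?_⟩
  · obtain ⟨i, hi, rfl⟩ := hBmem _ hb
    exact ⟨chain_mem hdouble htT i, od_mul_two_pow htne i⟩
  · rw [← hBsum, hzc]
    rw [eq_div_iff (by positivity)]
    linear_combination key


lemma rep_main {T : Set ℕ} (hT0 : 0 ∉ T) (hdouble : ∀ s ∈ T, 2 * s ∈ T)
    {t : ℕ} (htT : t ∈ T) (e : ℕ) :
    ∀ G : Finset ℕ, (∀ a ∈ G, a ∈ T) → Set.InjOn od ↑G →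
      (∀ a ∈ G, od a ≠ od t) → (∀ a ∈ G, od a ∣ od t) →
      (∀ a ∈ G, (1 : ℚ) / (a * 2 ^ e) < 2 / t) →
      ∀ q : ℚ, 0 ≤ q → DyadOn (od t) q →
      q < (∑ a ∈ G, ((2 ^ (e + 1) - 1 : ℚ)) / (a * 2 ^ e)) + 2 / t →
      ∃ D : Finset ℕ, (∀ d ∈ D, d ∈ T ∧ (od d = od t ∨ od d ∈ G.image od)) ∧
        q = ∑ d ∈ D, (1 : ℚ) / d := by
  classical
  have ht : 0 < t := Nat.pos_of_ne_zero (fun h => hT0 (h ▸ htT))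
  intro G
  induction G using Finset.induction_on with
  | empty =>
    intro _ _ _ _ _ q hq0 hdy hlt
    obtain ⟨B, hB, hsum⟩ := repr_on_chain hdouble htT ht hq0 (by simpa using hlt) hdy
    exact ⟨B, fun d hd => ⟨(hB d hd).1, Or.inl (hB d hd).2⟩, hsum⟩
  | insert a G' ha ih =>
    intro hGT hGinj hGne hGdvd hGsmall q hq0 hdy hlt
    have haT : a ∈ T := hGT a (Finset.mem_insert_self a G')
    have hane : a ≠ 0 := fun h => hT0 (h ▸ haT)
    have hapos : 0 < a := Nat.pos_of_ne_zero hane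
    have hdpos : (0 : ℚ) < (a : ℚ) * 2 ^ e := by positivity
    set w : ℚ := q * (a * 2 ^ e) with hw
    have hw0 : 0 ≤ w := by positivity
    set c : ℕ := min ⌊w⌋₊ (2 ^ (e + 1) - 1) with hcdef
    have hclt : c < 2 ^ (e + 1) := by
      have := Nat.one_le_two_pow (n := e + 1)
      omega
    set x : ℚ := (c : ℚ) / (a * 2 ^ e) with hx
    have hx0 : 0 ≤ x := by positivity
    have hcw : (c : ℚ) ≤ w := le_trans
      (Nat.cast_le.mpr (min_le_left _ _)) (Nat.floor_le hw0)
    have hxq : x ≤ q := by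
      rw [hx, div_le_iff₀ hdpos]; exact hcw
    have hxdy : DyadOn (od t) x :=
      dyadOn_div hane (hGdvd a (Finset.mem_insert_self a G')) c e
    have hq'0 : 0 ≤ q - x := by linarith
    have hq'dy : DyadOn (od t) (q - x) := hdy.sub hxdy
    have hrest0 : 0 ≤ ∑ a' ∈ G', ((2 ^ (e + 1) - 1 : ℚ)) / (a' * 2 ^ e) := by
      apply Finset.sum_nonneg
      intro a' _
      apply div_nonneg
      · have h1 : ((1:ℕ):ℚ) ≤ ((2 ^ (e+1) : ℕ):ℚ) := Nat.cast_le.mpr Nat.one_le_two_pow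
        push_cast at h1
        linarith
      · positivity
    have hbound : q - x < (∑ a' ∈ G', ((2 ^ (e + 1) - 1 : ℚ)) / (a' * 2 ^ e)) + 2 / t := by
      rcases le_or_gt (2 ^ (e + 1) - 1 : ℕ) ⌊w⌋₊ with hcase | hcase
      · -- full subtraction: x = (2^(e+1)-1)/(a·2^e)
        have hceq : c = 2 ^ (e + 1) - 1 := by omega
        have hxval : x = ((2 ^ (e + 1) - 1 : ℚ)) / (a * 2 ^ e) := by
          rw [hx, hceq]
          congr 1
          push_cast [Nat.cast_sub (Nat.one_le_two_pow (n := e + 1))]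
          ring
        rw [Finset.sum_insert ha] at hlt
        rw [hxval]
        linarith
      · -- partial: remainder is tiny
        have hceq : c = ⌊w⌋₊ := by omega
        have hsm : (1 : ℚ) / (a * 2 ^ e) < 2 / t :=
          hGsmall a (Finset.mem_insert_self a G')
        have hwlt : w < (c : ℚ) + 1 := by
          rw [hceq]; exact Nat.lt_floor_add_one w
        have : q < ((c : ℚ) + 1) / (a * 2 ^ e) := by
          rw [lt_div_iff₀ hdpos]; exact hwlt
        have hqx : q - x < 1 / (a * 2 ^ e) := by
          rw [hx]
          have h1 : ((c : ℚ) + 1) / (a * 2 ^ e) = (c : ℚ) / (a * 2 ^ e) + 1 / (a * 2 ^ e) := by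
            field_simp
          linarith [this, h1]
        linarith
    obtain ⟨D', hD'mem, hD'sum⟩ := ih
      (fun a' h => hGT a' (Finset.mem_insert_of_mem h))
      (hGinj.mono (by simp [Finset.coe_subset]))
      (fun a' h => hGne a' (Finset.mem_insert_of_mem h))
      (fun a' h => hGdvd a' (Finset.mem_insert_of_mem h))
      (fun a' h => hGsmall a' (Finset.mem_insert_of_mem h))
      (q - x) hq'0 hq'dy hbound
    obtain ⟨B, hBmem, hBsum⟩ := chain_repr a hapos e c hclt
    have hBprop : ∀ b ∈ B, b ∈ T ∧ od b = od a := by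
      intro b hb
      obtain ⟨i, _, rfl⟩ := hBmem _ hb
      exact ⟨chain_mem hdouble haT i, od_mul_two_pow hane i⟩
    have hdisj : Disjoint B D' := by
      rw [Finset.disjoint_left]
      intro b hbB hbD'
      have hodb : od b = od a := (hBprop b hbB).2
      rcases (hD'mem b hbD').2 with h | h
      · exact hGne a (Finset.mem_insert_self a G') (hodb ▸ h)
      · obtain ⟨a', ha'G', ha'od⟩ := Finset.mem_image.mp h
        have : a' = a := hGinj (by simp [ha'G']) (by simp) (by rw [ha'od, ← hodb])
        exact ha (this ▸ ha'G')
    refine ⟨B ∪ D', ?_, ?_⟩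
    · intro d hd
      rcases Finset.mem_union.mp hd with hdB | hdD'
      · exact ⟨(hBprop d hdB).1, Or.inr (Finset.mem_image.mpr
          ⟨a, Finset.mem_insert_self a G', ((hBprop d hdB).2).symm⟩)⟩
      · refine ⟨(hD'mem d hdD').1, ?_⟩
        rcases (hD'mem d hdD').2 with h | h
        · exact Or.inl h
        · exact Or.inr (Finset.image_subset_image (Finset.subset_insert a G') h)
    · rw [Finset.sum_union hdisj, ← hBsum, ← hD'sum]
      push_cast
      ring

lemma sum_inv_pow_le {J : Finset ℕ} {j0 : ℕ} (hJ : ∀ j ∈ J, j0 ≤ j) :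
    ∑ j ∈ J, ((1 : ℚ) / 2) ^ j ≤ 2 * (1 / 2) ^ j0 := by
  rcases J.eq_empty_or_nonempty with rfl | hne
  · simp

  · set N := J.sup id + 1 with hN
    have hsub : J ⊆ Finset.Ico j0 N := by
      intro j hj
      rw [Finset.mem_Ico]
      exact ⟨hJ j hj, by have := Finset.le_sup (f := id) hj; simp at this; omega⟩
    have hj0N : j0 ≤ N := by
      obtain ⟨j, hj⟩ := hne
      have := hJ j hj
      have := Finset.le_sup (f := id) hj
      simp at this
      omega
    calc ∑ j ∈ J, ((1 : ℚ) / 2) ^ j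
        ≤ ∑ j ∈ Finset.Ico j0 N, ((1 : ℚ) / 2) ^ j := by
          apply Finset.sum_le_sum_of_subset_of_nonneg hsub
          intro i _ _
          positivity
      _ = (((1:ℚ)/2) ^ N - (1/2) ^ j0) / ((1/2) - 1) := geom_sum_Ico (by norm_num) hj0N
      _ = 2 * ((1/2) ^ j0 - (1/2) ^ N) := by ring
      _ ≤ 2 * (1 / 2) ^ j0 := by
          have : (0:ℚ) < (1/2) ^ N := by positivity
          linarith

lemma group_bound {A : Finset ℕ} (hA0 : ∀ a ∈ A, a ≠ 0) {u : ℕ}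
    (hu : (A.filter (fun a => od a = u)).Nonempty) :
    ∑ a ∈ A.filter (fun a => od a = u), (1 : ℚ) / a ≤
      2 / ((A.filter (fun a => od a = u)).min' hu) := by
  classical
  set P := A.filter (fun a => od a = u) with hP
  set g := P.min' hu with hg
  have hgP : g ∈ P := P.min'_mem hu
  have hgA : g ∈ A := (Finset.mem_filter.mp hgP).1
  have hgu : od g = u := (Finset.mem_filter.mp hgP).2
  have hg0 : g ≠ 0 := hA0 g hgA
  have hu0 : u ≠ 0 := by
    rw [← hgu]; exact (od_pos hg0).ne'
  have huQ : (0:ℚ) < u := by positivity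
  -- every element of P is u * 2^(v a)
  have hform : ∀ a ∈ P, (a : ℚ) = 2 ^ (a.factorization 2) * u := by
    intro a haP
    have h1 : od a = u := (Finset.mem_filter.mp haP).2
    rw [← h1]
    exact_mod_cast (congrArg (Nat.cast : ℕ → ℚ) (two_pow_mul_od (a := a))).symm
  have hrw : ∑ a ∈ P, (1 : ℚ) / a = (∑ a ∈ P, ((1:ℚ)/2) ^ (a.factorization 2)) * (1 / u) := by
    rw [Finset.sum_mul]
    apply Finset.sum_congr rfl
    intro a haP
    rw [hform a haP]
    rw [div_pow, one_pow]
    field_simp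
  have hinj : ∀ a ∈ P, ∀ b ∈ P, a.factorization 2 = b.factorization 2 → a = b := by
    intro a haP b hbP hab
    have h1 := hform a haP
    have h2 := hform b hbP
    have : (a:ℚ) = (b:ℚ) := by rw [h1, h2, hab]
    exact_mod_cast this
  have himg : ∑ a ∈ P, ((1:ℚ)/2) ^ (a.factorization 2)
      = ∑ j ∈ P.image (fun a => a.factorization 2), ((1:ℚ)/2) ^ j :=
    (Finset.sum_image hinj).symm
  have hjge : ∀ j ∈ P.image (fun a => a.factorization 2), g.factorization 2 ≤ j := by
    intro j hj
    obtain ⟨a, haP, rfl⟩ := Finset.mem_image.mp hj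
    have hle : g ≤ a := P.min'_le a haP
    have h1 : 2 ^ (g.factorization 2) * u = g := by rw [← hgu]; exact two_pow_mul_od
    have h2 : 2 ^ (a.factorization 2) * u = a := by
      rw [← (Finset.mem_filter.mp haP).2]; exact two_pow_mul_od
    have hpow : 2 ^ (g.factorization 2) ≤ 2 ^ (a.factorization 2) :=
      Nat.le_of_mul_le_mul_right (by rw [Nat.mul_comm _ u, Nat.mul_comm _ u] at *; omega)
        (Nat.pos_of_ne_zero hu0)
    exact (Nat.pow_le_pow_iff_right one_lt_two).mp hpow
  have hgform : (g : ℚ) = 2 ^ (g.factorization 2) * u := hform g hgP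
  calc ∑ a ∈ P, (1 : ℚ) / a
      = (∑ a ∈ P, ((1:ℚ)/2) ^ (a.factorization 2)) * (1 / u) := hrw
    _ = (∑ j ∈ P.image (fun a => a.factorization 2), ((1:ℚ)/2) ^ j) * (1 / u) := by rw [himg]
    _ ≤ (2 * (1/2) ^ (g.factorization 2)) * (1 / u) := by
        apply mul_le_mul_of_nonneg_right (sum_inv_pow_le hjge)
        positivity
    _ = 2 / g := by
        rw [hgform]
        rw [div_pow, one_pow]
        field_simp

lemma enn_sum_eq {n : ℕ → ℕ} (hn0 : ∀ i, n i ≠ 0) (F : Finset ℕ) :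
    ∑ i ∈ F, ((n i : ℝ≥0∞))⁻¹ = ENNReal.ofReal (((∑ i ∈ F, (1:ℚ)/(n i)) : ℚ) : ℝ) := by
  have hcast : (((∑ i ∈ F, (1:ℚ)/(n i)) : ℚ) : ℝ) = ∑ i ∈ F, (1:ℝ)/(n i) := by push_cast; rfl
  rw [hcast, ENNReal.ofReal_sum_of_nonneg (fun i _ => by positivity)]
  apply Finset.sum_congr rfl
  intro i _
  have hpos : (0:ℝ) < n i := by
    have := Nat.pos_of_ne_zero (hn0 i); exact_mod_cast this
  rw [one_div, ENNReal.ofReal_inv_of_pos hpos, ENNReal.ofReal_natCast]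

end Stmt9aux

open Stmt9aux

/-- Let `T ⊆ ℕ` be an infinite set of positive integers with
`2t ∈ T` for every `t ∈ T`, containing a multiple of every odd positive
integer. If `(n_i)` is the strictly increasing enumeration of `T`, then a
rational `q` is a finite sum `∑_{i ∈ S} 1 / n i` if and only if
`0 ≤ q < ∑_i 1 / n_i` (the sum taken in `ℝ≥0∞`, so it may be `+∞`). -/
theorem stmt9 (T : Set ℕ) (hTinf : T.Infinite) (hT0 : 0 ∉ T)
    (hTdouble : ∀ t ∈ T, 2 * t ∈ T)
    (hTodd : ∀ l : ℕ, Odd l → 0 < l → ∃ t ∈ T, l ∣ t)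
    (n : ℕ → ℕ) (hmono : StrictMono n) (hrange : Set.range n = T) :
    ∀ q : ℚ, (∃ S : Finset ℕ, q = ∑ i ∈ S, (1 : ℚ) / (n i)) ↔
      (0 ≤ q ∧ ENNReal.ofReal (q : ℝ) < ∑' i, ((n i : ℝ≥0∞))⁻¹) := by
  classical
  have hnT : ∀ i, n i ∈ T := fun i => hrange ▸ Set.mem_range_self i
  have hn0 : ∀ i, n i ≠ 0 := fun i h => hT0 (h ▸ hnT i)
  intro q
  constructor
  · -- forward
    rintro ⟨S, rfl⟩
    constructor
    · apply Finset.sum_nonneg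
      intro i _
      positivity
    · obtain ⟨j, hj⟩ := Infinite.exists_notMem_finset S
      have hsum_ne_top : ∑ i ∈ S, ((n i : ℝ≥0∞))⁻¹ ≠ ⊤ := by
        apply (ENNReal.sum_lt_top.mpr ?_).ne
        intro i _
        exact (ENNReal.inv_lt_top).mpr (by exact_mod_cast Nat.pos_of_ne_zero (hn0 i))
      calc ENNReal.ofReal ((∑ i ∈ S, (1:ℚ)/(n i) : ℚ) : ℝ)
          = ∑ i ∈ S, ((n i : ℝ≥0∞))⁻¹ := (enn_sum_eq hn0 S).symm
        _ < ∑ i ∈ S, ((n i : ℝ≥0∞))⁻¹ + ((n j : ℝ≥0∞))⁻¹ :=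
            ENNReal.lt_add_right hsum_ne_top
              (ENNReal.inv_ne_zero.mpr (ENNReal.natCast_ne_top _))
        _ = ∑ i ∈ insert j S, ((n i : ℝ≥0∞))⁻¹ := by
            rw [Finset.sum_insert hj]; ring
        _ ≤ ∑' i, ((n i : ℝ≥0∞))⁻¹ := ENNReal.sum_le_tsum _
  · -- reverse
    rintro ⟨hq0, hlt⟩
    rw [ENNReal.tsum_eq_iSup_sum, lt_iSup_iff] at hlt
    obtain ⟨F, hF⟩ := hlt
    rw [enn_sum_eq hn0 F] at hF
    -- to ℚ
    have hqF : q < ∑ i ∈ F, (1:ℚ)/(n i) := by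
      by_contra h
      push_neg at h
      have : ENNReal.ofReal ((∑ i ∈ F, (1:ℚ)/(n i) : ℚ) : ℝ) ≤ ENNReal.ofReal (q : ℝ) :=
        ENNReal.ofReal_le_ofReal (by exact_mod_cast h)
      exact absurd hF (not_lt.mpr this)
    -- the finite subset A of T with q < sum of reciprocals
    set A := F.image n with hA
    have hsumA : ∑ a ∈ A, (1:ℚ)/a = ∑ i ∈ F, (1:ℚ)/(n i) :=
      Finset.sum_image (fun i _ j _ h => hmono.injective h)
    have hqA : q < ∑ a ∈ A, (1:ℚ)/a := by rw [hsumA]; exact hqF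
    have hAT : ∀ a ∈ A, a ∈ T := by
      intro a haA
      obtain ⟨i, _, rfl⟩ := Finset.mem_image.mp haA
      exact hnT i
    have hA0 : ∀ a ∈ A, a ≠ 0 := fun a haA h => hT0 (h ▸ hAT a haA)
    set U := A.image od with hU
    have hfib : ∀ u ∈ U, (A.filter (fun a => od a = u)).Nonempty := by
      intro u huU
      obtain ⟨a, haA, rfl⟩ := Finset.mem_image.mp huU
      exact ⟨a, Finset.mem_filter.mpr ⟨haA, rfl⟩⟩
    set g : ℕ → ℕ := fun u => if h : (A.filter (fun a => od a = u)).Nonempty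
      then (A.filter (fun a => od a = u)).min' h else 1 with hgdef
    have hgval : ∀ u, ∀ h : (A.filter (fun a => od a = u)).Nonempty,
        g u = (A.filter (fun a => od a = u)).min' h := by
      intro u h
      simp only [hgdef, dif_pos h]
    have hgmem : ∀ u ∈ U, g u ∈ A ∧ od (g u) = u := by
      intro u huU
      rw [hgval u (hfib u huU)]
      have h2 := Finset.min'_mem _ (hfib u huU)
      exact ⟨(Finset.mem_filter.mp h2).1, (Finset.mem_filter.mp h2).2⟩
    have hfiber_sum : ∑ a ∈ A, (1:ℚ)/a
        = ∑ u ∈ U, ∑ a ∈ A.filter (fun a => od a = u), (1:ℚ)/a := by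
      rw [hU]
      exact (Finset.sum_image' (f := fun u => ∑ a ∈ A.filter (fun a => od a = u), (1:ℚ)/a)
        (g := od) (fun a => (1:ℚ)/a) (fun a _ => rfl)).symm
    have hUbound : ∑ a ∈ A, (1:ℚ)/a ≤ ∑ u ∈ U, 2 / (g u : ℚ) := by
      rw [hfiber_sum]
      apply Finset.sum_le_sum
      intro u huU
      rw [hgval u (hfib u huU)]
      exact group_bound hA0 (hfib u huU)
    have hq2 : q < ∑ u ∈ U, 2 / (g u : ℚ) := lt_of_lt_of_le hqA hUbound
    have hginj : ∀ u ∈ U, ∀ v ∈ U, g u = g v → u = v := by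
      intro u hu v hv huv
      rw [← (hgmem u hu).2, ← (hgmem v hv).2, huv]
    set G := U.image g with hG
    have hsumG : ∑ a ∈ G, 2 / (a : ℚ) = ∑ u ∈ U, 2 / (g u : ℚ) :=
      Finset.sum_image hginj
    have hqG : q < ∑ a ∈ G, 2 / (a : ℚ) := by rw [hsumG]; exact hq2
    have hGT : ∀ a ∈ G, a ∈ T := by
      intro a haG
      obtain ⟨u, huU, rfl⟩ := Finset.mem_image.mp haG
      exact hAT _ (hgmem u huU).1
    have hG0 : ∀ a ∈ G, a ≠ 0 := fun a h hh => hT0 (hh ▸ hGT a h)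
    have hGod : ∀ a ∈ G, od a ∈ U := by
      intro a haG
      obtain ⟨u, huU, rfl⟩ := Finset.mem_image.mp haG
      rw [(hgmem u huU).2]
      exact huU
    have hUodd : ∀ u ∈ U, ¬ 2 ∣ u := by
      intro u huU
      obtain ⟨a, haA, rfl⟩ := Finset.mem_image.mp huU
      exact od_odd (hA0 a haA)
    have hU0 : ∀ u ∈ U, u ≠ 0 := by
      intro u huU
      obtain ⟨a, haA, rfl⟩ := Finset.mem_image.mp huU
      exact (od_pos (hA0 a haA)).ne'
    -- the auxiliary chain element t
    have hqden0 : q.den ≠ 0 := q.den_nz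
    set M := 3 * od q.den * ∏ u ∈ U, u with hM
    have hprodpos : 0 < ∏ u ∈ U, u :=
      Finset.prod_pos (fun u hu => Nat.pos_of_ne_zero (hU0 u hu))
    have hModd : ¬ 2 ∣ M := by
      intro h
      rcases Nat.prime_two.dvd_mul.mp h with h | h
      · rcases Nat.prime_two.dvd_mul.mp h with h | h
        · norm_num at h
        · exact od_odd hqden0 h
      · obtain ⟨u, huU, hu2⟩ := (Prime.dvd_finset_prod_iff Nat.prime_two.prime _).mp h
        exact hUodd u huU hu2
    have hMpos : 0 < M :=
      Nat.mul_pos (Nat.mul_pos (by norm_num) (od_pos hqden0)) hprodpos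
    obtain ⟨t, htT, hMt⟩ := hTodd M
      (Nat.odd_iff.mpr (by
        rcases Nat.mod_two_eq_zero_or_one M with h | h
        · exact absurd (Nat.dvd_of_mod_eq_zero h) hModd
        · exact h)) hMpos
    have ht0 : t ≠ 0 := fun h => hT0 (h ▸ htT)
    have htpos : 0 < t := Nat.pos_of_ne_zero ht0
    have hModt : M ∣ od t := odd_dvd_od hModd hMt ht0
    have hMle : M ≤ od t := Nat.le_of_dvd (od_pos ht0) hModt
    have hudvd : ∀ u ∈ U, u ∣ od t := fun u hu =>
      dvd_trans (dvd_trans (Finset.dvd_prod_of_mem _ hu) (Dvd.intro_left _ rfl)) hModt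
    have hult : ∀ u ∈ U, u < od t := by
      intro u huU
      have h1 : u ≤ ∏ v ∈ U, v :=
        Finset.single_le_prod' (fun v hv => Nat.one_le_iff_ne_zero.mpr (hU0 v hv)) huU
      have h2 : 1 ≤ od q.den := od_pos hqden0
      have h3 : (∏ v ∈ U, v) < M := by
        rw [hM]; nlinarith
      omega
    have hGne : ∀ a ∈ G, od a ≠ od t := fun a haG => (hult _ (hGod a haG)).ne
    have hGdvd : ∀ a ∈ G, od a ∣ od t := fun a haG => hudvd _ (hGod a haG)
    have hGinj : Set.InjOn od ↑G := by
      intro a ha b hb hab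
      obtain ⟨u, huU, rfl⟩ := Finset.mem_image.mp (Finset.mem_coe.mp ha)
      obtain ⟨v, hvU, rfl⟩ := Finset.mem_image.mp (Finset.mem_coe.mp hb)
      rw [(hgmem u huU).2, (hgmem v hvU).2] at hab
      rw [hab]
    have hodqdvd : od q.den ∣ od t :=
      dvd_trans ⟨3 * ∏ u ∈ U, u, by rw [hM]; ring⟩ hModt
    have hdy : DyadOn (od t) q := dyadOn_init hodqdvd
    -- choose the precision e
    set δ := (∑ a ∈ G, 2 / (a:ℚ)) - q with hδ
    have hδpos : 0 < δ := by rw [hδ]; linarith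
    obtain ⟨e, he⟩ := pow_unbounded_of_one_lt (max (t : ℚ) ((G.card : ℚ) / δ)) one_lt_two
    have het : (t:ℚ) < 2 ^ e := lt_of_le_of_lt (le_max_left _ _) he
    have hec : (G.card : ℚ) / δ < 2 ^ e := lt_of_le_of_lt (le_max_right _ _) he
    have h2epos : (0:ℚ) < 2 ^ e := by positivity
    have htQ : (0:ℚ) < t := by exact_mod_cast htpos
    have hsmall : ∀ a ∈ G, (1:ℚ)/(a * 2 ^ e) < 2 / t := by
      intro a haG
      have ha1 : (1:ℚ) ≤ a := by exact_mod_cast Nat.one_le_iff_ne_zero.mpr (hG0 a haG)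
      have h1 : (1:ℚ)/(a * 2 ^ e) ≤ 1 / 2 ^ e := by
        apply one_div_le_one_div_of_le h2epos
        nlinarith
      have h2 : (1:ℚ)/2^e < 1 / t := one_div_lt_one_div_of_lt htQ het
      have h3 : (0:ℚ) < 1 / t := by positivity
      have h4 : (2:ℚ)/t = 1/t + 1/t := by ring
      linarith
    have hsum_small : ∑ a ∈ G, (1:ℚ)/(a * 2 ^ e) < δ := by
      have h1 : ∑ a ∈ G, (1:ℚ)/(a * 2 ^ e) ≤ ∑ _a ∈ G, (1:ℚ)/2^e := by
        apply Finset.sum_le_sum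
        intro a haG
        have ha1 : (1:ℚ) ≤ a := by exact_mod_cast Nat.one_le_iff_ne_zero.mpr (hG0 a haG)
        apply one_div_le_one_div_of_le h2epos
        nlinarith
      have hcard : ∑ _a ∈ G, (1:ℚ)/ 2 ^ e = (G.card : ℚ) / 2 ^ e := by
        rw [Finset.sum_const, nsmul_eq_mul]
        ring
      have h2 : (G.card : ℚ) / 2 ^ e < δ := by
        rw [div_lt_iff₀ h2epos]
        rw [div_lt_iff₀ hδpos] at hec
        linarith
      calc ∑ a ∈ G, (1:ℚ)/(a * 2 ^ e) ≤ ∑ _a ∈ G, (1:ℚ)/2^e := h1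
        _ = (G.card : ℚ) / 2 ^ e := hcard
        _ < δ := h2
    have hmain : q < (∑ a ∈ G, ((2 ^ (e + 1) - 1 : ℚ)) / (a * 2 ^ e)) + 2 / t := by
      have hexp : ∀ a ∈ G, ((2 ^ (e + 1) - 1 : ℚ)) / ((a : ℚ) * 2 ^ e)
          = 2/(a:ℚ) - 1/(a * 2^e) := by
        intro a haG
        have haQ : (a:ℚ) ≠ 0 := Nat.cast_ne_zero.mpr (hG0 a haG)
        field_simp
        ring
      rw [Finset.sum_congr rfl hexp, Finset.sum_sub_distrib]
      have h2t : (0:ℚ) < 2 / t := by positivity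
      rw [hδ] at hsum_small
      linarith
    obtain ⟨D, hDmem, hDsum⟩ := rep_main hT0 hTdouble htT e G hGT hGinj hGne hGdvd
      hsmall q hq0 hdy hmain
    have hDT : ∀ d ∈ D, d ∈ T := fun d hd => (hDmem d hd).1
    have hinj : Set.InjOn n (n ⁻¹' ↑D) := fun i _ j _ h => hmono.injective h
    refine ⟨D.preimage n hinj, ?_⟩
    rw [hDsum]
    exact (Finset.sum_preimage n D hinj (fun d => (1:ℚ)/d)
      (fun x hx hnr => absurd (by rw [hrange]; exact hDT x hx) hnr)).symm
end

section
/- Let x_1 > x_2 > x_3 > ⋯ be a strictly decreasing sequence of positive real numbers such that ∑_{i=1}^∞ x_i converges, such that x_i ≥ ∑_{j>i} x_j for every index i, and such that x_i > ∑_{j>i} x_j for infinitely many indices i. Then the achievement set A((x_i)_{i=1}^∞) := { ∑_{i∈S} x_i : S ⊆ ℕ } (where S ranges over all subsets, finite or infinite) is a compact subset of ℝ with empty interior. -/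
open Set Finset
open scoped Classical

namespace Stmt10

/-- Tail sum `∑_{j ≥ n} x j`. -/
noncomputable def T (x : ℕ → ℝ) (n : ℕ) : ℝ := ∑' j : ℕ, x (n + j)

variable {x : ℕ → ℝ}

lemma sumT (hsum : Summable x) (n : ℕ) : Summable fun j => x (n + j) := by
  have := (summable_nat_add_iff (f := x) n).2 hsum
  simpa [add_comm] using this

lemma T_nonneg (hpos : ∀ i, 0 < x i) (n : ℕ) : 0 ≤ T x n :=
  tsum_nonneg fun _ => (hpos _).le

lemma T_prefix (hsum : Summable x) {a n : ℕ} (h : a ≤ n) :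
    T x a = (∑ j ∈ Finset.Ico a n, x j) + T x n := by
  have h1 := Summable.sum_add_tsum_nat_add (f := fun j => x (a + j)) (n - a) (sumT hsum a)
  have h3 : (∑' i : ℕ, x (a + (i + (n - a)))) = T x n := tsum_congr fun i => by congr 1; omega
  rw [h3] at h1
  rw [Finset.sum_Ico_eq_sum_range]
  exact h1.symm

lemma T_rec (hsum : Summable x) (n : ℕ) : T x n = x n + T x (n + 1) := by
  have := T_prefix hsum (Nat.le_succ n)
  simpa [Finset.sum_Ico_eq_sum_range] using this

lemma T_pos (hsum : Summable x) (hpos : ∀ i, 0 < x i) (n : ℕ) : 0 < T x n := by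
  rw [T_rec hsum n]
  exact add_pos_of_pos_of_nonneg (hpos n) (T_nonneg hpos (n + 1))

/-- tsum of the indicator of `Ici n` equals the tail. -/
lemma tsum_ind_Ici (hsum : Summable x) (n : ℕ) :
    (∑' k : ℕ, (Set.Ici n).indicator x k) = T x n := by
  have hS : Summable ((Set.Ici n).indicator x) := hsum.indicator _
  have h1 := Summable.sum_add_tsum_nat_add (f := (Set.Ici n).indicator x) n hS
  have h2 : ∀ i ∈ Finset.range n, (Set.Ici n).indicator x i = 0 := by
    intro i hi
    rw [Finset.mem_range] at hi
    exact Set.indicator_of_notMem (by simpa using Nat.not_le.2 hi) x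
  rw [Finset.sum_congr rfl h2] at h1
  simp only [Finset.sum_const_zero, zero_add] at h1
  rw [← h1]
  apply tsum_congr
  intro i
  rw [Set.indicator_of_mem (by simp) x, add_comm]

/-- Gap lemma: distinct subset sums over `range n` differ by at least `T x n`. -/
lemma gap (hsum : Summable x) (hpos : ∀ i, 0 < x i)
    (hge : ∀ i, T x (i + 1) ≤ x i) {n : ℕ} {F G : Finset ℕ}
    (hF : F ⊆ Finset.range n) (hG : G ⊆ Finset.range n)
    (h : (∑ j ∈ F, x j) < ∑ j ∈ G, x j) :
    (∑ j ∈ F, x j) + T x n ≤ ∑ j ∈ G, x j := by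
  have hne : F ≠ G := fun e => by simp [e] at h
  have hsd : (symmDiff F G).Nonempty := by
    rw [Finset.nonempty_iff_ne_empty]
    intro hempty
    exact hne (symmDiff_eq_bot.mp (by simpa using hempty))
  set k := (symmDiff F G).min' hsd with hk
  have hkmem : k ∈ symmDiff F G := Finset.min'_mem _ _
  have hkmin : ∀ j ∈ symmDiff F G, k ≤ j := fun j hj => Finset.min'_le _ _ hj
  have main : ∀ A B : Finset ℕ, A ⊆ Finset.range n → B ⊆ Finset.range n →
      symmDiff A B = symmDiff F G → k ∈ B → k ∉ A →
      (∑ j ∈ A, x j) + T x n ≤ ∑ j ∈ B, x j := by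
    intro A B hA hB hAB hkB hkA
    have hkn : k < n := Finset.mem_range.1 (hB hkB)
    have hsub : A \ B ⊆ Finset.Ioo k n := by
      intro j hj
      have hj' : j ∈ symmDiff A B := Finset.mem_symmDiff.2 (Or.inl (Finset.mem_sdiff.1 hj))
      have hjk : k ≤ j := hkmin j (hAB ▸ hj')
      have hjA : j ∈ A := (Finset.mem_sdiff.1 hj).1
      have hjne : j ≠ k := fun e => hkA (e ▸ hjA)
      exact Finset.mem_Ioo.2 ⟨lt_of_le_of_ne hjk (Ne.symm hjne), Finset.mem_range.1 (hA hjA)⟩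
    have h1 : (∑ j ∈ A \ B, x j) ≤ ∑ j ∈ Finset.Ioo k n, x j :=
      Finset.sum_le_sum_of_subset_of_nonneg hsub (fun j _ _ => (hpos j).le)
    have h2 : (∑ j ∈ Finset.Ioo k n, x j) + T x n ≤ x k := by
      have hpre := T_prefix hsum (show k + 1 ≤ n from hkn)
      have hIoo : Finset.Ioo k n = Finset.Ico (k + 1) n := by
        ext j; simp only [Finset.mem_Ioo, Finset.mem_Ico]; omega
      rw [hIoo]
      calc (∑ j ∈ Finset.Ico (k + 1) n, x j) + T x n = T x (k + 1) := hpre.symm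
        _ ≤ x k := hge k
    have hsplitA : (∑ j ∈ A, x j) = (∑ j ∈ A ∩ B, x j) + ∑ j ∈ A \ B, x j :=
      (Finset.sum_inter_add_sum_sdiff A B x).symm
    have hins : insert k (A ∩ B) ⊆ B := by
      intro j hj
      rcases Finset.mem_insert.1 hj with rfl | hj
      · exact hkB
      · exact (Finset.mem_inter.1 hj).2
    have hBsum : (x k + ∑ j ∈ A ∩ B, x j) ≤ ∑ j ∈ B, x j := by
      have hle : (∑ j ∈ insert k (A ∩ B), x j) ≤ ∑ j ∈ B, x j :=
        Finset.sum_le_sum_of_subset_of_nonneg hins (fun j _ _ => (hpos j).le)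
      rwa [Finset.sum_insert (fun hkmem' => hkA (Finset.mem_inter.1 hkmem').1)] at hle
    calc (∑ j ∈ A, x j) + T x n
        = (∑ j ∈ A ∩ B, x j) + ((∑ j ∈ A \ B, x j) + T x n) := by rw [hsplitA]; ring
      _ ≤ (∑ j ∈ A ∩ B, x j) + x k := by linarith
      _ ≤ ∑ j ∈ B, x j := by rw [add_comm]; exact hBsum
  rcases Finset.mem_symmDiff.1 hkmem with ⟨hkF, hkG⟩ | ⟨hkG, hkF⟩
  · exfalso
    have := main G F hG hF (symmDiff_comm G F) hkF hkG
    have hT := T_pos hsum hpos n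
    linarith
  · exact main F G hF hG rfl hkG hkF

end Stmt10

open Stmt10 in
/-- Let `x₁ > x₂ > ⋯ > 0` be a strictly decreasing summable
sequence of positive reals with `x i ≥ ∑_{j > i} x j` for every `i` and
`x i > ∑_{j > i} x j` for infinitely many `i`. Then the achievement set
`A = { ∑_{i ∈ S} x i : S ⊆ ℕ }` (with `S` ranging over all, possibly infinite,
subsets) is compact and has empty interior. -/
theorem stmt10 (x : ℕ → ℝ) (hanti : StrictAnti x) (hpos : ∀ i, 0 < x i)
    (hsum : Summable x)
    (hge : ∀ i, (∑' j : ℕ, x (i + 1 + j)) ≤ x i)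
    (hgt : {i : ℕ | (∑' j : ℕ, x (i + 1 + j)) < x i}.Infinite) :
    IsCompact {y : ℝ | ∃ S : Set ℕ, y = ∑' i : S, x i} ∧
      interior {y : ℝ | ∃ S : Set ℕ, y = ∑' i : S, x i} = ∅ := by
  set A := {y : ℝ | ∃ S : Set ℕ, y = ∑' i : S, x i} with hAdef
  have hge' : ∀ i, T x (i + 1) ≤ x i := hge
  have hgt' : {i : ℕ | T x (i + 1) < x i}.Infinite := hgt
  -- decomposition of elements of A
  have decomp : ∀ (S : Set ℕ) (i : ℕ),
      (∑' n : S, x n) = (∑ j ∈ (Finset.range i).filter (· ∈ S), x j)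
        + ∑' n : ℕ, (S ∩ Set.Ici i).indicator x n := by
    intro S i
    rw [_root_.tsum_subtype]
    have hsplit : ∀ n : ℕ, S.indicator x n
        = (S ∩ Set.Iio i).indicator x n + (S ∩ Set.Ici i).indicator x n := by
      intro n
      simp only [Set.indicator_apply, Set.mem_inter_iff, Set.mem_Iio, Set.mem_Ici]
      by_cases hnS : n ∈ S
      · by_cases hni : n < i
        · simp [hnS, hni, Nat.not_le.2 hni]
        · simp [hnS, hni, Nat.le_of_not_lt hni]
      · simp [hnS]
    rw [tsum_congr hsplit, Summable.tsum_add (hsum.indicator _) (hsum.indicator _)]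
    congr 1
    rw [tsum_eq_sum (s := (Finset.range i).filter (· ∈ S))]
    · apply Finset.sum_congr rfl
      intro b hb
      rw [Finset.mem_filter, Finset.mem_range] at hb
      exact Set.indicator_of_mem (Set.mem_inter hb.2 (Set.mem_Iio.mpr hb.1)) x
    · intro b hb
      rw [Finset.mem_filter, Finset.mem_range] at hb
      apply Set.indicator_of_notMem
      rintro ⟨h1, h2⟩
      exact hb ⟨h2, h1⟩
  constructor
  · -- Compactness
    have hA : A = Set.range (fun ε : ℕ → Bool => ∑' i, if ε i then x i else 0) := by
      ext y
      constructor
      · rintro ⟨S, rfl⟩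
        refine ⟨fun i => decide (i ∈ S), ?_⟩
        rw [_root_.tsum_subtype]
        apply tsum_congr
        intro n
        by_cases h : n ∈ S <;> simp [h, Set.indicator]
      · rintro ⟨ε, rfl⟩
        refine ⟨{i | ε i = true}, ?_⟩
        rw [_root_.tsum_subtype]
        apply tsum_congr
        intro n
        by_cases h : ε n <;> simp [h, Set.indicator]
    rw [hA]
    apply isCompact_range
    apply continuous_tsum (u := x)
    · intro i
      exact (continuous_of_discreteTopology (f := fun b : Bool => if b then x i else 0)).comp
        (continuous_apply i)
    · exact hsum
    · intro n ε
      by_cases h : ε n <;> simp [h, Real.norm_eq_abs, abs_of_pos (hpos n), (hpos n).le]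
  · -- Empty interior
    by_contra hne
    rw [← Ne, ← Set.nonempty_iff_ne_empty] at hne
    obtain ⟨m, hm⟩ := hne
    obtain ⟨ε, hε, hball⟩ := Metric.mem_nhds_iff.1 (mem_interior_iff_mem_nhds.1 hm)
    rw [Real.ball_eq_Ioo] at hball
    -- pick i with T (i+1) < x i and T i < ε
    have htail : Filter.Tendsto (fun n => T x n) Filter.atTop (nhds 0) := by
      have := tendsto_sum_nat_add x
      simpa [T, add_comm] using this
    obtain ⟨N, hN⟩ := (Metric.tendsto_atTop.1 htail) ε hε
    obtain ⟨i, hiset, hiN⟩ := hgt'.exists_gt N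
    have hTi : T x i < ε := by
      have := hN i (le_of_lt hiN)
      rwa [Real.dist_eq, sub_zero, abs_of_nonneg (T_nonneg hpos i)] at this
    have hxiTi : x i ≤ T x i := by
      rw [T_rec hsum i]
      linarith [T_nonneg hpos (i + 1)]
    -- m ∈ A, get its prefix sum
    have hmA : m ∈ A := hball ⟨by linarith, by linarith⟩
    obtain ⟨S, hS⟩ := hmA
    set σ : ℝ := ∑ j ∈ (Finset.range i).filter (· ∈ S), x j with hσ
    set r : ℝ := ∑' n : ℕ, (S ∩ Set.Ici i).indicator x n with hr
    have hmsr : m = σ + r := by rw [hS]; exact decomp S i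
    have hr0 : 0 ≤ r := tsum_nonneg fun n => Set.indicator_nonneg (fun j _ => (hpos j).le) n
    have hrT : r ≤ T x i := by
      rw [← tsum_ind_Ici hsum i]
      apply Summable.tsum_le_tsum _ (hsum.indicator _) (hsum.indicator _)
      intro n
      exact Set.indicator_le_indicator_of_subset (Set.inter_subset_right) (fun j => (hpos j).le) n
    -- the gap point
    set g : ℝ := σ + (T x (i + 1) + x i) / 2 with hg
    have hTi1 : T x (i + 1) < x i := hiset
    have hg1 : σ + T x (i + 1) < g := by rw [hg]; linarith
    have hg2 : g < σ + x i := by rw [hg]; linarith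
    have hgball : g ∈ Set.Ioo (m - ε) (m + ε) := by
      constructor
      · have h1 : m - T x i ≤ σ := by linarith [hmsr, hrT]
        have hT1nn := T_nonneg hpos (i + 1)
        linarith
      · have h1 : σ ≤ m := by linarith [hmsr, hr0]
        linarith
    have hgA : g ∈ A := hball hgball
    obtain ⟨Sg, hSg⟩ := hgA
    set σg : ℝ := ∑ j ∈ (Finset.range i).filter (· ∈ Sg), x j with hσg
    set rg : ℝ := ∑' n : ℕ, (Sg ∩ Set.Ici i).indicator x n with hrg
    have hgsr : g = σg + rg := by rw [hSg]; exact decomp Sg i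
    have hrg0 : 0 ≤ rg := tsum_nonneg fun n => Set.indicator_nonneg (fun j _ => (hpos j).le) n
    have hrgT : rg ≤ T x i := by
      rw [← tsum_ind_Ici hsum i]
      apply Summable.tsum_le_tsum _ (hsum.indicator _) (hsum.indicator _)
      intro n
      exact Set.indicator_le_indicator_of_subset (Set.inter_subset_right) (fun j => (hpos j).le) n
    have hFsub : (Finset.range i).filter (· ∈ S) ⊆ Finset.range i := Finset.filter_subset _ _
    have hGsub : (Finset.range i).filter (· ∈ Sg) ⊆ Finset.range i := Finset.filter_subset _ _
    have hT1nn : 0 ≤ T x (i + 1) := T_nonneg hpos (i + 1)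
    rcases lt_trichotomy σg σ with hlt | heq | hgt2
    · -- σg < σ : g ≤ σg + T i ≤ σ < g
      have h2 : σg + T x i ≤ σ := gap hsum hpos hge' hGsub hFsub hlt
      linarith
    · -- σg = σ : then rg ∈ (T (i+1), x i), impossible
      have hrg_lb : T x (i + 1) < rg := by rw [heq] at hgsr; linarith
      have hrg_ub : rg < x i := by rw [heq] at hgsr; linarith
      by_cases hiSg : i ∈ Sg
      · -- rg ≥ x i
        have hxile : x i ≤ rg := by
          rw [hrg]
          have h1 : (Sg ∩ Set.Ici i).indicator x i = x i :=
            Set.indicator_of_mem (Set.mem_inter hiSg (Set.mem_Ici.mpr (le_refl i))) x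
          calc x i = (Sg ∩ Set.Ici i).indicator x i := h1.symm
            _ ≤ ∑' n : ℕ, (Sg ∩ Set.Ici i).indicator x n :=
              Summable.le_tsum (hsum.indicator _) i
                (fun j _ => Set.indicator_nonneg (fun k _ => (hpos k).le) j)
        linarith
      · -- rg ≤ T (i+1)
        have hrgle : rg ≤ T x (i + 1) := by
          rw [hrg, ← tsum_ind_Ici hsum (i + 1)]
          apply Summable.tsum_le_tsum _ (hsum.indicator _) (hsum.indicator _)
          intro n
          by_cases hn : n ∈ Sg ∩ Set.Ici i
          · have hni : i + 1 ≤ n := by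
              rcases Nat.lt_or_ge n (i + 1) with h' | h'
              · exfalso
                have hni' : n = i := le_antisymm (Nat.lt_succ_iff.1 h') hn.2
                exact hiSg (hni' ▸ hn.1)
              · exact h'
            rw [Set.indicator_of_mem hn, Set.indicator_of_mem (Set.mem_Ici.2 hni)]
          · rw [Set.indicator_of_notMem hn]
            exact Set.indicator_nonneg (fun k _ => (hpos k).le) n
        linarith
    · -- σ < σg : σ + T i ≤ σg ≤ g < σ + x i ≤ σ + T i
      have h2 : σ + T x i ≤ σg := gap hsum hpos hge' hFsub hGsub hgt2
      linarith
end

section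
/- Let (n_i)_{i=1}^∞ be a strictly increasing sequence of positive integers such that ∑_{i=1}^∞ 1/n_i converges, and suppose that every rational number q with 0 ≤ q < ∑_{i=1}^∞ 1/n_i can be written as a finite sum ∑_{i∈S} 1/n_i over some finite set S ⊂ ℕ. Then 1/n_i ≤ ∑_{j>i} 1/n_j holds for every index i. -/
/-- Let `(n_i)` be a strictly increasing sequence of positive
integers with `∑_i 1 / n_i` convergent, such that every rational `q` with
`0 ≤ q < ∑_i 1 / n_i` is a finite sum `∑_{i ∈ S} 1 / n i`. Then
`1 / n i ≤ ∑_{j > i} 1 / n j` for every index `i`. -/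
theorem stmt11 (n : ℕ → ℕ) (hmono : StrictMono n) (hpos : ∀ i, 0 < n i)
    (hsum : Summable (fun i => (1 : ℝ) / (n i)))
    (hrep : ∀ q : ℚ, 0 ≤ q → (q : ℝ) < ∑' i, (1 : ℝ) / (n i) →
      ∃ S : Finset ℕ, q = ∑ i ∈ S, (1 : ℚ) / (n i)) :
    ∀ i, (1 : ℝ) / (n i) ≤ ∑' j : ℕ, (1 : ℝ) / (n (i + 1 + j)) := by
  intro i
  by_contra hlt
  push_neg at hlt
  set F : ℕ → ℝ := fun k => (1 : ℝ) / (n k) with hF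
  have hsumF : Summable F := hsum
  have hFpos : ∀ k, 0 < F k := by
    intro k
    have := hpos k
    have : (0 : ℝ) < n k := by exact_mod_cast this
    simp only [hF]
    positivity
  have hFnn : ∀ k, 0 ≤ F k := fun k => (hFpos k).le
  set T : ℝ := ∑' j : ℕ, F (i + 1 + j) with hT
  set A : ℝ := ∑ k ∈ Finset.range i, F k with hA
  have hAnn : 0 ≤ A := Finset.sum_nonneg fun k _ => hFnn k
  -- tail with index in the other order
  have htail : ∑' j : ℕ, F (j + (i + 1)) = T := tsum_congr fun j => by rw [add_comm]
  have hTnn : 0 ≤ T := by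
    rw [hT]
    exact tsum_nonneg fun j => hFnn _
  have htot : ∑' k, F k = (A + F i) + T := by
    have h1 := Summable.sum_add_tsum_nat_add (i + 1) hsumF
    rw [Finset.sum_range_succ, htail] at h1
    linarith
  -- pick a rational q in (A + T, A + F i)
  obtain ⟨q, hq1, hq2⟩ := exists_rat_btwn (show A + T < A + F i by linarith)
  have hq0 : (0 : ℚ) ≤ q := by
    have : (0 : ℝ) ≤ A + T := by linarith
    have : (0 : ℝ) < (q : ℝ) := lt_of_le_of_lt this hq1
    exact_mod_cast this.le
  have hqlt : (q : ℝ) < ∑' k, F k := by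
    rw [htot]; linarith
  obtain ⟨S, hS⟩ := hrep q hq0 hqlt
  have hSR : (q : ℝ) = ∑ k ∈ S, F k := by
    simp only [hF]
    rw [hS]
    push_cast
    rfl
  -- the auxiliary function supported on the tail
  set g : ℕ → ℝ := fun k => if i + 1 ≤ k then F k else 0 with hg
  have hgnn : ∀ k, 0 ≤ g k := by
    intro k
    simp only [hg]
    split
    · exact hFnn k
    · exact le_refl 0
  have hgle : ∀ k, g k ≤ F k := by
    intro k
    simp only [hg]
    split
    · exact le_refl (F k)
    · exact hFnn k
  have hgsum : Summable g := Summable.of_nonneg_of_le hgnn hgle hsumF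
  have hgT : ∑' k, g k = T := by
    have h1 := Summable.sum_add_tsum_nat_add (i + 1) hgsum
    have h2 : ∑ k ∈ Finset.range (i + 1), g k = 0 := by
      apply Finset.sum_eq_zero
      intro k hk
      have : k < i + 1 := Finset.mem_range.mp hk
      simp only [hg]
      rw [if_neg (by omega)]
    have h3 : ∑' j : ℕ, g (j + (i + 1)) = T := by
      rw [hT]
      apply tsum_congr
      intro j
      simp only [hg]
      rw [if_pos (by omega), add_comm]
    rw [h2, zero_add, h3] at h1
    exact h1.symm
  -- split the representing sum
  have hsplit : ∑ k ∈ S, F k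
      = ∑ k ∈ S.filter (fun k => k ≤ i), F k + ∑ k ∈ S.filter (fun k => ¬ k ≤ i), F k :=
    (Finset.sum_filter_add_sum_filter_not S _ F).symm
  have htailbound : ∑ k ∈ S.filter (fun k => ¬ k ≤ i), F k ≤ T := by
    rw [← hgT]
    have heq : ∑ k ∈ S.filter (fun k => ¬ k ≤ i), F k
        = ∑ k ∈ S.filter (fun k => ¬ k ≤ i), g k := by
      apply Finset.sum_congr rfl
      intro k hk
      have : ¬ k ≤ i := (Finset.mem_filter.mp hk).2
      simp only [hg]
      rw [if_pos (by omega)]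
    rw [heq]
    exact Summable.sum_le_tsum _ (fun k _ => hgnn k) hgsum
  by_cases hcase : Finset.range (i + 1) ⊆ S
  · -- then the sum is at least A + F i > q
    have h1 : A + F i = ∑ k ∈ Finset.range (i + 1), F k := by
      rw [Finset.sum_range_succ]
    have h2 : ∑ k ∈ Finset.range (i + 1), F k ≤ ∑ k ∈ S, F k :=
      Finset.sum_le_sum_of_subset_of_nonneg hcase fun k _ _ => hFnn k
    linarith [hSR ▸ hq2]
  · obtain ⟨j, hjr, hjS⟩ := Finset.not_subset.mp hcase
    have hji : j ≤ i := by
      have := Finset.mem_range.mp hjr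
      omega
    -- head part is at most A
    have hsub : S.filter (fun k => k ≤ i) ⊆ (Finset.range (i + 1)).erase j := by
      intro k hk
      obtain ⟨hkS, hki⟩ := Finset.mem_filter.mp hk
      refine Finset.mem_erase.mpr ⟨?_, Finset.mem_range.mpr (by omega)⟩
      rintro rfl
      exact hjS hkS
    have h1 : ∑ k ∈ S.filter (fun k => k ≤ i), F k
        ≤ ∑ k ∈ (Finset.range (i + 1)).erase j, F k :=
      Finset.sum_le_sum_of_subset_of_nonneg hsub fun k _ _ => hFnn k
    have h2 : ∑ k ∈ (Finset.range (i + 1)).erase j, F k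
        = (A + F i) - F j := by
      rw [Finset.sum_erase_eq_sub hjr, Finset.sum_range_succ]
    have h3 : F i ≤ F j := by
      have hn : (n j : ℝ) ≤ n i := by exact_mod_cast (hmono.monotone hji)
      have hj0 : (0 : ℝ) < n j := by exact_mod_cast hpos j
      simp only [hF]
      exact one_div_le_one_div_of_le hj0 hn
    have hhead : ∑ k ∈ S.filter (fun k => k ≤ i), F k ≤ A := by linarith
    have := hSR ▸ hq1
    linarith
end

section
/- Suppose x_1 > x_2 > ⋯ > x_m > 0 are real numbers satisfying x_i ≤ ∑_{j=i+1}^m x_j + x_m for every i = 1, 2, …, m−1. Then for every real number y with 0 ≤ y ≤ ∑_{i=1}^m x_i there exists a subset S ⊆ {1, 2, …, m} such that 0 ≤ y − ∑_{i∈S} x_i ≤ x_m; equivalently, the set of subset sums { ∑_{i∈S} x_i : S ⊆ {1,…,m} } divides the segment [0, ∑_{i=1}^m x_i] into sub-intervals of length at most x_m. -/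
theorem stmt12_aux (m : ℕ) (hm : 0 < m) (x : ℕ → ℝ)
    (hpos : ∀ i, i < m → 0 < x i)
    (hineq : ∀ i, i + 1 < m →
      x i ≤ (∑ j ∈ Finset.Ico (i + 1) m, x j) + x (m - 1)) :
    ∀ n i, m ≤ i + n → ∀ y : ℝ, 0 ≤ y → y ≤ ∑ j ∈ Finset.Ico i m, x j →
      ∃ S : Finset ℕ, S ⊆ Finset.Ico i m ∧
        0 ≤ y - ∑ j ∈ S, x j ∧ y - ∑ j ∈ S, x j ≤ x (m - 1) := by
  intro n
  induction n with
  | zero =>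
    intro i hi y hy0 hy1
    have he : Finset.Ico i m = ∅ := Finset.Ico_eq_empty (by omega)
    rw [he, Finset.sum_empty] at hy1
    have hp := hpos (m - 1) (by omega)
    exact ⟨∅, by simp, by simpa using hy0, by simp; linarith⟩
  | succ n ih =>
    intro i hi y hy0 hy1
    by_cases him : m ≤ i
    · exact ih i (by omega) y hy0 hy1
    push_neg at him
    have hsplit : ∑ j ∈ Finset.Ico i m, x j = x i + ∑ j ∈ Finset.Ico (i+1) m, x j :=
      Finset.sum_eq_sum_Ico_succ_bot him x
    by_cases h1 : y ≤ ∑ j ∈ Finset.Ico (i+1) m, x j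
    · obtain ⟨S, hS, h2, h3⟩ := ih (i+1) (by omega) y hy0 h1
      exact ⟨S, hS.trans (Finset.Ico_subset_Ico (by omega) le_rfl), h2, h3⟩
    push_neg at h1
    by_cases h2 : x i ≤ y
    · obtain ⟨S, hS, h3, h4⟩ := ih (i+1) (by omega) (y - x i) (by linarith)
        (by rw [hsplit] at hy1; linarith)
      have hiS : i ∉ S := by
        intro h
        have := hS h
        simp [Finset.mem_Ico] at this
      refine ⟨insert i S, ?_, ?_, ?_⟩
      · intro a ha
        rcases Finset.mem_insert.mp ha with rfl | ha
        · simp [Finset.mem_Ico]; omega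
        · exact Finset.Ico_subset_Ico (by omega) le_rfl (hS ha)
      · rw [Finset.sum_insert hiS]; linarith
      · rw [Finset.sum_insert hiS]; linarith
    push_neg at h2
    have hub : y ≤ (∑ j ∈ Finset.Ico (i+1) m, x j) + x (m-1) := by
      by_cases h3 : i + 1 < m
      · have := hineq i h3; linarith
      · have he : Finset.Ico (i+1) m = ∅ := Finset.Ico_eq_empty (by omega)
        rw [he, Finset.sum_empty]
        have hmi : m - 1 = i := by omega
        rw [hmi]
        linarith
    exact ⟨Finset.Ico (i+1) m, Finset.Ico_subset_Ico (by omega) le_rfl,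
      by linarith, by linarith⟩

/-- Suppose `x₁ > x₂ > ⋯ > x_m > 0` (indexed here from `0`,
so the terms are `x 0, …, x (m-1)`) satisfy
`x i ≤ ∑_{j = i+1}^{m} x j + x m` for `i = 1, …, m-1`. Then for every real `y`
with `0 ≤ y ≤ ∑_{i=1}^m x i` there is `S ⊆ {1, …, m}` with
`0 ≤ y - ∑_{i ∈ S} x i ≤ x m`: the subset sums fill the segment
`[0, ∑_{i=1}^m x i]` with gaps of length at most `x m`. -/
theorem stmt12 (m : ℕ) (hm : 0 < m) (x : ℕ → ℝ)
    (hdec : ∀ i j, i < j → j < m → x j < x i)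
    (hpos : ∀ i, i < m → 0 < x i)
    (hineq : ∀ i, i + 1 < m →
      x i ≤ (∑ j ∈ Finset.Ico (i + 1) m, x j) + x (m - 1)) :
    ∀ y : ℝ, 0 ≤ y → y ≤ ∑ i ∈ Finset.range m, x i →
      ∃ S : Finset ℕ, S ⊆ Finset.range m ∧
        0 ≤ y - ∑ i ∈ S, x i ∧ y - ∑ i ∈ S, x i ≤ x (m - 1) := by
  intro y hy0 hy1
  rw [Finset.range_eq_Ico] at hy1 ⊢
  exact stmt12_aux m hm x hpos hineq m 0 (by omega) y hy0 hy1
end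

section
/- Let n_1 < n_2 < n_3 < ⋯ be a strictly increasing sequence of positive integers such that (1) every positive integer divides n_i for some index i; and let m_1 < m_2 < m_3 < ⋯ be an infinite sequence of indices such that (2) for every k, the integer n_{m_k} is divisible by n_j for all j with 1 ≤ j < m_k, and (3) for every k and every index i with m_{k−1} ≤ i < m_k (the condition m_0 ≤ i being void for k = 1), one has 1/n_i ≤ ∑_{i<j≤m_k} 1/n_j + 1/n_{m_k}. Then a rational number q is a finite sum ∑_{i∈S} 1/n_i over some finite S ⊂ ℕ if and only if 0 ≤ q < ∑_{i=1}^∞ 1/n_i (the sum interpreted as +∞ if the series diverges). -/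
open scoped ENNReal

lemma keyA : ∀ (M : ℕ) (a : ℕ → ℕ), (∀ i ≤ M, a i ≤ 1 + ∑ j ∈ Finset.Ioc i M, a j) →
    ∀ t ≤ ∑ j ∈ Finset.range (M+1), a j,
    ∃ S : Finset ℕ, S ⊆ Finset.range (M+1) ∧ t = ∑ j ∈ S, a j := by
  intro M
  induction M with
  | zero =>
    intro a h t ht
    rw [Finset.sum_range_one] at ht
    have h0 := h 0 le_rfl
    simp at h0
    rcases Nat.eq_zero_or_pos t with rfl | htpos
    · exact ⟨∅, by simp⟩
    · have h1 : t = 1 := by omega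
      have : a 0 = 1 := by omega
      exact ⟨{0}, by simp [this, h1]⟩
  | succ M ih =>
    intro a h t ht
    have hshift : ∀ i, ∑ j ∈ Finset.Ioc i M, a (j+1) = ∑ j ∈ Finset.Ioc (i+1) (M+1), a j := by
      intro i
      rw [← Finset.map_add_right_Ioc, Finset.sum_map]; rfl
    have hrange : ∑ j ∈ Finset.range (M+1), a (j+1) = ∑ j ∈ Finset.Ioc 0 (M+1), a j := by
      have : Finset.Ioc 0 (M+1) = Finset.map (addRightEmbedding 1) (Finset.range (M+1)) := by
        rw [Finset.range_eq_Ico, Finset.map_add_right_Ico]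
        ext x; simp; omega
      rw [this, Finset.sum_map]; rfl
    have hsplit : ∑ j ∈ Finset.range (M+2), a j = a 0 + ∑ j ∈ Finset.Ioc 0 (M+1), a j := by
      rw [Finset.sum_range_succ']
      rw [← hrange]; ring
    have hcond' : ∀ i ≤ M, a (i+1) ≤ 1 + ∑ j ∈ Finset.Ioc i M, a (j+1) := by
      intro i hi
      rw [hshift]
      exact h (i+1) (by omega)
    rw [hsplit] at ht
    by_cases hc : a 0 ≤ t
    · have ht'' : t - a 0 ≤ ∑ j ∈ Finset.range (M+1), (fun j => a (j+1)) j := by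
        simp only [hrange]; omega
      obtain ⟨S, hS, hSsum⟩ := ih (fun j => a (j+1)) hcond' (t - a 0) ht''
      refine ⟨insert 0 (S.image (· + 1)), ?_, ?_⟩
      · intro x hx
        simp only [Finset.mem_insert, Finset.mem_image] at hx
        rcases hx with rfl | ⟨y, hy, rfl⟩
        · simp
        · have := hS hy; simp at this ⊢; omega
      · rw [Finset.sum_insert (by simp), Finset.sum_image (by intro x _ y _ h; simpa using h)]
        omega
    · have h0 := h 0 (by omega)
      have ht' : t ≤ ∑ j ∈ Finset.range (M+1), (fun j => a (j+1)) j := by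
        simp only [hrange]
        omega
      obtain ⟨S, hS, hSsum⟩ := ih (fun j => a (j+1)) hcond' t ht'
      refine ⟨S.image (· + 1), ?_, ?_⟩
      · intro x hx
        simp only [Finset.mem_image] at hx
        obtain ⟨y, hy, rfl⟩ := hx
        have := hS hy; simp at this ⊢; omega
      · rw [Finset.sum_image (by intro x _ y _ h; simpa using h)]
        exact hSsum


/-- Let `n₁ < n₂ < ⋯` be positive integers such that every
positive integer divides some `n i`, and let `m₁ < m₂ < ⋯` (indexed here from
`0`) be indices such that `n (m k)` is divisible by all earlier terms, and
`1 / n i ≤ ∑_{i < j ≤ m k} 1 / n j + 1 / n (m k)` whenever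
`m (k-1) ≤ i < m k` (void lower condition for the first block). Then a
rational `q` is a finite sum `∑_{i ∈ S} 1 / n i` iff `0 ≤ q < ∑_i 1 / n_i`
(the series summed in `ℝ≥0∞`, so possibly `+∞`). -/
theorem stmt13 (n : ℕ → ℕ) (hmono : StrictMono n) (hpos : ∀ i, 0 < n i)
    (m : ℕ → ℕ) (hmmono : StrictMono m)
    (h1 : ∀ d : ℕ, 0 < d → ∃ i, d ∣ n i)
    (h2 : ∀ k, ∀ j < m k, n j ∣ n (m k))
    (h3a : ∀ i < m 0,
      (1 : ℚ) / (n i) ≤ (∑ j ∈ Finset.Ioc i (m 0), (1 : ℚ) / (n j)) + 1 / (n (m 0)))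
    (h3b : ∀ k i, m k ≤ i → i < m (k + 1) →
      (1 : ℚ) / (n i) ≤
        (∑ j ∈ Finset.Ioc i (m (k + 1)), (1 : ℚ) / (n j)) + 1 / (n (m (k + 1)))) :
    ∀ q : ℚ, (∃ S : Finset ℕ, q = ∑ i ∈ S, (1 : ℚ) / (n i)) ↔
      (0 ≤ q ∧ ENNReal.ofReal (q : ℝ) < ∑' i, ((n i : ℝ≥0∞))⁻¹) := by
  have hbridge : ∀ S : Finset ℕ,
      ENNReal.ofReal ((∑ i ∈ S, (1:ℚ)/(n i) : ℚ) : ℝ) = ∑ i ∈ S, ((n i : ℝ≥0∞))⁻¹ := by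
    intro S
    push_cast
    rw [ENNReal.ofReal_sum_of_nonneg (fun i _ => by positivity)]
    refine Finset.sum_congr rfl fun i _ => ?_
    rw [one_div, ENNReal.ofReal_inv_of_pos (by exact_mod_cast hpos i), ENNReal.ofReal_natCast]
  have keyB : ∀ k, ∀ i < m k,
      (1:ℚ)/(n i) ≤ (∑ j ∈ Finset.Ioc i (m k), (1:ℚ)/(n j)) + 1/(n (m k)) := by
    intro k
    induction k with
    | zero => exact h3a
    | succ k ih =>
      intro i hi
      rcases lt_or_ge i (m k) with h | h
      · have H1 := ih i h
        have H2 := h3b k (m k) le_rfl (hmmono (lt_add_one k))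
        calc (1:ℚ)/(n i) ≤ (∑ j ∈ Finset.Ioc i (m k), (1:ℚ)/(n j)) + 1/(n (m k)) := H1
          _ ≤ (∑ j ∈ Finset.Ioc i (m k), (1:ℚ)/(n j)) +
              ((∑ j ∈ Finset.Ioc (m k) (m (k+1)), (1:ℚ)/(n j)) + 1/(n (m (k+1)))) :=
            add_le_add (le_refl _) H2
          _ = (∑ j ∈ Finset.Ioc i (m (k+1)), (1:ℚ)/(n j)) + 1/(n (m (k+1))) := by
            rw [← Finset.sum_Ioc_consecutive _ h.le (hmmono (lt_add_one k)).le]; ring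
      · exact h3b k i h hi
  intro q
  constructor
  · rintro ⟨S, rfl⟩
    have hq0 : (0:ℚ) ≤ ∑ i ∈ S, (1:ℚ)/(n i) :=
      Finset.sum_nonneg fun i _ => by positivity
    refine ⟨hq0, ?_⟩
    rw [hbridge]
    obtain ⟨j, hj⟩ := S.exists_notMem
    have hfin : ∑ i ∈ S, ((n i : ℝ≥0∞))⁻¹ ≠ ⊤ := by
      refine (ENNReal.sum_lt_top.mpr fun i _ => ?_).ne
      simp [ENNReal.inv_lt_top, Nat.cast_pos, hpos i]
    have hlt : ∑ i ∈ S, ((n i : ℝ≥0∞))⁻¹ < ∑ i ∈ insert j S, ((n i : ℝ≥0∞))⁻¹ := by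
      rw [Finset.sum_insert hj, add_comm]
      refine ENNReal.lt_add_right hfin ?_
      simp [ENNReal.inv_ne_zero]
    exact hlt.trans_le (ENNReal.sum_le_tsum _)
  · rintro ⟨hq0, hqlt⟩
    rw [ENNReal.tsum_eq_iSup_sum] at hqlt
    obtain ⟨s, hs⟩ := lt_iSup_iff.mp hqlt
    rw [← hbridge s] at hs
    have hsq : q < ∑ i ∈ s, (1:ℚ)/(n i) := by
      have := (ENNReal.ofReal_lt_ofReal_iff_of_nonneg (by exact_mod_cast hq0)).mp hs
      exact_mod_cast this
    obtain ⟨i₀, hi₀⟩ := h1 q.den q.den_pos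
    set k := max (i₀ + 1) ((s.sup id) + 1) with hk
    have hkmk : k ≤ m k := hmmono.le_apply
    set M := m k with hM
    set N := n M with hN
    have hNpos : 0 < N := hpos M
    have hdvd : ∀ j ≤ M, n j ∣ N := by
      intro j hj
      rcases eq_or_lt_of_le hj with rfl | hj
      · exact dvd_rfl
      · exact h2 k j hj
    have hbN : q.den ∣ N := hi₀.trans (h2 k i₀ (by omega))
    have hssub : s ⊆ Finset.range (M + 1) := by
      intro i hi
      have : i ≤ s.sup id := Finset.le_sup (f := id) hi
      simp only [Finset.mem_range]
      omega
    have hq_le : q ≤ ∑ j ∈ Finset.range (M+1), (1:ℚ)/(n j) := by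
      exact hsq.le.trans (Finset.sum_le_sum_of_subset_of_nonneg hssub
        fun j _ _ => by positivity)
    set a := fun j => N / n j with ha
    have hacast : ∀ j ≤ M, (a j : ℚ) = (N:ℚ)/(n j) := by
      intro j hj
      exact_mod_cast Nat.cast_div (hdvd j hj) (by exact_mod_cast (hpos j).ne')
    have hcond : ∀ i ≤ M, a i ≤ 1 + ∑ j ∈ Finset.Ioc i M, a j := by
      intro i hi
      rcases eq_or_lt_of_le hi with rfl | hi
      · have haM : a M = 1 := by
          show N / n M = 1
          rw [← hN]
          exact Nat.div_self hNpos
        omega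
      · have HB := keyB k i hi
        have hQ : (a i : ℚ) ≤ 1 + ∑ j ∈ Finset.Ioc i M, (a j : ℚ) := by
          rw [hacast i hi.le]
          have hmul : (N:ℚ)/(n i) ≤ (∑ j ∈ Finset.Ioc i M, (N:ℚ)/(n j)) + 1 := by
            have := mul_le_mul_of_nonneg_left HB (by positivity : (0:ℚ) ≤ (N:ℚ))
            calc (N:ℚ)/(n i) = (N:ℚ) * ((1:ℚ)/(n i)) := by ring
              _ ≤ (N:ℚ) * ((∑ j ∈ Finset.Ioc i M, (1:ℚ)/(n j)) + 1/(n M)) := this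
              _ = (∑ j ∈ Finset.Ioc i M, (N:ℚ)/(n j)) + (N:ℚ)/(n M) := by
                rw [mul_add, Finset.mul_sum]
                simp only [mul_one_div]
              _ = (∑ j ∈ Finset.Ioc i M, (N:ℚ)/(n j)) + 1 := by
                rw [div_self (by exact_mod_cast hNpos.ne' : (N:ℚ) ≠ 0)]
          calc (N:ℚ)/(n i) ≤ (∑ j ∈ Finset.Ioc i M, (N:ℚ)/(n j)) + 1 := hmul
            _ = 1 + ∑ j ∈ Finset.Ioc i M, (a j : ℚ) := by
              rw [add_comm]
              congr 1
              refine Finset.sum_congr rfl fun j hj => ?_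
              rw [hacast j (Finset.mem_Ioc.mp hj).2]
        have hQ' : ((a i : ℕ):ℚ) ≤ ((1 + ∑ j ∈ Finset.Ioc i M, a j : ℕ) : ℚ) := by
          push_cast
          exact hQ
        exact_mod_cast hQ'
    set t := q.num.toNat * (N / q.den) with htdef
    have htq : (t : ℚ) = q * N := by
      have hden : (q.den:ℚ) ≠ 0 := by exact_mod_cast q.den_pos.ne'
      have h2' : ((N / q.den : ℕ) : ℚ) = (N:ℚ)/(q.den:ℚ) := Nat.cast_div hbN hden
      have h1' : ((q.num.toNat : ℚ)) = (q.num : ℚ) := by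
        exact_mod_cast Int.toNat_of_nonneg (Rat.num_nonneg.mpr hq0)
      have hq' : q = (q.num:ℚ)/(q.den:ℚ) := by exact_mod_cast (Rat.num_div_den q).symm
      calc (t:ℚ) = (q.num.toNat : ℚ) * ((N / q.den : ℕ) : ℚ) := Nat.cast_mul _ _
        _ = (q.num:ℚ)/(q.den:ℚ) * N := by rw [h2', h1']; ring
        _ = q * N := by rw [← hq']
    have hsum_cast : ((∑ j ∈ Finset.range (M+1), a j : ℕ) : ℚ)
        = (N:ℚ) * ∑ j ∈ Finset.range (M+1), (1:ℚ)/(n j) := by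
      push_cast
      rw [Finset.mul_sum]
      refine Finset.sum_congr rfl fun j hj => ?_
      rw [hacast j (by simpa [Nat.lt_succ_iff] using hj)]
      ring
    have ht_le : t ≤ ∑ j ∈ Finset.range (M+1), a j := by
      have : (t:ℚ) ≤ ((∑ j ∈ Finset.range (M+1), a j : ℕ) : ℚ) := by
        rw [htq, hsum_cast]
        calc q * (N:ℚ) ≤ (∑ j ∈ Finset.range (M+1), (1:ℚ)/(n j)) * N := by
              exact mul_le_mul_of_nonneg_right hq_le (by positivity)
          _ = (N:ℚ) * ∑ j ∈ Finset.range (M+1), (1:ℚ)/(n j) := by ring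
      exact_mod_cast this
    obtain ⟨S, hSsub, hSsum⟩ := keyA M a hcond t ht_le
    refine ⟨S, ?_⟩
    have hScast : (t : ℚ) = (N:ℚ) * ∑ i ∈ S, (1:ℚ)/(n i) := by
      rw [hSsum]
      push_cast
      rw [Finset.mul_sum]
      refine Finset.sum_congr rfl fun j hj => ?_
      rw [hacast j (by have := hSsub hj; simpa [Nat.lt_succ_iff] using this)]
      ring
    have hNne : (N:ℚ) ≠ 0 := by exact_mod_cast hNpos.ne'
    have hfin : q * (N:ℚ) = (∑ i ∈ S, (1:ℚ)/(n i)) * N := by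
      rw [← htq, hScast]; ring
    exact mul_right_cancel₀ hNne hfin
end
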